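/- arXiv:2512.13150 — 8 statements merged into one kernel-verified Lean document; each statement's English description precedes it below -/
import Mathlib

section
/- Let (X_n) be i.i.d. nonnegative random variables with distribution function F such that P[X_1 = 0] = 0, inf of the support is 0, and F(t) = O(t^α) as t → 0+ for some α > 0. Then for every x > 0, lim_{n→∞} P[S_{n+1} ≤ x]/P[S_n ≤ x] = 0, where S_n = X_1 + ... + X_n. -/
open MeasureTheory ProbabilityTheory Filter Set
open scoped ENNReal Topology

namespace Stmt3Aux

variable {Ω : Type*}

/-- The supremum of the σ-algebras generated by the coordinates other than `t`. -/
def coSigma [MeasurableSpace Ω] (X : ℕ → Ω → ℝ) (t : ℕ) : MeasurableSpace Ω :=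
  ⨆ i ∈ ({t}ᶜ : Set ℕ), MeasurableSpace.comap (X i) inferInstance

lemma measurable_coSigma [MeasurableSpace Ω] (X : ℕ → Ω → ℝ) (t : ℕ) {i : ℕ} (hi : i ≠ t) :
    @Measurable Ω ℝ (coSigma X t) _ (X i) := by
  intro s hs
  have hle : MeasurableSpace.comap (X i) inferInstance ≤ coSigma X t := by
    apply le_biSup (fun j => MeasurableSpace.comap (X j) inferInstance)
    simpa using hi
  exact hle _ ⟨s, hs, rfl⟩

lemma indep_co [MeasurableSpace Ω] {P : Measure Ω} [IsProbabilityMeasure P] {X : ℕ → Ω → ℝ}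
    (hmeas : ∀ i, Measurable (X i))
    (hindep : iIndepFun X P) (t : ℕ)
    {E : Set Ω} (hE : MeasurableSet[coSigma X t] E)
    {S : Set ℝ} (hS : MeasurableSet S) :
    P (E ∩ X t ⁻¹' S) = P E * P (X t ⁻¹' S) := by
  have h := ProbabilityTheory.indep_iSup_of_disjoint
      (m := fun i => MeasurableSpace.comap (X i) inferInstance)
      (fun i => (hmeas i).comap_le) hindep.iIndep
      (S := ({t}ᶜ : Set ℕ)) (T := ({t} : Set ℕ)) disjoint_compl_left
  refine (Indep_iff _ _ _).mp h E (X t ⁻¹' S) hE ?_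
  have hle : MeasurableSpace.comap (X t) inferInstance
      ≤ ⨆ i ∈ ({t} : Set ℕ), MeasurableSpace.comap (X i) inferInstance :=
    le_biSup (fun j => MeasurableSpace.comap (X j) inferInstance) rfl
  exact hle _ ⟨S, hS, rfl⟩

lemma meas_helper {m : MeasurableSpace Ω} {X : ℕ → Ω → ℝ} (a b : ℝ) {T s w : Finset ℕ}
    (hT : ∀ i ∈ T, @Measurable Ω ℝ m _ (X i)) (hs : ∀ i ∈ s, @Measurable Ω ℝ m _ (X i))
    (hw : ∀ i ∈ w, @Measurable Ω ℝ m _ (X i)) (c : ℝ) :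
    MeasurableSet[m] {ω | (∀ i ∈ T, X i ω ∈ Set.Ioc a b) ∧ (∀ i ∈ s, X i ω ∉ Set.Ioc a b)
      ∧ ∑ i ∈ w, X i ω ≤ c} := by
  have hset : {ω | (∀ i ∈ T, X i ω ∈ Set.Ioc a b) ∧ (∀ i ∈ s, X i ω ∉ Set.Ioc a b)
      ∧ ∑ i ∈ w, X i ω ≤ c}
      = (⋂ i ∈ T, X i ⁻¹' Set.Ioc a b) ∩ ((⋂ i ∈ s, (X i ⁻¹' Set.Ioc a b)ᶜ)
        ∩ {ω | ∑ i ∈ w, X i ω ≤ c}) := by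
    ext ω
    simp only [Set.mem_setOf_eq, Set.mem_inter_iff, Set.mem_iInter, Set.mem_preimage,
      Set.mem_compl_iff]
  rw [hset]
  refine MeasurableSet.inter ?_ (MeasurableSet.inter ?_ ?_)
  · exact Finset.measurableSet_biInter _ fun i hi => (hT i hi) measurableSet_Ioc
  · exact Finset.measurableSet_biInter _ fun i hi => ((hs i hi) measurableSet_Ioc).compl
  · exact measurableSet_le (Finset.measurable_sum _ hw) measurable_const

/-- The event: exactly the coordinates in `T` (among `range n`) lie in `(a,b]`, and the sum is
at most `c`. -/
def ev (X : ℕ → Ω → ℝ) (a b : ℝ) (n : ℕ) (T : Finset ℕ) (c : ℝ) : Set Ω :=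
  {ω | (∀ i ∈ T, X i ω ∈ Set.Ioc a b) ∧ (∀ i ∈ Finset.range n \ T, X i ω ∉ Set.Ioc a b)
    ∧ ∑ i ∈ Finset.range n, X i ω ≤ c}

lemma ev_meas [MeasurableSpace Ω] {X : ℕ → Ω → ℝ} (hmeas : ∀ i, Measurable (X i))
    (a b : ℝ) (n : ℕ) (T : Finset ℕ) (c : ℝ) : MeasurableSet (ev X a b n T c) :=
  meas_helper a b (fun i _ => hmeas i) (fun i _ => hmeas i) (fun i _ => hmeas i) c

lemma ev_decomp (X : ℕ → Ω → ℝ) (a b : ℝ) (n : ℕ) (c : ℝ) :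
    {ω : Ω | ∑ i ∈ Finset.range n, X i ω ≤ c}
      = ⋃ T ∈ (Finset.range n).powerset, ev X a b n T c := by
  classical
  ext ω
  simp only [Set.mem_setOf_eq, Set.mem_iUnion, ev, Finset.mem_powerset, exists_prop]
  constructor
  · intro h
    refine ⟨(Finset.range n).filter (fun i => X i ω ∈ Set.Ioc a b), Finset.filter_subset _ _,
      ?_, ?_, h⟩
    · intro i hi; exact (Finset.mem_filter.mp hi).2
    · intro i hi
      rcases Finset.mem_sdiff.mp hi with ⟨hiR, hnot⟩
      intro hmem
      exact hnot (Finset.mem_filter.mpr ⟨hiR, hmem⟩)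
  · rintro ⟨T, _, _, _, h3⟩
    exact h3

lemma ev_disj (X : ℕ → Ω → ℝ) (a b : ℝ) (n : ℕ) (c : ℝ) :
    Set.PairwiseDisjoint ↑((Finset.range n).powerset) (fun T => ev X a b n T c) := by
  intro T hT T' hT' hne
  refine Set.disjoint_left.mpr fun ω hω hω' => ?_
  apply hne
  have hTs : T ⊆ Finset.range n := Finset.mem_powerset.mp (by exact_mod_cast hT)
  have hTs' : T' ⊆ Finset.range n := Finset.mem_powerset.mp (by exact_mod_cast hT')
  ext i
  constructor
  · intro hi
    by_contra hnot
    exact hω'.2.1 i (Finset.mem_sdiff.mpr ⟨hTs hi, hnot⟩) (hω.1 i hi)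
  · intro hi
    by_contra hnot
    exact hω.2.1 i (Finset.mem_sdiff.mpr ⟨hTs' hi, hnot⟩) (hω'.1 i hi)

section Main

variable [MeasurableSpace Ω] {P : Measure Ω} [IsProbabilityMeasure P] {X : ℕ → Ω → ℝ}

lemma q_pos (hmeas : ∀ i, Measurable (X i))
    (hindep : iIndepFun X P)
    (hident : ∀ i, IdentDistrib (X i) (X 0) P P)
    (hacc : ∀ t : ℝ, 0 < t → P {ω | X 0 ω ≤ t} ≠ 0)
    (n : ℕ) {x : ℝ} (hx : 0 < x) :
    P {ω | ∑ i ∈ Finset.range n, X i ω ≤ x} ≠ 0 := by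
  rcases Nat.eq_zero_or_pos n with rfl | hn
  · have huniv : {ω : Ω | ∑ i ∈ Finset.range 0, X i ω ≤ x} = Set.univ := by
      ext ω
      simp only [Finset.range_zero, Finset.sum_empty, Set.mem_setOf_eq, Set.mem_univ, iff_true]
      exact le_of_lt hx
    rw [huniv, measure_univ]
    exact one_ne_zero
  · set c := x / n with hc
    have hnR : (0:ℝ) < n := by exact_mod_cast hn
    have hcpos : 0 < c := div_pos hx hnR
    have hsub : (⋂ i ∈ Finset.range n, X i ⁻¹' Set.Iic c)
        ⊆ {ω | ∑ i ∈ Finset.range n, X i ω ≤ x} := by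
      intro ω hω
      simp only [Set.mem_iInter, Set.mem_preimage, Set.mem_Iic] at hω
      have h1 : ∑ i ∈ Finset.range n, X i ω ≤ ∑ _i ∈ Finset.range n, c :=
        Finset.sum_le_sum fun i hi => hω i hi
      have h2 : (∑ _i ∈ Finset.range n, c) = x := by
        rw [Finset.sum_const, Finset.card_range, nsmul_eq_mul, hc,
          mul_div_cancel₀ _ (ne_of_gt hnR)]
      exact Set.mem_setOf_eq ▸ (h2 ▸ h1)
    have hint := hindep.meas_biInter (S := Finset.range n)
      (s := fun i => X i ⁻¹' Set.Iic c) (fun i _ => ⟨Set.Iic c, measurableSet_Iic, rfl⟩)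
    have hfac : ∀ i : ℕ, P (X i ⁻¹' Set.Iic c) = P {ω | X 0 ω ≤ c} := fun i =>
      (hident i).measure_mem_eq measurableSet_Iic
    have hne : P (⋂ i ∈ Finset.range n, X i ⁻¹' Set.Iic c) ≠ 0 := by
      rw [hint, Finset.prod_congr rfl fun i _ => hfac i, Finset.prod_const]
      exact pow_ne_zero _ (hacc c hcpos)
    intro h0
    exact hne (measure_mono_null hsub h0)

set_option maxHeartbeats 1000000 in
lemma key_ratio (hmeas : ∀ i, Measurable (X i))
    (hindep : iIndepFun X P)
    (hident : ∀ i, IdentDistrib (X i) (X 0) P P)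
    (hnonneg : ∀ i ω, 0 ≤ X i ω)
    (hzero : P {ω | X 0 ω = 0} = 0)
    (hacc : ∀ t : ℝ, 0 < t → P {ω | X 0 ω ≤ t} ≠ 0)
    {x ε : ℝ} (hε : 0 < ε) (hεx : ε < x) {θ : ℝ≥0∞} (hθ : θ ≠ 0) :
    ∀ᶠ n in atTop, P {ω | ∑ i ∈ Finset.range n, X i ω ≤ x - ε}
      ≤ θ * P {ω | ∑ i ∈ Finset.range n, X i ω ≤ x} := by
  classical
  rcases eq_or_ne θ ⊤ with rfl | hθtop
  · filter_upwards with n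
    have hx : (0:ℝ) < x := lt_trans hε hεx
    rw [ENNReal.top_mul (q_pos hmeas hindep hident hacc n hx)]
    exact le_top
  set y : ℝ := x - ε with hy
  have hy0 : 0 < y := by simp only [hy]; linarith
  -- Step A : find a small interval (a, b] with positive mass and good geometry
  set κ : ℝ := ε / (2 * y) with hκdef
  have hκ : 0 < κ := div_pos hε (by linarith)
  have h1κ : (0:ℝ) < 1 + κ := by linarith
  have hrlt : (1 + κ)⁻¹ < 1 := by
    rw [inv_eq_one_div, div_lt_one h1κ]
    linarith
  have hr0 : (0:ℝ) < (1 + κ)⁻¹ := by positivity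
  set g : ℕ → ℝ := fun m => (ε / 2) * ((1 + κ)⁻¹) ^ m with hg
  have hgpos : ∀ m, 0 < g m := fun m => by positivity
  have hcover : Set.Ioc 0 (ε / 2) ⊆ ⋃ m : ℕ, Set.Ioc (g (m + 1)) (g m) := by
    intro u hu
    obtain ⟨hu0, huε⟩ := hu
    have hex : ∃ m : ℕ, g (m + 1) < u := by
      have htend : Tendsto (fun m : ℕ => g (m + 1)) atTop (𝓝 0) := by
        have := tendsto_pow_atTop_nhds_zero_of_lt_one (le_of_lt hr0) hrlt
        have h2 := this.const_mul (ε / 2)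
        rw [mul_zero] at h2
        exact (h2.comp (tendsto_add_atTop_nat 1))
      rcases (htend.eventually_lt_const hu0).exists with ⟨m, hm⟩
      exact ⟨m, hm⟩
    classical
    set m₀ := Nat.find hex with hm₀
    have hlt : g (m₀ + 1) < u := Nat.find_spec hex
    have hle : u ≤ g m₀ := by
      rcases Nat.eq_zero_or_pos m₀ with h0 | hpos
      · rw [h0]
        simpa [hg] using huε
      · have := Nat.find_min hex (m := m₀ - 1) (by omega)
        push_neg at this
        have heq : m₀ - 1 + 1 = m₀ := by omega
        rwa [heq] at this
    exact Set.mem_iUnion.mpr ⟨m₀, hlt, hle⟩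
  have hpos0 : P (X 0 ⁻¹' Set.Ioc 0 (ε / 2)) ≠ 0 := by
    intro hnull
    have hsub : {ω | X 0 ω ≤ ε / 2} ⊆ (X 0 ⁻¹' Set.Ioc 0 (ε / 2)) ∪ {ω | X 0 ω = 0} := by
      intro ω hω
      rcases lt_or_eq_of_le (hnonneg 0 ω) with hpos | heq
      · exact Or.inl ⟨hpos, hω⟩
      · exact Or.inr heq.symm
    have : P {ω | X 0 ω ≤ ε / 2} = 0 := by
      refine measure_mono_null hsub ?_
      exact le_antisymm (le_trans (measure_union_le _ _) (by rw [hnull, hzero]; simp))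
        zero_le
    exact hacc (ε / 2) (by linarith) this
  have hexm : ∃ m : ℕ, P (X 0 ⁻¹' Set.Ioc (g (m + 1)) (g m)) ≠ 0 := by
    by_contra hall
    push_neg at hall
    apply hpos0
    refine measure_mono_null ?_ (measure_iUnion_null hall)
    rw [← Set.preimage_iUnion]
    exact Set.preimage_mono hcover
  obtain ⟨m, hm⟩ := hexm
  set a : ℝ := g (m + 1) with ha_def
  set b : ℝ := g m with hb_def
  set p : ℝ≥0∞ := P (X 0 ⁻¹' Set.Ioc a b) with hp_def
  have hp0 : p ≠ 0 := hm
  have ha : 0 < a := hgpos (m + 1)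
  have hb_eq : b = a * (1 + κ) := by
    simp only [ha_def, hb_def, hg, pow_succ]
    field_simp
  have hab : a < b := by
    rw [hb_eq]
    nlinarith
  have hbε : b ≤ ε / 2 := by
    have : ((1 + κ)⁻¹) ^ m ≤ 1 := pow_le_one₀ (le_of_lt hr0) (le_of_lt hrlt)
    calc b = (ε / 2) * ((1 + κ)⁻¹) ^ m := rfl
    _ ≤ (ε / 2) * 1 := by nlinarith
    _ = ε / 2 := mul_one _
  have hκy : κ * y = ε / 2 := by
    rw [hκdef]; field_simp
  clear_value p a b g κ y
  have hlevel : ∀ j : ℕ, (j : ℝ) * a ≤ y → y - j * a ≤ x - ((j : ℝ) + 1) * b := by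
    intro j hj
    have hba : b - a = κ * a := by rw [hb_eq]; ring
    have hjba : (j : ℝ) * (b - a) ≤ κ * y := by
      have h1 : κ * ((j : ℝ) * a) ≤ κ * y := mul_le_mul_of_nonneg_left hj (le_of_lt hκ)
      calc (j : ℝ) * (b - a) = κ * ((j : ℝ) * a) := by rw [hba]; ring
      _ ≤ κ * y := h1
    have hx_eq : x = y + ε := by simp [hy]
    have hexp : ((j : ℝ) + 1) * b - (j : ℝ) * a = (j : ℝ) * (b - a) + b := by ring
    linarith
  -- Step B
  set M : ℕ := ⌈y / a⌉₊ with hM_def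
  have hMy : y ≤ (M : ℝ) * a := by
    have h1 := Nat.le_ceil (y / a)
    have h2 : y / a * a ≤ (M : ℝ) * a := mul_le_mul_of_nonneg_right h1 (le_of_lt ha)
    rwa [div_mul_cancel₀ _ (ne_of_gt ha)] at h2
  -- Step C : the main estimate for n ≥ M + 1
  have hmain : ∀ n : ℕ, M + 1 ≤ n →
      ((n - M : ℕ) : ℝ≥0∞) * p * P {ω | ∑ i ∈ Finset.range n, X i ω ≤ y}
        ≤ ((M + 1 : ℕ) : ℝ≥0∞) * P {ω | ∑ i ∈ Finset.range n, X i ω ≤ x} := by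
    intro n hn
    set R := Finset.range n with hR
    set 𝒯 := R.powerset.filter (fun T => T.card ≤ M) with h𝒯
    -- (d) empty events
    have hempty : ∀ T : Finset ℕ, T ⊆ R → M < T.card → ev X a b n T y = ∅ := by
      intro T hTsub hcard
      rw [Set.eq_empty_iff_forall_notMem]
      rintro ω ⟨h1, _, h3⟩
      have hsum1 : (T.card : ℝ) * a ≤ ∑ i ∈ T, X i ω := by
        have := Finset.card_nsmul_le_sum T (fun i => X i ω) a (fun i hi => le_of_lt (h1 i hi).1)
        rwa [nsmul_eq_mul] at this
      have hsum2 : ∑ i ∈ T, X i ω ≤ ∑ i ∈ R, X i ω :=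
        Finset.sum_le_sum_of_subset_of_nonneg hTsub (fun i _ _ => hnonneg i ω)
      have hcR : (M : ℝ) + 1 ≤ (T.card : ℝ) := by exact_mod_cast hcard
      have h4 : ((M : ℝ) + 1) * a ≤ (T.card : ℝ) * a :=
        mul_le_mul_of_nonneg_right hcR (le_of_lt ha)
      have h5 : ((M : ℝ) + 1) * a = (M : ℝ) * a + a := by ring
      linarith
    -- (b) core estimate
    have hcore : ∀ T : Finset ℕ, T ⊆ R → ∀ t ∈ R \ T,
        p * P (ev X a b n T y) ≤ P (ev X a b n (insert t T) x) := by
      intro T hTsub t ht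
      obtain ⟨htR, htT⟩ := Finset.mem_sdiff.mp ht
      set s : Finset ℕ := R \ insert t T with hs_def
      set v : ℝ := x - ((T.card : ℝ) + 1) * b with hv_def
      set D : Set Ω := {ω | (∀ i ∈ T, X i ω ∈ Set.Ioc a b) ∧ (∀ i ∈ s, X i ω ∉ Set.Ioc a b)
        ∧ ∑ i ∈ s, X i ω ≤ v} with hD_def
      have hinsert_sub : insert t T ⊆ R := Finset.insert_subset htR hTsub
      have hsplit : ∀ ω, ∑ i ∈ R, X i ω = (∑ i ∈ s, X i ω) + (X t ω + ∑ i ∈ T, X i ω) := by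
        intro ω
        have h1 : ∑ i ∈ insert t T, X i ω = X t ω + ∑ i ∈ T, X i ω := Finset.sum_insert htT
        have h2 : (∑ i ∈ s, X i ω) + ∑ i ∈ insert t T, X i ω = ∑ i ∈ R, X i ω :=
          Finset.sum_sdiff hinsert_sub
        linarith
      have hsub1 : ev X a b n T y ⊆ D := by
        rintro ω ⟨h1, h2, h3⟩
        have hTa : (T.card : ℝ) * a ≤ ∑ i ∈ T, X i ω := by
          have := Finset.card_nsmul_le_sum T (fun i => X i ω) a
            (fun i hi => le_of_lt (h1 i hi).1)
          rwa [nsmul_eq_mul] at this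
        have hsumT_le : ∑ i ∈ T, X i ω ≤ ∑ i ∈ R, X i ω :=
          Finset.sum_le_sum_of_subset_of_nonneg hTsub (fun i _ _ => hnonneg i ω)
        have hja : (T.card : ℝ) * a ≤ y := le_trans hTa (le_trans hsumT_le h3)
        have hlev := hlevel T.card hja
        refine ⟨h1, fun i hi => h2 i ?_, ?_⟩
        · rcases Finset.mem_sdiff.mp hi with ⟨hiR, hiU⟩
          exact Finset.mem_sdiff.mpr ⟨hiR, fun hmem => hiU (Finset.mem_insert_of_mem hmem)⟩
        · have hXt : 0 ≤ X t ω := hnonneg t ω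
          have hspl := hsplit ω
          simp only [hv_def]
          linarith
      have hsub2 : D ∩ X t ⁻¹' Set.Ioc a b ⊆ ev X a b n (insert t T) x := by
        rintro ω ⟨⟨h1, h2, h3⟩, h4⟩
        simp only [Set.mem_preimage] at h4
        refine ⟨?_, ?_, ?_⟩
        · intro i hi
          rcases Finset.mem_insert.mp hi with rfl | hiT
          · exact h4
          · exact h1 i hiT
        · intro i hi
          exact h2 i (by rwa [hs_def])
        · have hsumT : ∑ i ∈ T, X i ω ≤ (T.card : ℝ) * b := by
            have := Finset.sum_le_card_nsmul T (fun i => X i ω) b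
              (fun i hi => (h1 i hi).2)
            rwa [nsmul_eq_mul] at this
          have hspl := hsplit ω
          have hXtb : X t ω ≤ b := h4.2
          simp only [hv_def] at h3
          have hexp : ((T.card : ℝ) + 1) * b = (T.card : ℝ) * b + b := by ring
          linarith
      have hDmeas : MeasurableSet[coSigma X t] D := by
        refine meas_helper a b ?_ ?_ ?_ v
        · intro i hi
          exact measurable_coSigma X t (fun h => htT (h ▸ hi))
        · intro i hi
          rcases Finset.mem_sdiff.mp hi with ⟨_, hiU⟩
          exact measurable_coSigma X t (fun h => hiU (h ▸ Finset.mem_insert_self t T))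
        · intro i hi
          rcases Finset.mem_sdiff.mp hi with ⟨_, hiU⟩
          exact measurable_coSigma X t (fun h => hiU (h ▸ Finset.mem_insert_self t T))
      have hindep_app : P (D ∩ X t ⁻¹' Set.Ioc a b) = P D * P (X t ⁻¹' Set.Ioc a b) :=
        indep_co hmeas hindep t hDmeas measurableSet_Ioc
      have hpt : P (X t ⁻¹' Set.Ioc a b) = p := by
        rw [hp_def]; exact (hident t).measure_mem_eq measurableSet_Ioc
      calc p * P (ev X a b n T y) ≤ p * P D :=
            mul_le_mul_right (measure_mono hsub1) p
      _ = P D * P (X t ⁻¹' Set.Ioc a b) := by rw [hpt, mul_comm]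
      _ = P (D ∩ X t ⁻¹' Set.Ioc a b) := hindep_app.symm
      _ ≤ P (ev X a b n (insert t T) x) := measure_mono hsub2
    -- decompose the left side
    have hdecy : P {ω : Ω | ∑ i ∈ Finset.range n, X i ω ≤ y}
        = ∑ T ∈ R.powerset, P (ev X a b n T y) := by
      rw [ev_decomp X a b n y]
      exact measure_biUnion_finset (ev_disj X a b n y)
        (fun T _ => ev_meas hmeas a b n T y)
    have hdecy' : ∑ T ∈ R.powerset, P (ev X a b n T y) = ∑ T ∈ 𝒯, P (ev X a b n T y) := by
      refine (Finset.sum_subset (Finset.filter_subset _ _) ?_).symm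
      intro T hT hnT
      have hTsub : T ⊆ R := Finset.mem_powerset.mp hT
      have hcard : M < T.card := by
        by_contra hle
        exact hnT (Finset.mem_filter.mpr ⟨hT, not_lt.mp hle⟩)
      rw [hempty T hTsub hcard, measure_empty]
    -- per-T with counting
    have hTbound : ∀ T ∈ 𝒯, ((n - M : ℕ) : ℝ≥0∞) * p * P (ev X a b n T y)
        ≤ ∑ t ∈ R \ T, P (ev X a b n (insert t T) x) := by
      intro T hT
      obtain ⟨hTpow, hTcard⟩ := Finset.mem_filter.mp hT
      have hTsub : T ⊆ R := Finset.mem_powerset.mp hTpow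
      have hsum_ge : ∑ t ∈ R \ T, P (ev X a b n (insert t T) x)
          ≥ ∑ _t ∈ R \ T, p * P (ev X a b n T y) :=
        Finset.sum_le_sum (fun t ht => hcore T hTsub t ht)
      have hconst : ∑ _t ∈ R \ T, p * P (ev X a b n T y)
          = ((R \ T).card : ℝ≥0∞) * (p * P (ev X a b n T y)) := by
        rw [Finset.sum_const, nsmul_eq_mul]
      have hcard_ge : (n - M : ℕ) ≤ (R \ T).card := by
        rw [Finset.card_sdiff_of_subset hTsub, hR, Finset.card_range]
        omega
      calc ((n - M : ℕ) : ℝ≥0∞) * p * P (ev X a b n T y)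
          = ((n - M : ℕ) : ℝ≥0∞) * (p * P (ev X a b n T y)) := by rw [mul_assoc]
      _ ≤ ((R \ T).card : ℝ≥0∞) * (p * P (ev X a b n T y)) :=
          mul_le_mul_left (by exact_mod_cast Nat.cast_le.mpr hcard_ge) _
      _ = ∑ _t ∈ R \ T, p * P (ev X a b n T y) := hconst.symm
      _ ≤ ∑ t ∈ R \ T, P (ev X a b n (insert t T) x) := hsum_ge
    -- the double sum bound
    set 𝒰 := R.powerset.filter (fun U => U.card ≤ M + 1) with h𝒰
    have hdouble : ∑ T ∈ 𝒯, ∑ t ∈ R \ T, P (ev X a b n (insert t T) x)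
        ≤ ((M + 1 : ℕ) : ℝ≥0∞) * P {ω : Ω | ∑ i ∈ Finset.range n, X i ω ≤ x} := by
      rw [Finset.sum_sigma' 𝒯 (fun T => R \ T)
        (fun T t => P (ev X a b n (insert t T) x))]
      have hinj : ∀ q ∈ 𝒯.sigma (fun T => R \ T), ∀ q' ∈ 𝒯.sigma (fun T => R \ T),
          (fun q : Σ _ : Finset ℕ, ℕ => (⟨insert q.2 q.1, q.2⟩ : Σ _ : Finset ℕ, ℕ)) q
            = (fun q : Σ _ : Finset ℕ, ℕ => (⟨insert q.2 q.1, q.2⟩ : Σ _ : Finset ℕ, ℕ)) q'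
          → q = q' := by
        rintro ⟨T, t⟩ hq ⟨T', t'⟩ hq' heq
        have htT : t ∉ T := (Finset.mem_sdiff.mp (Finset.mem_sigma.mp hq).2).2
        have htT' : t' ∉ T' := (Finset.mem_sdiff.mp (Finset.mem_sigma.mp hq').2).2
        have h2 : t = t' := congrArg (fun z => z.2) heq
        have h1 : insert t T = insert t' T' := congrArg (fun z => z.1) heq
        subst h2
        have hTT : T = T' := by
          rw [← Finset.erase_insert htT, h1, Finset.erase_insert htT']
        subst hTT
        rfl
      have himage : ∑ q ∈ 𝒯.sigma (fun T => R \ T), P (ev X a b n (insert q.2 q.1) x)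
          = ∑ u ∈ (𝒯.sigma (fun T => R \ T)).image
              (fun q : Σ _ : Finset ℕ, ℕ => (⟨insert q.2 q.1, q.2⟩ : Σ _ : Finset ℕ, ℕ)),
            P (ev X a b n u.1 x) :=
        (Finset.sum_image (f := fun u : Σ _ : Finset ℕ, ℕ => P (ev X a b n u.1 x)) hinj).symm
      have hsubset : (𝒯.sigma (fun T => R \ T)).image
          (fun q : Σ _ : Finset ℕ, ℕ => (⟨insert q.2 q.1, q.2⟩ : Σ _ : Finset ℕ, ℕ))
          ⊆ 𝒰.sigma (fun U => U) := by
        intro u hu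
        obtain ⟨q, hq, rfl⟩ := Finset.mem_image.mp hu
        obtain ⟨hqT, hqt⟩ := Finset.mem_sigma.mp hq
        obtain ⟨hTpow, hTcard⟩ := Finset.mem_filter.mp hqT
        obtain ⟨htR, htT⟩ := Finset.mem_sdiff.mp hqt
        refine Finset.mem_sigma.mpr ⟨?_, ?_⟩
        · refine Finset.mem_filter.mpr ⟨?_, ?_⟩
          · exact Finset.mem_powerset.mpr
              (Finset.insert_subset htR (Finset.mem_powerset.mp hTpow))
          · rw [Finset.card_insert_of_notMem htT]
            omega
        · exact Finset.mem_insert_self _ _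
      calc ∑ q ∈ 𝒯.sigma (fun T => R \ T), P (ev X a b n (insert q.2 q.1) x)
          = ∑ u ∈ (𝒯.sigma (fun T => R \ T)).image
              (fun q : Σ _ : Finset ℕ, ℕ => (⟨insert q.2 q.1, q.2⟩ : Σ _ : Finset ℕ, ℕ)),
            P (ev X a b n u.1 x) := himage
      _ ≤ ∑ u ∈ 𝒰.sigma (fun U => U), P (ev X a b n u.1 x) :=
          Finset.sum_le_sum_of_subset hsubset
      _ = ∑ U ∈ 𝒰, ∑ _t ∈ U, P (ev X a b n U x) := Finset.sum_sigma _ _ _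
      _ = ∑ U ∈ 𝒰, (U.card : ℝ≥0∞) * P (ev X a b n U x) := by
          refine Finset.sum_congr rfl fun U _ => ?_
          rw [Finset.sum_const, nsmul_eq_mul]
      _ ≤ ∑ U ∈ 𝒰, ((M + 1 : ℕ) : ℝ≥0∞) * P (ev X a b n U x) := by
          refine Finset.sum_le_sum fun U hU => mul_le_mul_left ?_ _
          exact Nat.cast_le.mpr (Finset.mem_filter.mp hU).2
      _ = ((M + 1 : ℕ) : ℝ≥0∞) * ∑ U ∈ 𝒰, P (ev X a b n U x) := by
          rw [Finset.mul_sum]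
      _ ≤ ((M + 1 : ℕ) : ℝ≥0∞) * P {ω : Ω | ∑ i ∈ Finset.range n, X i ω ≤ x} := by
          refine mul_le_mul_right ?_ _
          have hsum_le : ∑ U ∈ 𝒰, P (ev X a b n U x)
              ≤ ∑ U ∈ R.powerset, P (ev X a b n U x) :=
            Finset.sum_le_sum_of_subset (Finset.filter_subset _ _)
          have hdecx : P {ω : Ω | ∑ i ∈ Finset.range n, X i ω ≤ x}
              = ∑ U ∈ R.powerset, P (ev X a b n U x) := by
            rw [ev_decomp X a b n x]
            exact measure_biUnion_finset (ev_disj X a b n x)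
              (fun U _ => ev_meas hmeas a b n U x)
          rw [hdecx]
          exact hsum_le
    calc ((n - M : ℕ) : ℝ≥0∞) * p * P {ω | ∑ i ∈ Finset.range n, X i ω ≤ y}
        = ∑ T ∈ 𝒯, ((n - M : ℕ) : ℝ≥0∞) * p * P (ev X a b n T y) := by
          rw [← Finset.mul_sum, ← hdecy', ← hdecy]
    _ ≤ ∑ T ∈ 𝒯, ∑ t ∈ R \ T, P (ev X a b n (insert t T) x) :=
        Finset.sum_le_sum hTbound
    _ ≤ ((M + 1 : ℕ) : ℝ≥0∞) * P {ω | ∑ i ∈ Finset.range n, X i ω ≤ x} := hdouble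
  -- conclusion
  have hptop : p ≠ ⊤ := by rw [hp_def]; exact measure_ne_top P _
  have hpθ : p * θ ≠ 0 := mul_ne_zero hp0 hθ
  have hpθtop : p * θ ≠ ⊤ := ENNReal.mul_ne_top hptop hθtop
  set d : ℝ≥0∞ := ((M + 1 : ℕ) : ℝ≥0∞) / (p * θ) with hd_def
  have hdtop : d ≠ ⊤ := by
    simp only [hd_def]
    exact (ENNReal.div_lt_top (by simp) hpθ).ne
  obtain ⟨k, hk⟩ := ENNReal.exists_nat_gt hdtop
  rw [eventually_atTop]
  refine ⟨M + k + 1, fun n hn => ?_⟩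
  have hnM : M + 1 ≤ n := by omega
  have hmain_n := hmain n hnM
  have hkle : (k : ℝ≥0∞) ≤ ((n - M : ℕ) : ℝ≥0∞) := by
    have hkn : k ≤ n - M := by omega
    exact Nat.cast_le.mpr hkn
  have hM1_le : ((M + 1 : ℕ) : ℝ≥0∞) ≤ ((n - M : ℕ) : ℝ≥0∞) * (p * θ) := by
    have h1 : ((M + 1 : ℕ) : ℝ≥0∞) = d * (p * θ) := by
      rw [hd_def, ENNReal.div_mul_cancel hpθ hpθtop]
    rw [h1]
    exact mul_le_mul_left (le_trans (le_of_lt hk) hkle) _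
  have hfinal : (((n - M : ℕ) : ℝ≥0∞) * p) * P {ω | ∑ i ∈ Finset.range n, X i ω ≤ y}
      ≤ (((n - M : ℕ) : ℝ≥0∞) * p) * (θ * P {ω | ∑ i ∈ Finset.range n, X i ω ≤ x}) := by
    calc (((n - M : ℕ) : ℝ≥0∞) * p) * P {ω | ∑ i ∈ Finset.range n, X i ω ≤ y}
        ≤ ((M + 1 : ℕ) : ℝ≥0∞) * P {ω | ∑ i ∈ Finset.range n, X i ω ≤ x} := hmain_n
    _ ≤ ((n - M : ℕ) : ℝ≥0∞) * (p * θ) * P {ω | ∑ i ∈ Finset.range n, X i ω ≤ x} :=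
        mul_le_mul_left hM1_le _
    _ = (((n - M : ℕ) : ℝ≥0∞) * p) * (θ * P {ω | ∑ i ∈ Finset.range n, X i ω ≤ x}) := by
        ring
  have hc0 : (((n - M : ℕ) : ℝ≥0∞) * p) ≠ 0 :=
    mul_ne_zero (Nat.cast_ne_zero.mpr (by omega)) hp0
  have hctop : (((n - M : ℕ) : ℝ≥0∞) * p) ≠ ⊤ :=
    ENNReal.mul_ne_top (ENNReal.natCast_ne_top _) hptop
  exact (ENNReal.mul_le_mul_iff_right hc0 hctop).mp hfinal

set_option maxHeartbeats 400000 in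
lemma step_bound (hmeas : ∀ i, Measurable (X i))
    (hindep : iIndepFun X P)
    (hident : ∀ i, IdentDistrib (X i) (X 0) P P)
    (hnonneg : ∀ i ω, 0 ≤ X i ω)
    (n : ℕ) (x ε : ℝ) :
    P {ω | ∑ i ∈ Finset.range (n + 1), X i ω ≤ x}
      ≤ P {ω | X 0 ω ≤ ε} * P {ω | ∑ i ∈ Finset.range n, X i ω ≤ x}
        + P {ω | ∑ i ∈ Finset.range n, X i ω ≤ x - ε} := by
  have hsub : {ω : Ω | ∑ i ∈ Finset.range (n + 1), X i ω ≤ x}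
      ⊆ ({ω : Ω | ∑ i ∈ Finset.range n, X i ω ≤ x} ∩ X n ⁻¹' Set.Iic ε)
        ∪ {ω : Ω | ∑ i ∈ Finset.range n, X i ω ≤ x - ε} := by
    intro ω hω
    simp only [Set.mem_setOf_eq, Finset.sum_range_succ] at hω
    by_cases hXn : X n ω ≤ ε
    · left
      have h0 : 0 ≤ X n ω := hnonneg n ω
      exact ⟨by simp only [Set.mem_setOf_eq]; linarith, by simpa using hXn⟩
    · right
      push_neg at hXn
      simp only [Set.mem_setOf_eq]
      linarith
  have hEmeas : MeasurableSet[coSigma X n]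
      {ω : Ω | ∑ i ∈ Finset.range n, X i ω ≤ x} := by
    have hform : {ω : Ω | ∑ i ∈ Finset.range n, X i ω ≤ x}
        = {ω : Ω | (∀ i ∈ (∅ : Finset ℕ), X i ω ∈ Set.Ioc 0 1)
            ∧ (∀ i ∈ (∅ : Finset ℕ), X i ω ∉ Set.Ioc 0 1)
            ∧ ∑ i ∈ Finset.range n, X i ω ≤ x} := by
      ext ω; simp
    rw [hform]
    refine meas_helper 0 1 (by simp) (by simp) ?_ x
    intro i hi
    have : i ≠ n := fun h => by
      rw [h] at hi
      exact absurd (Finset.mem_range.mp hi) (lt_irrefl n)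
    exact measurable_coSigma X n this
  have hind := indep_co hmeas hindep n hEmeas (measurableSet_Iic (a := ε))
  have hXn : P (X n ⁻¹' Set.Iic ε) = P {ω | X 0 ω ≤ ε} :=
    (hident n).measure_mem_eq measurableSet_Iic
  calc P {ω | ∑ i ∈ Finset.range (n + 1), X i ω ≤ x}
      ≤ P (({ω : Ω | ∑ i ∈ Finset.range n, X i ω ≤ x} ∩ X n ⁻¹' Set.Iic ε)
        ∪ {ω : Ω | ∑ i ∈ Finset.range n, X i ω ≤ x - ε}) := measure_mono hsub
  _ ≤ P ({ω : Ω | ∑ i ∈ Finset.range n, X i ω ≤ x} ∩ X n ⁻¹' Set.Iic ε)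
        + P {ω : Ω | ∑ i ∈ Finset.range n, X i ω ≤ x - ε} := measure_union_le _ _
  _ = P {ω : Ω | ∑ i ∈ Finset.range n, X i ω ≤ x} * P (X n ⁻¹' Set.Iic ε)
        + P {ω : Ω | ∑ i ∈ Finset.range n, X i ω ≤ x - ε} := by rw [hind]
  _ = P {ω | X 0 ω ≤ ε} * P {ω | ∑ i ∈ Finset.range n, X i ω ≤ x}
        + P {ω : Ω | ∑ i ∈ Finset.range n, X i ω ≤ x - ε} := by rw [hXn, mul_comm]

lemma small_F (hmeas : ∀ i, Measurable (X i))
    (hnonneg : ∀ i ω, 0 ≤ X i ω)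
    (hzero : P {ω | X 0 ω = 0} = 0)
    {c : ℝ} (hc : 0 < c) {θ : ℝ≥0∞} (hθ : θ ≠ 0) :
    ∃ ε : ℝ, 0 < ε ∧ ε < c ∧ P {ω | X 0 ω ≤ ε} < θ := by
  set s : ℕ → Set Ω := fun k => {ω | X 0 ω ≤ min (c / 2) (1 / ((k : ℝ) + 1))} with hs
  have hmeas_s : ∀ k, NullMeasurableSet (s k) P := fun k =>
    (measurableSet_le (hmeas 0) measurable_const).nullMeasurableSet
  have hanti : Antitone s := by
    intro k l hkl ω hω
    simp only [hs, Set.mem_setOf_eq] at hω ⊢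
    have h1 : (1 : ℝ) / ((l : ℝ) + 1) ≤ 1 / ((k : ℝ) + 1) := by
      apply one_div_le_one_div_of_le
      · positivity
      · have : (k : ℝ) ≤ l := by exact_mod_cast hkl
        linarith
    exact le_trans hω (min_le_min le_rfl h1)
  have hInter : ⋂ k, s k = {ω | X 0 ω = 0} := by
    ext ω
    simp only [Set.mem_iInter, hs, Set.mem_setOf_eq]
    constructor
    · intro h
      refine le_antisymm ?_ (hnonneg 0 ω)
      by_contra hpos
      push_neg at hpos
      obtain ⟨k, hk⟩ := exists_nat_one_div_lt hpos
      have := h k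
      have h2 : min (c / 2) (1 / ((k : ℝ) + 1)) ≤ 1 / ((k : ℝ) + 1) := min_le_right _ _
      linarith
    · intro h k
      rw [h]
      have h1 : (0:ℝ) < c / 2 := by linarith
      have h2 : (0:ℝ) < 1 / ((k : ℝ) + 1) := by positivity
      exact le_min (le_of_lt h1) (le_of_lt h2)
  have htend : Tendsto (P ∘ s) atTop (𝓝 (P (⋂ k, s k))) :=
    tendsto_measure_iInter_atTop hmeas_s hanti ⟨0, measure_ne_top P _⟩
  rw [hInter, hzero] at htend
  have hlt : ∀ᶠ k in atTop, (P ∘ s) k < θ :=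
    htend.eventually_lt_const (pos_iff_ne_zero.mpr hθ)
  obtain ⟨k, hk⟩ := hlt.exists
  refine ⟨min (c / 2) (1 / ((k : ℝ) + 1)), ?_, ?_, hk⟩
  · have h1 : (0:ℝ) < c / 2 := by linarith
    have h2 : (0:ℝ) < 1 / ((k : ℝ) + 1) := by positivity
    exact lt_min h1 h2
  · exact lt_of_le_of_lt (min_le_left _ _) (by linarith)

lemma main_ennreal (hmeas : ∀ i, Measurable (X i))
    (hindep : iIndepFun X P)
    (hident : ∀ i, IdentDistrib (X i) (X 0) P P)
    (hnonneg : ∀ i ω, 0 ≤ X i ω)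
    (hzero : P {ω | X 0 ω = 0} = 0)
    (hacc : ∀ t : ℝ, 0 < t → P {ω | X 0 ω ≤ t} ≠ 0)
    {x : ℝ} (hx : 0 < x) {θ : ℝ≥0∞} (hθ : θ ≠ 0) :
    ∀ᶠ n in atTop, P {ω | ∑ i ∈ Finset.range (n + 1), X i ω ≤ x}
      ≤ θ * P {ω | ∑ i ∈ Finset.range n, X i ω ≤ x} := by
  rcases eq_or_ne θ ⊤ with rfl | hθtop
  · filter_upwards with n
    rw [ENNReal.top_mul (q_pos hmeas hindep hident hacc n hx)]
    exact le_top
  · have hθ2 : θ / 2 ≠ 0 := by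
      simp only [ne_eq, ENNReal.div_eq_zero_iff, not_or]
      exact ⟨hθ, by simp⟩
    obtain ⟨ε, hε0, hεx, hFε⟩ := small_F hmeas hnonneg hzero hx hθ2
    have hkey := key_ratio hmeas hindep hident hnonneg hzero hacc hε0 hεx hθ2
    filter_upwards [hkey] with n hn
    calc P {ω | ∑ i ∈ Finset.range (n + 1), X i ω ≤ x}
        ≤ P {ω | X 0 ω ≤ ε} * P {ω | ∑ i ∈ Finset.range n, X i ω ≤ x}
          + P {ω | ∑ i ∈ Finset.range n, X i ω ≤ x - ε} :=
          step_bound hmeas hindep hident hnonneg n x ε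
    _ ≤ (θ / 2) * P {ω | ∑ i ∈ Finset.range n, X i ω ≤ x}
          + (θ / 2) * P {ω | ∑ i ∈ Finset.range n, X i ω ≤ x} :=
          add_le_add (mul_le_mul_left (le_of_lt hFε) _) hn
    _ = θ * P {ω | ∑ i ∈ Finset.range n, X i ω ≤ x} := by
          rw [← add_mul, ENNReal.add_halves]

end Main

end Stmt3Aux

theorem stmt3
    {Ω : Type*} [MeasurableSpace Ω] (P : Measure Ω) [IsProbabilityMeasure P]
    (X : ℕ → Ω → ℝ)
    (hmeas : ∀ i, Measurable (X i))
    (hindep : iIndepFun X P)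
    (hident : ∀ i, IdentDistrib (X i) (X 0) P P)
    (hnonneg : ∀ i ω, 0 ≤ X i ω)
    (hzero : P {ω | X 0 ω = 0} = 0)
    (hacc : ∀ t : ℝ, 0 < t → P {ω | X 0 ω ≤ t} ≠ 0)
    (α C : ℝ) (hα : 0 < α)
    (hO : ∃ δ > 0, ∀ t : ℝ, 0 < t → t ≤ δ →
      (P {ω | X 0 ω ≤ t}).toReal ≤ C * t ^ α) :
    ∀ x : ℝ, 0 < x →
      Tendsto
        (fun n : ℕ =>
          (P {ω | ∑ i ∈ Finset.range (n + 1), X i ω ≤ x}).toReal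
            / (P {ω | ∑ i ∈ Finset.range n, X i ω ≤ x}).toReal)
        atTop (nhds 0) := by
  intro x hx
  have hQpos : ∀ n : ℕ, 0 < (P {ω | ∑ i ∈ Finset.range n, X i ω ≤ x}).toReal := fun n =>
    ENNReal.toReal_pos (Stmt3Aux.q_pos hmeas hindep hident hacc n hx) (measure_ne_top P _)
  rw [Metric.tendsto_atTop]
  intro θ hθ
  have hθ2 : (ENNReal.ofReal (θ / 2)) ≠ 0 := by
    simp only [ne_eq, ENNReal.ofReal_eq_zero, not_le]
    linarith
  obtain ⟨N, hN⟩ := Filter.eventually_atTop.mp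
    (Stmt3Aux.main_ennreal hmeas hindep hident hnonneg hzero hacc hx hθ2)
  refine ⟨N, fun n hn => ?_⟩
  have h := hN n hn
  have hfin : ENNReal.ofReal (θ / 2) * P {ω | ∑ i ∈ Finset.range n, X i ω ≤ x} ≠ ⊤ :=
    ENNReal.mul_ne_top ENNReal.ofReal_ne_top (measure_ne_top P _)
  have h' := ENNReal.toReal_mono hfin h
  rw [ENNReal.toReal_mul, ENNReal.toReal_ofReal (by linarith : (0:ℝ) ≤ θ / 2)] at h'
  have hratio : (P {ω | ∑ i ∈ Finset.range (n + 1), X i ω ≤ x}).toReal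
      / (P {ω | ∑ i ∈ Finset.range n, X i ω ≤ x}).toReal ≤ θ / 2 := by
    rw [div_le_iff₀ (hQpos n)]
    linarith [h']
  have hnonneg' : 0 ≤ (P {ω | ∑ i ∈ Finset.range (n + 1), X i ω ≤ x}).toReal
      / (P {ω | ∑ i ∈ Finset.range n, X i ω ≤ x}).toReal :=
    div_nonneg ENNReal.toReal_nonneg ENNReal.toReal_nonneg
  rw [Real.dist_eq, sub_zero, abs_of_nonneg hnonneg']
  linarith
end

section
/- Let (X_n) be i.i.d. nonnegative random variables with P[X_1 = 0] = 0, distribution function F satisfying F(t) = O(t^α) near 0 for some α > 0, and let x > x_min ≥ 0 where x_min is a fixed positive number in (0,x). Set k_α = ⌈1/α⌉. Then for n > k_α, with q = ⌊n/k_α⌋: P[S_n ≤ x − x_min] ≤ q · P[S_{n−k_α} ≤ x − x_min] · P[X_1 ≤ (x − x_min)/q]^{k_α}. -/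
open MeasureTheory ProbabilityTheory Filter Set
open scoped ENNReal Topology

lemma aux_pair_add {Ω : Type*} [MeasurableSpace Ω] {P : Measure Ω} [IsProbabilityMeasure P]
    {f g f' g' : Ω → ℝ} (hf : Measurable f) (hg : Measurable g)
    (hf' : Measurable f') (hg' : Measurable g')
    (hfg : IndepFun f g P) (hfg' : IndepFun f' g' P)
    (h1 : IdentDistrib f f' P P) (h2 : IdentDistrib g g' P P) :
    IdentDistrib (fun ω => f ω + g ω) (fun ω => f' ω + g' ω) P P := by
  have h : IdentDistrib (fun ω => (f ω, g ω)) (fun ω => (f' ω, g' ω)) P P := by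
    refine ⟨(hf.prodMk hg).aemeasurable, (hf'.prodMk hg').aemeasurable, ?_⟩
    rw [(indepFun_iff_map_prod_eq_prod_map_map hf.aemeasurable hg.aemeasurable).1 hfg,
        (indepFun_iff_map_prod_eq_prod_map_map hf'.aemeasurable hg'.aemeasurable).1 hfg',
        h1.map_eq, h2.map_eq]
  exact h.comp measurable_add

lemma aux_sum_ident {Ω : Type*} [MeasurableSpace Ω] {P : Measure Ω} [IsProbabilityMeasure P]
    {X : ℕ → Ω → ℝ} (hmeas : ∀ i, Measurable (X i))
    (hindep : iIndepFun X P)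
    (hident : ∀ i, IdentDistrib (X i) (X 0) P P) (s : Finset ℕ) :
    IdentDistrib (fun ω => ∑ i ∈ s, X i ω)
      (fun ω => ∑ i ∈ Finset.range s.card, X i ω) P P := by
  classical
  induction s using Finset.induction with
  | empty => simp; exact IdentDistrib.refl aemeasurable_const
  | @insert a s ha ih =>
    rw [Finset.card_insert_of_notMem ha]
    have h1 : (fun ω => ∑ i ∈ insert a s, X i ω)
        = fun ω => X a ω + ∑ i ∈ s, X i ω := funext fun ω => Finset.sum_insert ha
    have h2 : (fun ω => ∑ i ∈ Finset.range (s.card + 1), X i ω)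
        = fun ω => X s.card ω + ∑ i ∈ Finset.range s.card, X i ω := by
      funext ω; rw [Finset.sum_range_succ]; ring
    rw [h1, h2]
    have hsm : Measurable (fun ω => ∑ i ∈ s, X i ω) :=
      Finset.measurable_sum s fun i _ => hmeas i
    have hsm' : Measurable (fun ω => ∑ i ∈ Finset.range s.card, X i ω) :=
      Finset.measurable_sum _ fun i _ => hmeas i
    have i1 : IndepFun (X a) (fun ω => ∑ i ∈ s, X i ω) P := by
      have h := (hindep.indepFun_finsetSum_of_notMem hmeas ha).symm
      have he : (∑ j ∈ s, X j) = fun ω => ∑ i ∈ s, X i ω :=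
        funext fun ω => Finset.sum_apply ω s X
      rwa [he] at h
    have i2 : IndepFun (X s.card) (fun ω => ∑ i ∈ Finset.range s.card, X i ω) P := by
      have h := (hindep.indepFun_finsetSum_of_notMem hmeas
        (Finset.notMem_range_self (n := s.card))).symm
      have he : (∑ j ∈ Finset.range s.card, X j)
          = fun ω => ∑ i ∈ Finset.range s.card, X i ω :=
        funext fun ω => Finset.sum_apply ω _ X
      rwa [he] at h
    exact aux_pair_add (hmeas a) hsm (hmeas s.card) hsm' i1 i2
      ((hident a).trans (hident s.card).symm) ih

theorem stmt5
    {Ω : Type*} [MeasurableSpace Ω] (P : Measure Ω) [IsProbabilityMeasure P]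
    (X : ℕ → Ω → ℝ)
    (hmeas : ∀ i, Measurable (X i))
    (hindep : iIndepFun X P)
    (hident : ∀ i, IdentDistrib (X i) (X 0) P P)
    (hnonneg : ∀ i ω, 0 ≤ X i ω)
    (hzero : P {ω | X 0 ω = 0} = 0)
    (α C : ℝ) (hα : 0 < α)
    (hO : ∃ δ > 0, ∀ t : ℝ, 0 < t → t ≤ δ →
      (P {ω | X 0 ω ≤ t}).toReal ≤ C * t ^ α)
    (x xmin : ℝ) (hxmin : 0 < xmin) (hxx : xmin < x) :
    ∀ n : ℕ, Nat.ceil (1 / α) < n →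
      P {ω | ∑ i ∈ Finset.range n, X i ω ≤ x - xmin} ≤
        ((n / Nat.ceil (1 / α) : ℕ) : ℝ≥0∞)
          * P {ω | ∑ i ∈ Finset.range (n - Nat.ceil (1 / α)), X i ω ≤ x - xmin}
          * P {ω | X 0 ω ≤ (x - xmin) / ((n / Nat.ceil (1 / α) : ℕ) : ℝ)}
              ^ (Nat.ceil (1 / α)) := by
  classical
  intro n hn
  set k := Nat.ceil (1 / α) with hkdef
  set q := n / k with hqdef
  set y := x - xmin with hydef
  set t := y / (q : ℝ) with htdef
  have hk0 : 0 < k := Nat.ceil_pos.2 (by positivity)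
  have hq0 : 0 < q := Nat.div_pos hn.le hk0
  have hy0 : 0 < y := sub_pos.2 hxx
  -- blocks
  set B : ℕ → Finset ℕ := fun j => Finset.Ico (j * k) (j * k + k) with hBdef
  set T : ℕ → Finset ℕ := fun j => Finset.range n \ B j with hTdef
  have hBsub : ∀ j, j < q → B j ⊆ Finset.range n := by
    intro j hj i hi
    rw [Finset.mem_Ico] at hi
    rw [Finset.mem_range]
    calc i < j * k + k := hi.2
      _ = (j + 1) * k := (Nat.succ_mul j k).symm
      _ ≤ q * k := Nat.mul_le_mul_right k hj
      _ ≤ n := Nat.div_mul_le_self n k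
  have hBcard : ∀ j, (B j).card = k := by
    intro j; simp [hBdef]
  have hTcard : ∀ j, j < q → (T j).card = n - k := by
    intro j hj
    rw [hTdef]
    simp only
    rw [Finset.card_sdiff_of_subset (hBsub j hj), hBcard, Finset.card_range]
  have hpd : Set.PairwiseDisjoint ↑(Finset.range q) B := by
    intro a _ b _ hab
    have key : ∀ a b : ℕ, a < b → Disjoint (B a) (B b) := by
      intro a b h
      refine Finset.disjoint_left.2 fun {i} hia hib => ?_
      rw [Finset.mem_Ico] at hia hib
      have h2 : a * k + k ≤ b * k := by
        calc a * k + k = (a + 1) * k := (Nat.succ_mul a k).symm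
          _ ≤ b * k := Nat.mul_le_mul_right k h
      exact absurd (lt_of_lt_of_le hia.2 (le_trans h2 hib.1)) (lt_irrefl i)
    rcases lt_or_gt_of_ne hab with h | h
    · exact key a b h
    · exact (key b a h).symm
  -- the inclusion
  have hsub : {ω | ∑ i ∈ Finset.range n, X i ω ≤ y} ⊆
      ⋃ j ∈ Finset.range q,
        ((⋂ i ∈ B j, {ω | X i ω ≤ t}) ∩ {ω | ∑ i ∈ T j, X i ω ≤ y}) := by
    intro ω hω
    rw [Set.mem_setOf_eq] at hω
    have hex : ∃ j ∈ Finset.range q, ∑ i ∈ B j, X i ω ≤ t := by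
      by_contra hno
      push_neg at hno
      have h1 : ∑ j ∈ Finset.range q, ∑ i ∈ B j, X i ω
          ≤ ∑ i ∈ Finset.range n, X i ω := by
        rw [← Finset.sum_biUnion hpd]
        exact Finset.sum_le_sum_of_subset_of_nonneg
          (Finset.biUnion_subset.2 fun j hj => hBsub j (Finset.mem_range.1 hj))
          (fun i _ _ => hnonneg i ω)
      have h2 : ∑ j ∈ Finset.range q, t
          < ∑ j ∈ Finset.range q, ∑ i ∈ B j, X i ω :=
        Finset.sum_lt_sum_of_nonempty (Finset.nonempty_range_iff.2 hq0.ne') hno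
      have h3 : ∑ j ∈ Finset.range q, t = y := by
        rw [Finset.sum_const, Finset.card_range, nsmul_eq_mul, htdef, mul_comm,
          div_mul_cancel₀ y (by exact_mod_cast hq0.ne' : (q : ℝ) ≠ 0)]
      linarith
    obtain ⟨j, hj, hjs⟩ := hex
    refine Set.mem_iUnion₂.2 ⟨j, hj, ?_, ?_⟩
    · refine Set.mem_iInter₂.2 fun i hi => ?_
      exact le_trans (Finset.single_le_sum (fun i _ => hnonneg i ω) hi) hjs
    · rw [Set.mem_setOf_eq]
      exact le_trans (Finset.sum_le_sum_of_subset_of_nonneg Finset.sdiff_subset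
        (fun i _ _ => hnonneg i ω)) hω
  -- measure of each piece
  have hkey : ∀ j, j < q →
      P ((⋂ i ∈ B j, {ω | X i ω ≤ t}) ∩ {ω | ∑ i ∈ T j, X i ω ≤ y})
        = P {ω | ∑ i ∈ Finset.range (n - k), X i ω ≤ y}
          * P {ω | X 0 ω ≤ t} ^ k := by
    intro j hj
    have hdisjBT : Disjoint (B j) (T j) := Finset.disjoint_sdiff
    have hFG := hindep.indepFun_finset (B j) (T j) hdisjBT hmeas
    set S : Set ((i : (B j : Finset ℕ)) → ℝ) := ⋂ i, (fun v => v i) ⁻¹' Iic t with hSdef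
    set U : Set ((i : (T j : Finset ℕ)) → ℝ) := (fun v => ∑ i, v i) ⁻¹' Iic y with hUdef
    have hS : MeasurableSet S :=
      MeasurableSet.iInter fun i => (measurable_pi_apply i) measurableSet_Iic
    have hU : MeasurableSet U :=
      (Finset.measurable_sum Finset.univ fun i _ => measurable_pi_apply i) measurableSet_Iic
    have hmul := hFG.measure_inter_preimage_eq_mul S U hS hU
    have eqS : (fun a (i : (B j : Finset ℕ)) => X i a) ⁻¹' S
        = ⋂ i ∈ B j, {ω | X i ω ≤ t} := by
      ext ω
      simp [hSdef, Set.mem_iInter, Subtype.forall]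
    have eqU : (fun a (i : (T j : Finset ℕ)) => X i a) ⁻¹' U
        = {ω | ∑ i ∈ T j, X i ω ≤ y} := by
      ext ω
      have hsc : ∑ i : (T j : Finset ℕ), X (↑i) ω = ∑ i ∈ T j, X i ω :=
        Finset.sum_coe_sort (T j) (fun i => X i ω)
      simp only [hUdef, Set.mem_preimage, Set.mem_Iic, Set.mem_setOf_eq, hsc]
    rw [eqS, eqU] at hmul
    rw [hmul]
    -- first factor
    have hA : P (⋂ i ∈ B j, {ω | X i ω ≤ t}) = P {ω | X 0 ω ≤ t} ^ k := by
      have hfact := hindep.meas_biInter (S := B j) (s := fun i => {ω | X i ω ≤ t})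
        (fun i _ => ⟨Iic t, measurableSet_Iic, rfl⟩)
      rw [hfact]
      have : ∀ i ∈ B j, P {ω | X i ω ≤ t} = P {ω | X 0 ω ≤ t} := by
        intro i _
        exact (hident i).measure_mem_eq measurableSet_Iic
      rw [Finset.prod_congr rfl this, Finset.prod_const, hBcard]
    -- second factor
    have hC : P {ω | ∑ i ∈ T j, X i ω ≤ y}
        = P {ω | ∑ i ∈ Finset.range (n - k), X i ω ≤ y} := by
      have := (aux_sum_ident hmeas hindep hident (T j)).measure_mem_eq
        (measurableSet_Iic (a := y))
      rw [hTcard j hj] at this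
      exact this
    rw [hA, hC, mul_comm]
  -- put it together
  calc P {ω | ∑ i ∈ Finset.range n, X i ω ≤ y}
      ≤ P (⋃ j ∈ Finset.range q,
          ((⋂ i ∈ B j, {ω | X i ω ≤ t}) ∩ {ω | ∑ i ∈ T j, X i ω ≤ y})) :=
        measure_mono hsub
    _ ≤ ∑ j ∈ Finset.range q,
          P ((⋂ i ∈ B j, {ω | X i ω ≤ t}) ∩ {ω | ∑ i ∈ T j, X i ω ≤ y}) :=
        measure_biUnion_finset_le _ _
    _ = ∑ j ∈ Finset.range q,
          (P {ω | ∑ i ∈ Finset.range (n - k), X i ω ≤ y} * P {ω | X 0 ω ≤ t} ^ k) :=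
        Finset.sum_congr rfl fun j hj => hkey j (Finset.mem_range.1 hj)
    _ = (q : ℝ≥0∞) * (P {ω | ∑ i ∈ Finset.range (n - k), X i ω ≤ y}
          * P {ω | X 0 ω ≤ t} ^ k) := by
        rw [Finset.sum_const, Finset.card_range, nsmul_eq_mul]
    _ = (q : ℝ≥0∞) * P {ω | ∑ i ∈ Finset.range (n - k), X i ω ≤ y}
          * P {ω | X 0 ω ≤ t} ^ k := by ring
end

section
/- Let f be a positive function on a right neighborhood of 0, regularly varying at 0 with index β ∈ ℝ (i.e., f(x) = x^β L(x) with L slowly varying at 0), of class C^1 on (0, ∞), with f' monotone and f nonvanishing in a neighborhood of 0. Then lim_{x→0+} x f'(x)/f(x) = β. -/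
open MeasureTheory Filter Set
open scoped Topology

theorem stmt7
    (β : ℝ) (f : ℝ → ℝ)
    (hreg : ∃ a > (0 : ℝ), ∃ L : ℝ → ℝ,
      (∀ x ∈ Ioc (0 : ℝ) a, 0 < L x) ∧ Measurable L ∧
      (∀ l : ℝ, 0 < l →
        Tendsto (fun x => L (l * x) / L x) (𝓝[>] (0 : ℝ)) (nhds 1)) ∧
      ∀ x ∈ Ioc (0 : ℝ) a, f x = x ^ β * L x)
    (hC1 : ContDiffOn ℝ 1 f (Ioi 0))
    (hmono : ∃ ε > (0 : ℝ),
      MonotoneOn (deriv f) (Ioo 0 ε) ∨ AntitoneOn (deriv f) (Ioo 0 ε))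
    (hpos : ∃ ε > (0 : ℝ), ∀ x ∈ Ioo (0 : ℝ) ε, 0 < f x) :
    Tendsto (fun x : ℝ => x * deriv f x / f x) (𝓝[>] (0 : ℝ)) (nhds β) := by
  obtain ⟨a, ha, L, hLpos, -, hLslow, hfL⟩ := hreg
  obtain ⟨ε₁, hε₁, hmono⟩ := hmono
  obtain ⟨ε₂, hε₂, hpos⟩ := hpos
  have hdiff : DifferentiableOn ℝ f (Ioi 0) := hC1.differentiableOn one_ne_zero
  -- ratio limit : f(t x)/f(x) → t^β
  have hratio : ∀ t : ℝ, 0 < t →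
      Tendsto (fun x => f (t * x) / f x) (𝓝[>] (0 : ℝ)) (𝓝 (t ^ β)) := by
    intro t ht
    have h1 : Tendsto (fun x => t ^ β * (L (t * x) / L x)) (𝓝[>] (0 : ℝ))
        (𝓝 (t ^ β * 1)) := tendsto_const_nhds.mul (hLslow t ht)
    rw [mul_one] at h1
    refine Tendsto.congr' ?_ h1
    have hδ : (0 : ℝ) < min a (a / t) := lt_min ha (div_pos ha ht)
    filter_upwards [Ioo_mem_nhdsGT_of_mem (left_mem_Ico.2 hδ)] with x hx
    have hx0 : 0 < x := hx.1
    have hxa : x ∈ Ioc (0 : ℝ) a := ⟨hx0, (hx.2.trans_le (min_le_left _ _)).le⟩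
    have htxle : t * x ≤ a := by
      have h2 : x < a / t := hx.2.trans_le (min_le_right _ _)
      rw [lt_div_iff₀ ht] at h2
      linarith
    have htxa : t * x ∈ Ioc (0 : ℝ) a := ⟨by positivity, htxle⟩
    rw [hfL x hxa, hfL _ htxa, Real.mul_rpow ht.le hx0.le]
    have h3 : (0 : ℝ) < x ^ β := Real.rpow_pos_of_pos hx0 β
    have h4 := hLpos x hxa
    field_simp
  -- slope limit : (t^β - 1)/(t-1) → β as t → 1
  have hslope : Tendsto (fun t : ℝ => (t ^ β - 1) / (t - 1)) (𝓝[≠] (1 : ℝ)) (𝓝 β) := by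
    have h := Real.hasDerivAt_rpow_const (x := (1 : ℝ)) (p := β) (Or.inl one_ne_zero)
    rw [Real.one_rpow, mul_one] at h
    have h2 := hasDerivAt_iff_tendsto_slope.1 h
    refine h2.congr fun t => ?_
    simp [slope_def_field, Real.one_rpow]
  set m := min (min ε₁ ε₂) a with hmdef
  have hm0 : 0 < m := lt_min (lt_min hε₁ hε₂) ha
  have hmε₁ : m ≤ ε₁ := (min_le_left _ _).trans (min_le_left _ _)
  have hmε₂ : m ≤ ε₂ := (min_le_left _ _).trans (min_le_right _ _)
  -- membership facts
  have hmem : ∀ t : ℝ, 0 < t → ∀ x : ℝ, 0 < x → x < m / (1 + t) →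
      x ∈ Ioo (0 : ℝ) ε₁ ∧ t * x ∈ Ioo (0 : ℝ) ε₁ ∧ 0 < f x := by
    intro t ht x hx0 hxm
    have h1t : (0 : ℝ) < 1 + t := by linarith
    have hxm' : x * (1 + t) < m := (lt_div_iff₀ h1t).1 hxm
    have hxltm : x < m := by nlinarith
    have htxltm : t * x < m := by nlinarith
    exact ⟨⟨hx0, hxltm.trans_le hmε₁⟩, ⟨by positivity, htxltm.trans_le hmε₁⟩,
      hpos x ⟨hx0, hxltm.trans_le hmε₂⟩⟩
  -- MVT wrapper
  have hmvt : ∀ u v : ℝ, 0 < u → u < v →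
      ∃ c ∈ Ioo u v, deriv f c = (f v - f u) / (v - u) := by
    intro u v hu huv
    exact exists_deriv_eq_slope f huv
      (hC1.continuousOn.mono fun y hy => mem_Ioi.2 (hu.trans_le hy.1))
      (hdiff.mono fun y hy => mem_Ioi.2 (hu.trans hy.1))
  -- algebra identity
  have hQeq : ∀ t x : ℝ, 0 < x → t ≠ 1 → 0 < f x →
      (f (t * x) / f x - 1) / (t - 1) = x * ((f (t * x) - f x) / (t * x - x)) / f x := by
    intro t x hx ht hfx
    have h1 : t - 1 ≠ 0 := sub_ne_zero.2 ht
    have h2 : t * x - x ≠ 0 := by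
      have h3 : t * x - x = (t - 1) * x := by ring
      rw [h3]; exact mul_ne_zero h1 hx.ne'
    field_simp
  have hs1 : Tendsto (fun t : ℝ => (t ^ β - 1) / (t - 1)) (𝓝[>] (1 : ℝ)) (𝓝 β) :=
    hslope.mono_left (nhdsWithin_mono _ fun y hy => ne_of_gt hy)
  have hs2 : Tendsto (fun t : ℝ => (t ^ β - 1) / (t - 1)) (𝓝[<] (1 : ℝ)) (𝓝 β) :=
    hslope.mono_left (nhdsWithin_mono _ fun y hy => ne_of_lt hy)
  refine tendsto_order.2 ⟨?_, ?_⟩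
  · -- lower bound : ∀ b < β, eventually b < g x
    intro b hb
    rcases hmono with hM | hA
    · -- monotone : use t < 1
      obtain ⟨t, htb, ht1, ht0⟩ := ((hs2.eventually_const_lt hb).and
        (eventually_mem_nhdsWithin.and
          ((eventually_gt_nhds one_pos).filter_mono nhdsWithin_le_nhds))).exists
      have htne : t ≠ 1 := ne_of_lt ht1
      have hQt : Tendsto (fun x => (f (t * x) / f x - 1) / (t - 1)) (𝓝[>] (0 : ℝ))
          (𝓝 ((t ^ β - 1) / (t - 1))) := ((hratio t ht0).sub_const 1).div_const (t - 1)
      have hδ : (0 : ℝ) < m / (1 + t) := by positivity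
      filter_upwards [hQt.eventually_const_lt htb,
        Ioo_mem_nhdsGT_of_mem (left_mem_Ico.2 hδ)] with x h1 h2
      obtain ⟨hxε, htxε, hfx⟩ := hmem t ht0 x h2.1 h2.2
      have hx0le : (0 : ℝ) ≤ x := h2.1.le
      have ht1' : t < 1 := ht1
      have htxx : t * x < x := by nlinarith [h2.1, ht1']
      obtain ⟨c, hc, hcd⟩ := hmvt (t * x) x htxε.1 htxx
      have hcε : c ∈ Ioo (0 : ℝ) ε₁ := ⟨htxε.1.trans hc.1, hc.2.trans hxε.2⟩
      have hds : (f (t * x) - f x) / (t * x - x) ≤ deriv f x := by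
        have h3 : (f (t * x) - f x) / (t * x - x) = (f x - f (t * x)) / (x - t * x) := by
          rw [← neg_sub (f x), ← neg_sub x, neg_div_neg_eq]
        rw [h3, ← hcd]
        exact hM hcε hxε hc.2.le
      calc b < (f (t * x) / f x - 1) / (t - 1) := h1
        _ = x * ((f (t * x) - f x) / (t * x - x)) / f x := hQeq t x h2.1 htne hfx
        _ ≤ x * deriv f x / f x := by gcongr
    · -- antitone : use t > 1
      obtain ⟨t, htb, ht1⟩ := ((hs1.eventually_const_lt hb).and self_mem_nhdsWithin).exists
      have ht0 : (0 : ℝ) < t := lt_trans one_pos ht1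
      have htne : t ≠ 1 := ne_of_gt ht1
      have hQt : Tendsto (fun x => (f (t * x) / f x - 1) / (t - 1)) (𝓝[>] (0 : ℝ))
          (𝓝 ((t ^ β - 1) / (t - 1))) := ((hratio t ht0).sub_const 1).div_const (t - 1)
      have hδ : (0 : ℝ) < m / (1 + t) := by positivity
      filter_upwards [hQt.eventually_const_lt htb,
        Ioo_mem_nhdsGT_of_mem (left_mem_Ico.2 hδ)] with x h1 h2
      obtain ⟨hxε, htxε, hfx⟩ := hmem t ht0 x h2.1 h2.2
      have hx0le : (0 : ℝ) ≤ x := h2.1.le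
      have hxtx : x < t * x := by nlinarith [h2.1]
      obtain ⟨c, hc, hcd⟩ := hmvt x (t * x) h2.1 hxtx
      have hcε : c ∈ Ioo (0 : ℝ) ε₁ := ⟨hxε.1.trans hc.1, hc.2.trans htxε.2⟩
      have hds : (f (t * x) - f x) / (t * x - x) ≤ deriv f x := by
        rw [← hcd]
        exact hA hxε hcε hc.1.le
      calc b < (f (t * x) / f x - 1) / (t - 1) := h1
        _ = x * ((f (t * x) - f x) / (t * x - x)) / f x := hQeq t x h2.1 htne hfx
        _ ≤ x * deriv f x / f x := by gcongr
  · -- upper bound : ∀ b > β, eventually g x < b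
    intro b hb
    rcases hmono with hM | hA
    · -- monotone : use t > 1
      obtain ⟨t, htb, ht1⟩ := ((hs1.eventually_lt_const hb).and self_mem_nhdsWithin).exists
      have ht0 : (0 : ℝ) < t := lt_trans one_pos ht1
      have htne : t ≠ 1 := ne_of_gt ht1
      have hQt : Tendsto (fun x => (f (t * x) / f x - 1) / (t - 1)) (𝓝[>] (0 : ℝ))
          (𝓝 ((t ^ β - 1) / (t - 1))) := ((hratio t ht0).sub_const 1).div_const (t - 1)
      have hδ : (0 : ℝ) < m / (1 + t) := by positivity
      filter_upwards [hQt.eventually_lt_const htb,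
        Ioo_mem_nhdsGT_of_mem (left_mem_Ico.2 hδ)] with x h1 h2
      obtain ⟨hxε, htxε, hfx⟩ := hmem t ht0 x h2.1 h2.2
      have hx0le : (0 : ℝ) ≤ x := h2.1.le
      have hxtx : x < t * x := by nlinarith [h2.1]
      obtain ⟨c, hc, hcd⟩ := hmvt x (t * x) h2.1 hxtx
      have hcε : c ∈ Ioo (0 : ℝ) ε₁ := ⟨hxε.1.trans hc.1, hc.2.trans htxε.2⟩
      have hds : deriv f x ≤ (f (t * x) - f x) / (t * x - x) := by
        rw [← hcd]
        exact hM hxε hcε hc.1.le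
      calc x * deriv f x / f x ≤ x * ((f (t * x) - f x) / (t * x - x)) / f x := by gcongr
        _ = (f (t * x) / f x - 1) / (t - 1) := (hQeq t x h2.1 htne hfx).symm
        _ < b := h1
    · -- antitone : use t < 1
      obtain ⟨t, htb, ht1, ht0⟩ := ((hs2.eventually_lt_const hb).and
        (eventually_mem_nhdsWithin.and
          ((eventually_gt_nhds one_pos).filter_mono nhdsWithin_le_nhds))).exists
      have htne : t ≠ 1 := ne_of_lt ht1
      have hQt : Tendsto (fun x => (f (t * x) / f x - 1) / (t - 1)) (𝓝[>] (0 : ℝ))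
          (𝓝 ((t ^ β - 1) / (t - 1))) := ((hratio t ht0).sub_const 1).div_const (t - 1)
      have hδ : (0 : ℝ) < m / (1 + t) := by positivity
      filter_upwards [hQt.eventually_lt_const htb,
        Ioo_mem_nhdsGT_of_mem (left_mem_Ico.2 hδ)] with x h1 h2
      obtain ⟨hxε, htxε, hfx⟩ := hmem t ht0 x h2.1 h2.2
      have hx0le : (0 : ℝ) ≤ x := h2.1.le
      have ht1' : t < 1 := ht1
      have htxx : t * x < x := by nlinarith [h2.1, ht1']
      obtain ⟨c, hc, hcd⟩ := hmvt (t * x) x htxε.1 htxx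
      have hcε : c ∈ Ioo (0 : ℝ) ε₁ := ⟨htxε.1.trans hc.1, hc.2.trans hxε.2⟩
      have hds : deriv f x ≤ (f (t * x) - f x) / (t * x - x) := by
        have h3 : (f (t * x) - f x) / (t * x - x) = (f x - f (t * x)) / (x - t * x) := by
          rw [← neg_sub (f x), ← neg_sub x, neg_div_neg_eq]
        rw [h3, ← hcd]
        exact hA hcε hxε hc.2.le
      calc x * deriv f x / f x ≤ x * ((f (t * x) - f x) / (t * x - x)) / f x := by gcongr
        _ = (f (t * x) / f x - 1) / (t - 1) := (hQeq t x h2.1 htne hfx).symm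
        _ < b := h1
end

section
/- Let f be regularly varying at 0 with index β, of class C^1 with f' monotone and f > 0 in a neighborhood of 0. Then for any θ ∈ ℝ with θ + β > 0, the map x ↦ x^θ f(x) is non-decreasing in a neighborhood of 0, and for θ + β < 0 it is non-increasing in a neighborhood of 0. -/
open MeasureTheory Filter Set
open scoped Topology

section Aux

lemma ev_small {m : ℝ} (hm : 0 < m) : ∀ᶠ x in 𝓝[>] (0:ℝ), 0 < x ∧ x < m := by
  filter_upwards [self_mem_nhdsWithin,
    mem_nhdsWithin_of_mem_nhds (eventually_lt_nhds hm)] with x hx hx' using ⟨hx, hx'⟩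

lemma slope_rpow_tendsto (β : ℝ) :
    Tendsto (fun l : ℝ => (l ^ β - 1) / (l - 1)) (𝓝[≠] (1:ℝ)) (𝓝 β) := by
  have h := (Real.hasDerivAt_rpow_const (x := (1:ℝ)) (p := β) (Or.inl one_ne_zero))
  rw [hasDerivAt_iff_tendsto_slope] at h
  have h2 : Tendsto (slope (fun x : ℝ => x ^ β) 1) (𝓝[≠] (1:ℝ)) (𝓝 β) := by
    simpa using h
  refine h2.congr fun l => ?_
  rw [slope_def_field, Real.one_rpow]

lemma exists_l_gt (β c : ℝ) (hc : β < c) :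
    ∃ l : ℝ, 1 < l ∧ (l ^ β - 1) / (l - 1) < c := by
  have h1 : Tendsto (fun l : ℝ => (l ^ β - 1) / (l - 1)) (𝓝[>] (1:ℝ)) (𝓝 β) :=
    (slope_rpow_tendsto β).mono_left (nhdsWithin_mono 1 fun x hx => ne_of_gt hx)
  obtain ⟨l, h2, h3⟩ := ((h1.eventually_lt_const hc).and self_mem_nhdsWithin).exists
  exact ⟨l, h3, h2⟩

lemma exists_l_gt' (β c : ℝ) (hc : c < β) :
    ∃ l : ℝ, 1 < l ∧ c < (l ^ β - 1) / (l - 1) := by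
  have h1 : Tendsto (fun l : ℝ => (l ^ β - 1) / (l - 1)) (𝓝[>] (1:ℝ)) (𝓝 β) :=
    (slope_rpow_tendsto β).mono_left (nhdsWithin_mono 1 fun x hx => ne_of_gt hx)
  obtain ⟨l, h2, h3⟩ := ((h1.eventually_const_lt hc).and self_mem_nhdsWithin).exists
  exact ⟨l, h3, h2⟩

lemma exists_l_lt (β c : ℝ) (hc : β < c) :
    ∃ l : ℝ, 0 < l ∧ l < 1 ∧ (l ^ β - 1) / (l - 1) < c := by
  have h1 : Tendsto (fun l : ℝ => (l ^ β - 1) / (l - 1)) (𝓝[<] (1:ℝ)) (𝓝 β) :=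
    (slope_rpow_tendsto β).mono_left (nhdsWithin_mono 1 fun x hx => ne_of_lt hx)
  have hp : ∀ᶠ l : ℝ in 𝓝[<] (1:ℝ), 0 < l :=
    mem_nhdsWithin_of_mem_nhds (eventually_gt_nhds one_pos)
  obtain ⟨l, ⟨h2, h4⟩, h3⟩ :=
    (((h1.eventually_lt_const hc).and hp).and self_mem_nhdsWithin).exists
  exact ⟨l, h4, h3, h2⟩

lemma exists_l_lt' (β c : ℝ) (hc : c < β) :
    ∃ l : ℝ, 0 < l ∧ l < 1 ∧ c < (l ^ β - 1) / (l - 1) := by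
  have h1 : Tendsto (fun l : ℝ => (l ^ β - 1) / (l - 1)) (𝓝[<] (1:ℝ)) (𝓝 β) :=
    (slope_rpow_tendsto β).mono_left (nhdsWithin_mono 1 fun x hx => ne_of_lt hx)
  have hp : ∀ᶠ l : ℝ in 𝓝[<] (1:ℝ), 0 < l :=
    mem_nhdsWithin_of_mem_nhds (eventually_gt_nhds one_pos)
  obtain ⟨l, ⟨h2, h4⟩, h3⟩ :=
    (((h1.eventually_const_lt hc).and hp).and self_mem_nhdsWithin).exists
  exact ⟨l, h4, h3, h2⟩

lemma mvt_slope (f : ℝ → ℝ) (hd : DifferentiableOn ℝ f (Ioi 0)) {a b : ℝ}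
    (ha : 0 < a) (hab : a < b) :
    ∃ ξ ∈ Ioo a b, deriv f ξ = (f b - f a) / (b - a) := by
  refine exists_deriv_eq_slope f hab ?_ ?_
  · exact hd.continuousOn.mono fun x hx => lt_of_lt_of_le ha hx.1
  · exact hd.mono fun x hx => lt_trans ha hx.1

variable {f : ℝ → ℝ} {ε₀ l : ℝ}

lemma mvt_gt_mono (hd : DifferentiableOn ℝ f (Ioi 0)) (hε₀ : 0 < ε₀)
    (hm : MonotoneOn (deriv f) (Ioo 0 ε₀)) (hl : 1 < l) :
    ∀ᶠ x in 𝓝[>] (0:ℝ), x * deriv f x ≤ (f (l * x) - f x) / (l - 1) := by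
  have hl0 : (0:ℝ) < l := lt_trans one_pos hl
  filter_upwards [ev_small (div_pos hε₀ hl0)] with x ⟨hx0, hx⟩
  have hlx : l * x < ε₀ := by rw [lt_div_iff₀ hl0] at hx; linarith [mul_comm l x]
  have hxlx : x < l * x := by nlinarith
  have hxε : x < ε₀ := lt_trans hxlx hlx
  obtain ⟨ξ, hξ, hderiv⟩ := mvt_slope f hd hx0 hxlx
  have hmono : deriv f x ≤ deriv f ξ :=
    hm ⟨hx0, hxε⟩ ⟨lt_trans hx0 hξ.1, lt_trans hξ.2 hlx⟩ hξ.1.le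
  have hne : l * x - x ≠ 0 := by nlinarith
  have hl1' : l - 1 ≠ 0 := by intro h; nlinarith
  have e : x * deriv f ξ = (f (l * x) - f x) / (l - 1) := by
    rw [hderiv]; field_simp
  nlinarith [e]

lemma mvt_lt_anti (hd : DifferentiableOn ℝ f (Ioi 0)) (hε₀ : 0 < ε₀)
    (hm : AntitoneOn (deriv f) (Ioo 0 ε₀)) (hl0 : 0 < l) (hl : l < 1) :
    ∀ᶠ x in 𝓝[>] (0:ℝ), x * deriv f x ≤ (f (l * x) - f x) / (l - 1) := by
  filter_upwards [ev_small hε₀] with x ⟨hx0, hxε⟩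
  have hlxx : l * x < x := by nlinarith
  obtain ⟨ξ, hξ, hderiv⟩ := mvt_slope f hd (mul_pos hl0 hx0) hlxx
  have hmono : deriv f x ≤ deriv f ξ :=
    hm ⟨lt_trans (mul_pos hl0 hx0) hξ.1, lt_trans hξ.2 hxε⟩ ⟨hx0, hxε⟩ hξ.2.le
  have hne : x - l * x ≠ 0 := by nlinarith
  have hl1' : l - 1 ≠ 0 := by intro h; nlinarith
  have e : x * deriv f ξ = (f (l * x) - f x) / (l - 1) := by
    rw [hderiv, mul_div_assoc', div_eq_div_iff hne hl1']; ring
  nlinarith [e]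

lemma mvt_lt_mono (hd : DifferentiableOn ℝ f (Ioi 0)) (hε₀ : 0 < ε₀)
    (hm : MonotoneOn (deriv f) (Ioo 0 ε₀)) (hl0 : 0 < l) (hl : l < 1) :
    ∀ᶠ x in 𝓝[>] (0:ℝ), (f (l * x) - f x) / (l - 1) ≤ x * deriv f x := by
  filter_upwards [ev_small hε₀] with x ⟨hx0, hxε⟩
  have hlxx : l * x < x := by nlinarith
  obtain ⟨ξ, hξ, hderiv⟩ := mvt_slope f hd (mul_pos hl0 hx0) hlxx
  have hmono : deriv f ξ ≤ deriv f x :=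
    hm ⟨lt_trans (mul_pos hl0 hx0) hξ.1, lt_trans hξ.2 hxε⟩ ⟨hx0, hxε⟩ hξ.2.le
  have hne : x - l * x ≠ 0 := by nlinarith
  have hl1' : l - 1 ≠ 0 := by intro h; nlinarith
  have e : x * deriv f ξ = (f (l * x) - f x) / (l - 1) := by
    rw [hderiv, mul_div_assoc', div_eq_div_iff hne hl1']; ring
  nlinarith [e]

lemma mvt_gt_anti (hd : DifferentiableOn ℝ f (Ioi 0)) (hε₀ : 0 < ε₀)
    (hm : AntitoneOn (deriv f) (Ioo 0 ε₀)) (hl : 1 < l) :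
    ∀ᶠ x in 𝓝[>] (0:ℝ), (f (l * x) - f x) / (l - 1) ≤ x * deriv f x := by
  have hl0 : (0:ℝ) < l := lt_trans one_pos hl
  filter_upwards [ev_small (div_pos hε₀ hl0)] with x ⟨hx0, hx⟩
  have hlx : l * x < ε₀ := by rw [lt_div_iff₀ hl0] at hx; linarith [mul_comm l x]
  have hxlx : x < l * x := by nlinarith
  have hxε : x < ε₀ := lt_trans hxlx hlx
  obtain ⟨ξ, hξ, hderiv⟩ := mvt_slope f hd hx0 hxlx
  have hmono : deriv f ξ ≤ deriv f x :=
    hm ⟨hx0, hxε⟩ ⟨lt_trans hx0 hξ.1, lt_trans hξ.2 hlx⟩ hξ.1.le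
  have hne : l * x - x ≠ 0 := by nlinarith
  have hl1' : l - 1 ≠ 0 := by intro h; nlinarith
  have e : x * deriv f ξ = (f (l * x) - f x) / (l - 1) := by
    rw [hderiv]; field_simp
  nlinarith [e]

lemma ratio_tendsto (β : ℝ) (f : ℝ → ℝ)
    (hreg : ∃ a > (0 : ℝ), ∃ L : ℝ → ℝ,
      (∀ x ∈ Ioc (0 : ℝ) a, 0 < L x) ∧ Measurable L ∧
      (∀ l : ℝ, 0 < l →
        Tendsto (fun x => L (l * x) / L x) (𝓝[>] (0 : ℝ)) (nhds 1)) ∧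
      ∀ x ∈ Ioc (0 : ℝ) a, f x = x ^ β * L x)
    {l : ℝ} (hl : 0 < l) :
    Tendsto (fun x => f (l * x) / f x) (𝓝[>] (0:ℝ)) (𝓝 (l ^ β)) := by
  obtain ⟨a, ha, L, hLpos, -, hLslow, hfL⟩ := hreg
  have hmain : Tendsto (fun x => l ^ β * (L (l * x) / L x)) (𝓝[>] (0:ℝ)) (𝓝 (l ^ β)) := by
    have := (tendsto_const_nhds (x := l ^ β) (f := 𝓝[>] (0:ℝ))).mul (hLslow l hl)
    simpa using this
  refine hmain.congr' ?_
  filter_upwards [ev_small (lt_min ha (div_pos ha hl))] with x ⟨hx0, hxm⟩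
  have hxa : x ∈ Ioc (0:ℝ) a := ⟨hx0, (lt_min_iff.1 hxm).1.le⟩
  have hlxa : l * x ∈ Ioc (0:ℝ) a := by
    refine ⟨mul_pos hl hx0, ?_⟩
    have := (lt_min_iff.1 hxm).2
    calc l * x ≤ l * (a / l) := by nlinarith
    _ = a := by field_simp
  rw [hfL x hxa, hfL (l * x) hlxa]
  have h1 : (l * x) ^ β = l ^ β * x ^ β := Real.mul_rpow hl.le hx0.le
  have hx0' : (0:ℝ) < x ^ β := Real.rpow_pos_of_pos hx0 β
  have hLx : L x ≠ 0 := (hLpos x hxa).ne'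
  rw [h1]
  field_simp

lemma core_le (β c l : ℝ) (f : ℝ → ℝ) (hl1 : l ≠ 1)
    (hratio : Tendsto (fun x => f (l * x) / f x) (𝓝[>] (0:ℝ)) (𝓝 (l ^ β)))
    (hslope : (l ^ β - 1) / (l - 1) < c)
    (hfpos : ∀ᶠ x in 𝓝[>] (0:ℝ), 0 < f x)
    (hmvt : ∀ᶠ x in 𝓝[>] (0:ℝ), x * deriv f x ≤ (f (l * x) - f x) / (l - 1)) :
    ∀ᶠ x in 𝓝[>] (0:ℝ), x * deriv f x ≤ c * f x := by
  have ht : Tendsto (fun x => (f (l * x) / f x - 1) / (l - 1)) (𝓝[>] (0:ℝ))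
      (𝓝 ((l ^ β - 1) / (l - 1))) := (hratio.sub tendsto_const_nhds).div_const _
  filter_upwards [hfpos, hmvt, ht.eventually_lt_const hslope] with x hf hm hc
  have hl1' : l - 1 ≠ 0 := sub_ne_zero.2 hl1
  have key : (f (l * x) - f x) / (l - 1) = f x * ((f (l * x) / f x - 1) / (l - 1)) := by
    field_simp
  rw [key] at hm
  calc x * deriv f x ≤ f x * ((f (l * x) / f x - 1) / (l - 1)) := hm
    _ ≤ f x * c := by nlinarith
    _ = c * f x := mul_comm _ _

lemma core_ge (β c l : ℝ) (f : ℝ → ℝ) (hl1 : l ≠ 1)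
    (hratio : Tendsto (fun x => f (l * x) / f x) (𝓝[>] (0:ℝ)) (𝓝 (l ^ β)))
    (hslope : c < (l ^ β - 1) / (l - 1))
    (hfpos : ∀ᶠ x in 𝓝[>] (0:ℝ), 0 < f x)
    (hmvt : ∀ᶠ x in 𝓝[>] (0:ℝ), (f (l * x) - f x) / (l - 1) ≤ x * deriv f x) :
    ∀ᶠ x in 𝓝[>] (0:ℝ), c * f x ≤ x * deriv f x := by
  have ht : Tendsto (fun x => (f (l * x) / f x - 1) / (l - 1)) (𝓝[>] (0:ℝ))
      (𝓝 ((l ^ β - 1) / (l - 1))) := (hratio.sub tendsto_const_nhds).div_const _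
  filter_upwards [hfpos, hmvt, ht.eventually_const_lt hslope] with x hf hm hc
  have hl1' : l - 1 ≠ 0 := sub_ne_zero.2 hl1
  have key : (f (l * x) - f x) / (l - 1) = f x * ((f (l * x) / f x - 1) / (l - 1)) := by
    field_simp
  rw [key] at hm
  nlinarith

lemma key_bounds (β : ℝ) (f : ℝ → ℝ)
    (hreg : ∃ a > (0 : ℝ), ∃ L : ℝ → ℝ,
      (∀ x ∈ Ioc (0 : ℝ) a, 0 < L x) ∧ Measurable L ∧
      (∀ l : ℝ, 0 < l →
        Tendsto (fun x => L (l * x) / L x) (𝓝[>] (0 : ℝ)) (nhds 1)) ∧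
      ∀ x ∈ Ioc (0 : ℝ) a, f x = x ^ β * L x)
    (hC1 : ContDiffOn ℝ 1 f (Ioi 0))
    (hmono : ∃ ε > (0 : ℝ),
      MonotoneOn (deriv f) (Ioo 0 ε) ∨ AntitoneOn (deriv f) (Ioo 0 ε))
    (hpos : ∃ ε > (0 : ℝ), ∀ x ∈ Ioo (0 : ℝ) ε, 0 < f x) :
    (∀ c, β < c → ∀ᶠ x in 𝓝[>] (0:ℝ), x * deriv f x ≤ c * f x) ∧
    (∀ c, c < β → ∀ᶠ x in 𝓝[>] (0:ℝ), c * f x ≤ x * deriv f x) := by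
  obtain ⟨ε₀, hε₀, hm⟩ := hmono
  obtain ⟨ε₂, hε₂, hp⟩ := hpos
  have hd : DifferentiableOn ℝ f (Ioi 0) := hC1.differentiableOn one_ne_zero
  have hfpos : ∀ᶠ x in 𝓝[>] (0:ℝ), 0 < f x := by
    filter_upwards [ev_small hε₂] with x hx using hp x ⟨hx.1, hx.2⟩
  constructor
  · intro c hc
    rcases hm with hm | hm
    · obtain ⟨l, hl1, hls⟩ := exists_l_gt β c hc
      exact core_le β c l f (ne_of_gt hl1)
        (ratio_tendsto β f hreg (lt_trans one_pos hl1)) hls hfpos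
        (mvt_gt_mono hd hε₀ hm hl1)
    · obtain ⟨l, hl0, hl1, hls⟩ := exists_l_lt β c hc
      exact core_le β c l f (ne_of_lt hl1)
        (ratio_tendsto β f hreg hl0) hls hfpos
        (mvt_lt_anti hd hε₀ hm hl0 hl1)
  · intro c hc
    rcases hm with hm | hm
    · obtain ⟨l, hl0, hl1, hls⟩ := exists_l_lt' β c hc
      exact core_ge β c l f (ne_of_lt hl1)
        (ratio_tendsto β f hreg hl0) hls hfpos
        (mvt_lt_mono hd hε₀ hm hl0 hl1)
    · obtain ⟨l, hl1, hls⟩ := exists_l_gt' β c hc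
      exact core_ge β c l f (ne_of_gt hl1)
        (ratio_tendsto β f hreg (lt_trans one_pos hl1)) hls hfpos
        (mvt_gt_anti hd hε₀ hm hl1)

end Aux

theorem stmt8
    (β : ℝ) (f : ℝ → ℝ)
    (hreg : ∃ a > (0 : ℝ), ∃ L : ℝ → ℝ,
      (∀ x ∈ Ioc (0 : ℝ) a, 0 < L x) ∧ Measurable L ∧
      (∀ l : ℝ, 0 < l →
        Tendsto (fun x => L (l * x) / L x) (𝓝[>] (0 : ℝ)) (nhds 1)) ∧
      ∀ x ∈ Ioc (0 : ℝ) a, f x = x ^ β * L x)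
    (hC1 : ContDiffOn ℝ 1 f (Ioi 0))
    (hmono : ∃ ε > (0 : ℝ),
      MonotoneOn (deriv f) (Ioo 0 ε) ∨ AntitoneOn (deriv f) (Ioo 0 ε))
    (hpos : ∃ ε > (0 : ℝ), ∀ x ∈ Ioo (0 : ℝ) ε, 0 < f x) :
    ∀ θ : ℝ,
      (0 < θ + β →
        ∃ ε > (0 : ℝ), MonotoneOn (fun x : ℝ => x ^ θ * f x) (Ioc 0 ε)) ∧
      (θ + β < 0 →
        ∃ ε > (0 : ℝ), AntitoneOn (fun x : ℝ => x ^ θ * f x) (Ioc 0 ε)) := by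
  obtain ⟨hupper, hlower⟩ := key_bounds β f hreg hC1 hmono hpos
  have hd : DifferentiableOn ℝ f (Ioi 0) := hC1.differentiableOn one_ne_zero
  obtain ⟨ε₂, hε₂, hp⟩ := hpos
  have hfpos : ∀ᶠ x in 𝓝[>] (0:ℝ), 0 < f x := by
    filter_upwards [ev_small hε₂] with x hx using hp x ⟨hx.1, hx.2⟩
  intro θ
  have hcont : ∀ u : ℝ, ContinuousOn (fun x : ℝ => x ^ θ * f x) (Ioc 0 u) := by
    intro u
    refine ContinuousOn.mul ?_ (hC1.continuousOn.mono fun x hx => hx.1)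
    exact fun x hx =>
      (Real.continuousAt_rpow_const x θ (Or.inl hx.1.ne')).continuousWithinAt
  have hdiff : ∀ x : ℝ, 0 < x →
      HasDerivAt (fun y : ℝ => y ^ θ * f y)
        (θ * x ^ (θ - 1) * f x + x ^ θ * deriv f x) x := by
    intro x hx0
    have hfd : DifferentiableAt ℝ f x := hd.differentiableAt (isOpen_Ioi.mem_nhds hx0)
    exact (Real.hasDerivAt_rpow_const (Or.inl hx0.ne')).mul hfd.hasDerivAt
  have hfactor : ∀ x : ℝ, 0 < x →
      θ * x ^ (θ - 1) * f x + x ^ θ * deriv f x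
        = x ^ (θ - 1) * (θ * f x + x * deriv f x) := by
    intro x hx0
    have hxθ : x ^ θ = x ^ (θ - 1) * x := by
      have := Real.rpow_add_one hx0.ne' (θ - 1)
      rw [sub_add_cancel] at this
      exact this
    rw [hxθ]; ring
  constructor
  · intro hθ
    have hkey := (hlower (-θ) (by linarith)).and hfpos
    rw [Filter.eventually_iff, mem_nhdsGT_iff_exists_Ioo_subset] at hkey
    obtain ⟨u, hu0, hsub⟩ := hkey
    refine ⟨u / 2, half_pos hu0, ?_⟩
    refine monotoneOn_of_deriv_nonneg (convex_Ioc 0 (u/2)) (hcont (u/2)) ?_ ?_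
    · rw [interior_Ioc]
      exact fun x hx => ((hdiff x hx.1).differentiableAt).differentiableWithinAt
    · rw [interior_Ioc]
      intro x hx
      obtain ⟨hineq, hfx⟩ := hsub ⟨hx.1, lt_trans hx.2 (half_lt_self hu0)⟩
      rw [(hdiff x hx.1).deriv, hfactor x hx.1]
      have hpow : (0:ℝ) < x ^ (θ - 1) := Real.rpow_pos_of_pos hx.1 _
      have : (0:ℝ) ≤ θ * f x + x * deriv f x := by linarith
      positivity
  · intro hθ
    have hkey := (hupper (-θ) (by linarith)).and hfpos
    rw [Filter.eventually_iff, mem_nhdsGT_iff_exists_Ioo_subset] at hkey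
    obtain ⟨u, hu0, hsub⟩ := hkey
    refine ⟨u / 2, half_pos hu0, ?_⟩
    refine antitoneOn_of_deriv_nonpos (convex_Ioc 0 (u/2)) (hcont (u/2)) ?_ ?_
    · rw [interior_Ioc]
      exact fun x hx => ((hdiff x hx.1).differentiableAt).differentiableWithinAt
    · rw [interior_Ioc]
      intro x hx
      obtain ⟨hineq, hfx⟩ := hsub ⟨hx.1, lt_trans hx.2 (half_lt_self hu0)⟩
      rw [(hdiff x hx.1).deriv, hfactor x hx.1]
      have hpow : (0:ℝ) < x ^ (θ - 1) := Real.rpow_pos_of_pos hx.1 _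
      have h2 : θ * f x + x * deriv f x ≤ 0 := by linarith
      exact mul_nonpos_of_nonneg_of_nonpos hpow.le h2
end

section
/- Let (X_n) be i.i.d. positive absolutely continuous random variables with density f, and let f_{S_n} denote the density of S_n = X_1 + ... + X_n. The following are equivalent: (i) there exist an integer N_1 ≥ 1 and ε > 0 such that f_{S_{N_1}} is non-decreasing on (0, ε]; (ii) there exist an integer N_2 ≥ 1, ε > 0, and β > −1 such that for all c ∈ (0,1) and t ∈ (0, ε], f_{S_{N_2}}(ct) ≤ c^β f_{S_{N_2}}(t). -/
open MeasureTheory Filter Set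
open scoped Topology ENNReal

/-- Convolution of two real functions. -/
noncomputable def conv (f g : ℝ → ℝ) : ℝ → ℝ := fun x => ∫ t, f t * g (x - t)

/-- `iterConv f n` is the `n`-fold self-convolution `f^{*n}` (for `n ≥ 1`). -/
noncomputable def iterConv (f : ℝ → ℝ) : ℕ → ℝ → ℝ
  | 0 => fun _ => 0
  | 1 => f
  | n + 2 => conv f (iterConv f (n + 1))

noncomputable def LC (f : ℝ → ℝ) : ℕ → ℝ → ℝ≥0∞
  | 0 => fun _ => 0
  | 1 => fun x => ENNReal.ofReal (f x)
  | n + 2 => fun x => ∫⁻ t, ENNReal.ofReal (f t) * LC f (n + 1) (x - t)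

lemma LC_meas {f : ℝ → ℝ} (hf : Measurable f) : ∀ n, Measurable (LC f n) := by
  intro n
  induction n using Nat.strong_induction_on with
  | _ n ih =>
    match n with
    | 0 => exact measurable_const
    | 1 => exact ENNReal.measurable_ofReal.comp hf
    | (n+2) =>
      have h1 : Measurable (LC f (n+1)) := ih (n+1) (by omega)
      have : Measurable fun p : ℝ × ℝ =>
          ENNReal.ofReal (f p.2) * LC f (n+1) (p.1 - p.2) :=
        ((ENNReal.measurable_ofReal.comp hf).comp measurable_snd).mul
          (h1.comp (measurable_fst.sub measurable_snd))
      exact this.lintegral_prod_right'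

lemma LC_supp {f : ℝ → ℝ} (hsupp : ∀ t ≤ (0:ℝ), f t = 0) :
    ∀ n, ∀ x ≤ (0:ℝ), LC f n x = 0 := by
  intro n
  induction n using Nat.strong_induction_on with
  | _ n ih =>
    match n with
    | 0 => intro x _; rfl
    | 1 => intro x hx; simp [LC, hsupp x hx]
    | (n+2) =>
      intro x hx
      show (∫⁻ t, ENNReal.ofReal (f t) * LC f (n+1) (x - t)) = 0
      rw [← lintegral_zero]
      refine lintegral_congr fun t => ?_
      rcases le_or_gt t 0 with ht | ht
      · simp [hsupp t ht]
      · have : x - t ≤ 0 := by linarith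
        simp [ih (n+1) (by omega) _ this]

lemma lintegral_LC {f : ℝ → ℝ} (hf : Measurable f) (hnn : ∀ t, 0 ≤ f t)
    (hint : ∫ t, f t = 1) : ∀ n, 1 ≤ n → ∫⁻ x, LC f n x = 1 := by
  have hInt : Integrable f := by
    by_contra h
    rw [integral_undef h] at hint; norm_num at hint
  intro n
  induction n using Nat.strong_induction_on with
  | _ n ih =>
    match n with
    | 0 => intro h; omega
    | 1 =>
      intro _
      show ∫⁻ x, ENNReal.ofReal (f x) = 1
      rw [← ofReal_integral_eq_lintegral_ofReal hInt (Eventually.of_forall hnn), hint]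
      simp
    | (n+2) =>
      intro _
      have h1 : Measurable (LC f (n+1)) := LC_meas hf (n+1)
      show (∫⁻ x, ∫⁻ t, ENNReal.ofReal (f t) * LC f (n+1) (x - t)) = 1
      have hprod : Measurable fun p : ℝ × ℝ =>
          ENNReal.ofReal (f p.2) * LC f (n+1) (p.1 - p.2) :=
        ((ENNReal.measurable_ofReal.comp hf).comp measurable_snd).mul
          (h1.comp (measurable_fst.sub measurable_snd))
      rw [lintegral_lintegral_swap hprod.aemeasurable]
      have : ∀ t : ℝ, (∫⁻ x, ENNReal.ofReal (f t) * LC f (n+1) (x - t))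
          = ENNReal.ofReal (f t) := by
        intro t
        have hm : Measurable fun x : ℝ => LC f (n+1) (x - t) :=
          h1.comp (measurable_id.sub measurable_const)
        rw [lintegral_const_mul _ hm,
          lintegral_sub_right_eq_self (LC f (n+1)) t, ih (n+1) (by omega) (by omega)]
        simp
      simp_rw [this]
      rw [← ofReal_integral_eq_lintegral_ofReal hInt (Eventually.of_forall hnn), hint]
      simp

lemma iterConv_toReal {f : ℝ → ℝ} (hf : Measurable f) (hnn : ∀ t, 0 ≤ f t)
    (hint : ∫ t, f t = 1) : ∀ n x, iterConv f n x = (LC f n x).toReal := by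
  intro n
  induction n using Nat.strong_induction_on with
  | _ n ih =>
    match n with
    | 0 => intro x; simp [iterConv, LC]
    | 1 => intro x; simp [iterConv, LC, (hnn x)]
    | (n+2) =>
      intro x
      have h1 : Measurable (LC f (n+1)) := LC_meas hf (n+1)
      have hgeq : iterConv f (n+1) = fun y => (LC f (n+1) y).toReal :=
        funext (ih (n+1) (by omega))
      have hgm : Measurable (iterConv f (n+1)) := by
        rw [hgeq]; exact h1.ennreal_toReal
      have hgnn : ∀ y, 0 ≤ iterConv f (n+1) y := by
        intro y; rw [hgeq]; exact ENNReal.toReal_nonneg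
      show conv f (iterConv f (n+1)) x = _
      rw [conv]
      have ham : AEStronglyMeasurable (fun t => f t * iterConv f (n+1) (x - t)) volume :=
        (hf.mul (hgm.comp (measurable_const.sub measurable_id))).aestronglyMeasurable
      rw [integral_eq_lintegral_of_nonneg_ae
        (Eventually.of_forall fun t => mul_nonneg (hnn t) (hgnn _)) ham]
      congr 1
      have hfin : ∀ᵐ y : ℝ, LC f (n+1) y < ∞ :=
        ae_lt_top h1 (by rw [lintegral_LC hf hnn hint (n+1) (by omega)]; simp)
      have hfin2 : ∀ᵐ t : ℝ, LC f (n+1) (x - t) < ∞ := by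
        have hmp : MeasurePreserving (fun t : ℝ => x - t) volume volume :=
          Measure.measurePreserving_sub_left volume x
        exact hmp.quasiMeasurePreserving.tendsto_ae.eventually hfin
      show (∫⁻ t, ENNReal.ofReal (f t * iterConv f (n+1) (x - t)))
          = ∫⁻ t, ENNReal.ofReal (f t) * LC f (n+1) (x - t)
      refine lintegral_congr_ae ?_
      filter_upwards [hfin2] with t ht
      rw [ENNReal.ofReal_mul (hnn t), hgeq]
      simp [ENNReal.ofReal_toReal ht.ne]

lemma LC_succ (f : ℝ → ℝ) (n : ℕ) (hn : 1 ≤ n) (x : ℝ) :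
    LC f (n + 1) x = ∫⁻ t, ENNReal.ofReal (f t) * LC f n (x - t) := by
  match n, hn with
  | (m+1), _ => rfl

lemma LC_add {f : ℝ → ℝ} (hf : Measurable f) :
    ∀ m n, 1 ≤ m → 1 ≤ n → ∀ x, LC f (m + n) x = ∫⁻ t, LC f m t * LC f n (x - t) := by
  intro m
  induction m with
  | zero => omega
  | succ m ih =>
    intro n _ hn x
    rcases Nat.eq_zero_or_pos m with hm | hm
    · subst hm
      rw [show 1 + n = n + 1 by ring, LC_succ f n hn x]
      rfl
    · have key := ih n hm hn
      have h1 : Measurable (LC f m) := LC_meas hf m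
      have h2 : Measurable (LC f n) := LC_meas hf n
      rw [show m + 1 + n = (m + n) + 1 by ring, LC_succ f (m+n) (by omega) x]
      have step1 : ∀ t : ℝ, ENNReal.ofReal (f t) * LC f (m+n) (x - t)
          = ∫⁻ s, ENNReal.ofReal (f t) * LC f m (s - t) * LC f n (x - s) := by
        intro t
        rw [key (x - t)]
        have hms : Measurable fun s : ℝ => LC f m s * LC f n (x - t - s) :=
          h1.mul (h2.comp (measurable_const.sub measurable_id))
        rw [← lintegral_const_mul _ hms]
        rw [← lintegral_sub_right_eq_self
          (fun s => ENNReal.ofReal (f t) * (LC f m s * LC f n (x - t - s))) t]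
        refine lintegral_congr fun s => ?_
        rw [show x - t - (s - t) = x - s by ring, mul_assoc]
      simp_rw [step1]
      have hprod : Measurable fun p : ℝ × ℝ =>
          ENNReal.ofReal (f p.1) * LC f m (p.2 - p.1) * LC f n (x - p.2) :=
        (((ENNReal.measurable_ofReal.comp hf).comp measurable_fst).mul
          (h1.comp (measurable_snd.sub measurable_fst))).mul
            (h2.comp (measurable_const.sub measurable_snd))
      rw [lintegral_lintegral_swap hprod.aemeasurable]
      refine lintegral_congr fun s => ?_
      rw [LC_succ f m hm s]
      have hm2 : Measurable fun t : ℝ => ENNReal.ofReal (f t) * LC f m (s - t) :=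
        (ENNReal.measurable_ofReal.comp hf).mul
          (h1.comp (measurable_const.sub measurable_id))
      rw [lintegral_mul_const _ hm2]

lemma lintegral_scale {φ : ℝ → ℝ≥0∞} (hφ : Measurable φ) {c : ℝ} (hc : 0 < c) :
    ∫⁻ t, φ t = ENNReal.ofReal c * ∫⁻ s, φ (c * s) := by
  have h1 : ∫⁻ s, φ (c * s) = ∫⁻ y, φ y ∂(Measure.map (c * ·) volume) :=
    (lintegral_map hφ (measurable_const_mul c)).symm
  rw [h1, Real.map_volume_mul_left (ne_of_gt hc), lintegral_smul_measure, smul_eq_mul,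
    ← mul_assoc, ← ENNReal.ofReal_mul hc.le, abs_of_pos (inv_pos.2 hc),
    mul_inv_cancel₀ (ne_of_gt hc), ENNReal.ofReal_one, one_mul]

lemma double {g : ℝ → ℝ≥0∞} (hg : Measurable g) (hsupp : ∀ y ≤ (0:ℝ), g y = 0)
    {δ γ : ℝ}
    (H : ∀ c ∈ Ioo (0:ℝ) 1, ∀ t ∈ Ioc (0:ℝ) δ,
      g (c * t) ≤ ENNReal.ofReal (c ^ γ) * g t) :
    ∀ c ∈ Ioo (0:ℝ) 1, ∀ x ∈ Ioc (0:ℝ) δ,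
      (∫⁻ t, g t * g (c * x - t)) ≤
        ENNReal.ofReal (c ^ (2 * γ + 1)) * ∫⁻ t, g t * g (x - t) := by
  intro c hc x hx
  obtain ⟨hc0, hc1⟩ := hc
  obtain ⟨hx0, hxδ⟩ := hx
  have hφ : Measurable fun t => g t * g (c * x - t) :=
    hg.mul (hg.comp (measurable_const.sub measurable_id))
  rw [lintegral_scale hφ hc0]
  have hbound : ∀ s : ℝ, g (c * s) * g (c * x - c * s) ≤
      ENNReal.ofReal (c ^ γ) * ENNReal.ofReal (c ^ γ) * (g s * g (x - s)) := by
    intro s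
    rcases le_or_gt s 0 with hs | hs
    · rw [hsupp (c * s) (by nlinarith), zero_mul]
      exact zero_le
    rcases le_or_gt x s with hxs | hxs
    · rw [show c * x - c * s = c * (x - s) by ring,
        hsupp (c * (x - s)) (by nlinarith), mul_zero]
      exact zero_le
    · have h1 : g (c * s) ≤ ENNReal.ofReal (c ^ γ) * g s :=
        H c ⟨hc0, hc1⟩ s ⟨hs, by linarith⟩
      have h2 : g (c * (x - s)) ≤ ENNReal.ofReal (c ^ γ) * g (x - s) :=
        H c ⟨hc0, hc1⟩ (x - s) ⟨by linarith, by linarith⟩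
      calc g (c * s) * g (c * x - c * s)
          = g (c * s) * g (c * (x - s)) := by ring_nf
        _ ≤ (ENNReal.ofReal (c ^ γ) * g s) * (ENNReal.ofReal (c ^ γ) * g (x - s)) :=
            mul_le_mul' h1 h2
        _ = ENNReal.ofReal (c ^ γ) * ENNReal.ofReal (c ^ γ) * (g s * g (x - s)) := by
            ring
  have hmono : (∫⁻ s, g (c * s) * g (c * x - c * s)) ≤
      ∫⁻ s, ENNReal.ofReal (c ^ γ) * ENNReal.ofReal (c ^ γ) * (g s * g (x - s)) :=
    lintegral_mono hbound
  have hms : Measurable fun s : ℝ => g s * g (x - s) :=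
    hg.mul (hg.comp (measurable_const.sub measurable_id))
  rw [lintegral_const_mul _ hms] at hmono
  calc ENNReal.ofReal c * ∫⁻ s, g (c * s) * g (c * x - c * s)
      ≤ ENNReal.ofReal c * (ENNReal.ofReal (c ^ γ) * ENNReal.ofReal (c ^ γ) *
          ∫⁻ s, g s * g (x - s)) := mul_le_mul_right hmono _
    _ = ENNReal.ofReal (c ^ (2 * γ + 1)) * ∫⁻ t, g t * g (x - t) := by
        rw [← mul_assoc, ← mul_assoc, ← ENNReal.ofReal_mul hc0.le,
          ← ENNReal.ofReal_mul (by positivity)]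
        congr 2
        rw [show (2 : ℝ) * γ + 1 = γ + γ + 1 by ring,
          Real.rpow_add hc0, Real.rpow_add hc0, Real.rpow_one]
        ring

lemma key {f : ℝ → ℝ} (hf : Measurable f) (hnn : ∀ t, 0 ≤ f t)
    (hsupp : ∀ t ≤ (0:ℝ), f t = 0) (hint : ∫ t, f t = 1)
    {N : ℕ} (hN : 1 ≤ N) {ε β : ℝ} (hε : 0 < ε)
    (H : ∀ c ∈ Ioo (0:ℝ) 1, ∀ t ∈ Ioc (0:ℝ) ε,
      iterConv f N (c * t) ≤ c ^ β * iterConv f N t) :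
    ∀ k : ℕ, ∀ c ∈ Ioo (0:ℝ) 1, ∀ t ∈ Ioc (0:ℝ) (ε / 2 ^ k),
      iterConv f (2 ^ k * N) (c * t) ≤
        c ^ ((2:ℝ) ^ k * (β + 1) - 1) * iterConv f (2 ^ k * N) t := by
  intro k
  induction k with
  | zero => simpa using H
  | succ k ih =>
    set m : ℕ := 2 ^ k * N with hm
    have hm1 : 1 ≤ m := Nat.one_le_iff_ne_zero.2 (by positivity)
    set δ : ℝ := ε / 2 ^ k with hδdef
    have hδ : 0 < δ := by positivity
    set γ : ℝ := (2:ℝ) ^ k * (β + 1) - 1 with hγ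
    -- G level
    set G : ℝ → ℝ≥0∞ := fun y => ENNReal.ofReal (iterConv f m y) with hG
    have hrep : ∀ y, iterConv f m y = (LC f m y).toReal :=
      fun y => iterConv_toReal hf hnn hint m y
    have hGmeas : Measurable G := by
      have : Measurable (iterConv f m) := by
        have : iterConv f m = fun y => (LC f m y).toReal := funext hrep
        rw [this]; exact (LC_meas hf m).ennreal_toReal
      exact ENNReal.measurable_ofReal.comp this
    have hGsupp : ∀ y ≤ (0:ℝ), G y = 0 := by
      intro y hy
      simp [hG, hrep y, LC_supp hsupp m y hy]
    have hGH : ∀ c ∈ Ioo (0:ℝ) 1, ∀ t ∈ Ioc (0:ℝ) δ,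
        G (c * t) ≤ ENNReal.ofReal (c ^ γ) * G t := by
      intro c hc t ht
      have := ih c hc t ht
      calc G (c * t) ≤ ENNReal.ofReal (c ^ γ * iterConv f m t) :=
            ENNReal.ofReal_le_ofReal this
        _ = ENNReal.ofReal (c ^ γ) * G t :=
            ENNReal.ofReal_mul (Real.rpow_nonneg hc.1.le γ)
    -- W
    set W : ℝ → ℝ≥0∞ := fun x => ∫⁻ t, G t * G (x - t) with hW
    have hWmeas : Measurable W := by
      have : Measurable fun p : ℝ × ℝ => G p.2 * G (p.1 - p.2) :=
        (hGmeas.comp measurable_snd).mul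
          (hGmeas.comp (measurable_fst.sub measurable_snd))
      exact this.lintegral_prod_right'
    -- representation of iterConv f (2m)
    have hGae : ∀ᵐ y : ℝ, G y = LC f m y := by
      have hfin : ∀ᵐ y : ℝ, LC f m y < ∞ :=
        ae_lt_top (LC_meas hf m) (by rw [lintegral_LC hf hnn hint m hm1]; simp)
      filter_upwards [hfin] with y hy
      show ENNReal.ofReal (iterConv f m y) = LC f m y
      rw [hrep y, ENNReal.ofReal_toReal hy.ne]
    have hrep2 : ∀ x, iterConv f (2 ^ (k+1) * N) x = (W x).toReal := by
      intro x
      have h2m : 2 ^ (k+1) * N = m + m := by rw [hm]; ring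
      rw [h2m, iterConv_toReal hf hnn hint (m+m) x, LC_add hf m m hm1 hm1 x]
      congr 1
      refine lintegral_congr_ae ?_
      have hGae2 : ∀ᵐ t : ℝ, G (x - t) = LC f m (x - t) :=
        (Measure.measurePreserving_sub_left volume x).quasiMeasurePreserving.tendsto_ae.eventually hGae
      filter_upwards [hGae, hGae2] with t h1 h2
      rw [h1, h2]
    -- finiteness of W on (0, δ)
    have hWint : ∫⁻ x, W x = 1 := by
      have hprod : Measurable fun p : ℝ × ℝ => G p.2 * G (p.1 - p.2) :=
        (hGmeas.comp measurable_snd).mul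
          (hGmeas.comp (measurable_fst.sub measurable_snd))
      rw [hW]
      rw [lintegral_lintegral_swap hprod.aemeasurable]
      have hGint : ∫⁻ y, G y = 1 := by
        rw [lintegral_congr_ae hGae, lintegral_LC hf hnn hint m hm1]
      have : ∀ t : ℝ, (∫⁻ x, G t * G (x - t)) = G t := by
        intro t
        have hms : Measurable fun x : ℝ => G (x - t) :=
          hGmeas.comp (measurable_id.sub measurable_const)
        rw [lintegral_const_mul _ hms, lintegral_sub_right_eq_self G t, hGint, mul_one]
      simp_rw [this, hGint]
    have hWfin : ∀ x ∈ Ioo (0:ℝ) δ, W x < ∞ := by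
      intro x hx
      have hae : ∀ᵐ y : ℝ, W y < ∞ := ae_lt_top hWmeas (by rw [hWint]; simp)
      have hpos : volume (Ioc x δ) ≠ 0 := by
        rw [Real.volume_Ioc]
        simp only [ne_eq, ENNReal.ofReal_eq_zero, not_le]
        linarith [hx.2]
      have hex : ∃ y ∈ Ioc x δ, W y < ∞ := by
        by_contra hcon
        push_neg at hcon
        have hsub : Ioc x δ ⊆ {y | ¬ (W y < ∞)} := fun y hy =>
          not_lt.2 (hcon y hy)
        exact hpos (measure_mono_null hsub (ae_iff.1 hae))
      obtain ⟨y, hy, hyfin⟩ := hex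
      have hy0 : 0 < y := lt_trans hx.1 hy.1
      have hc' : x / y ∈ Ioo (0:ℝ) 1 :=
        ⟨div_pos hx.1 hy0, (div_lt_one hy0).2 hy.1⟩
      have hxy : x / y * y = x := div_mul_cancel₀ x (ne_of_gt hy0)
      have hd := double hGmeas hGsupp hGH (x / y) hc' y ⟨hy0, hy.2⟩
      rw [hxy] at hd
      calc W x ≤ ENNReal.ofReal ((x / y) ^ (2 * γ + 1)) * W y := hd
        _ < ∞ := ENNReal.mul_lt_top ENNReal.ofReal_lt_top hyfin
    -- conclude
    intro c hc t ht
    have hhalf : ε / 2 ^ (k + 1) = δ / 2 := by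
      rw [hδdef, pow_succ]; ring
    have htδ : t ∈ Ioc (0:ℝ) δ := ⟨ht.1, by
      have := ht.2; rw [hhalf] at this; linarith⟩
    have htδ' : t < δ := by
      have := ht.2; rw [hhalf] at this; linarith [ht.1]
    have hd := double hGmeas hGsupp hGH c hc t htδ
    have hfin : W t < ∞ := hWfin t ⟨ht.1, htδ'⟩
    have hfin2 : ENNReal.ofReal (c ^ (2 * γ + 1)) * W t ≠ ∞ :=
      (ENNReal.mul_lt_top ENNReal.ofReal_lt_top hfin).ne
    have hexp : (2:ℝ) ^ (k + 1) * (β + 1) - 1 = 2 * γ + 1 := by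
      rw [hγ, pow_succ]; ring
    rw [hrep2 (c * t), hrep2 t, hexp]
    calc (W (c * t)).toReal ≤ (ENNReal.ofReal (c ^ (2 * γ + 1)) * W t).toReal :=
          ENNReal.toReal_mono hfin2 hd
      _ = c ^ (2 * γ + 1) * (W t).toReal := by
          rw [ENNReal.toReal_mul, ENNReal.toReal_ofReal (Real.rpow_nonneg hc.1.le _)]

theorem stmt9
    (f : ℝ → ℝ) (hmeas : Measurable f) (hnn : ∀ t, 0 ≤ f t)
    (hsupp : ∀ t ≤ (0 : ℝ), f t = 0) (hint : ∫ t, f t = 1) :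
    (∃ N₁ : ℕ, 1 ≤ N₁ ∧ ∃ ε > (0 : ℝ),
        MonotoneOn (iterConv f N₁) (Ioc 0 ε)) ↔
    (∃ N₂ : ℕ, 1 ≤ N₂ ∧ ∃ ε > (0 : ℝ), ∃ β : ℝ, -1 < β ∧
        ∀ c ∈ Ioo (0 : ℝ) 1, ∀ t ∈ Ioc (0 : ℝ) ε,
          iterConv f N₂ (c * t) ≤ c ^ β * iterConv f N₂ t) := by
  constructor
  · rintro ⟨N₁, hN₁, ε, hε, hmono⟩
    refine ⟨N₁, hN₁, ε, hε, 0, by norm_num, fun c hc t ht => ?_⟩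
    have hct : c * t ∈ Ioc (0:ℝ) ε := by
      constructor
      · exact mul_pos hc.1 ht.1
      · nlinarith [ht.1, ht.2, hc.1, hc.2]
    have hle : c * t ≤ t := by
      calc c * t ≤ 1 * t := mul_le_mul_of_nonneg_right hc.2.le ht.1.le
        _ = t := one_mul t
    rw [Real.rpow_zero, one_mul]
    exact hmono hct ht hle
  · rintro ⟨N₂, hN₂, ε, hε, β, hβ, H⟩
    have hβ1 : (0:ℝ) < β + 1 := by linarith
    obtain ⟨k, hk⟩ := pow_unbounded_of_one_lt (1 / (β + 1)) (one_lt_two (α := ℝ))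
    have hγ0 : 0 ≤ (2:ℝ) ^ k * (β + 1) - 1 := by
      have := (div_lt_iff₀ hβ1).1 hk
      nlinarith
    refine ⟨2 ^ k * N₂, ?_, ε / 2 ^ k, by positivity, ?_⟩
    · exact Nat.one_le_iff_ne_zero.2 (by positivity)
    set γ : ℝ := (2:ℝ) ^ k * (β + 1) - 1 with hγ
    have hkey := key hmeas hnn hsupp hint hN₂ hε H k
    intro s hs t ht hst
    rcases eq_or_lt_of_le hst with rfl | hlt
    · exact le_refl _
    have ht0 : 0 < t := ht.1
    have hc : s / t ∈ Ioo (0:ℝ) 1 := ⟨div_pos hs.1 ht0, (div_lt_one ht0).2 hlt⟩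
    have hst' : s / t * t = s := div_mul_cancel₀ s (ne_of_gt ht0)
    have h1 := hkey (s / t) hc t ht
    rw [hst'] at h1
    have h2 : (s / t) ^ γ ≤ 1 :=
      Real.rpow_le_one hc.1.le hc.2.le hγ0
    have h3 : 0 ≤ iterConv f (2 ^ k * N₂) t := by
      rw [iterConv_toReal hmeas hnn hint]; exact ENNReal.toReal_nonneg
    calc iterConv f (2 ^ k * N₂) s ≤ (s / t) ^ γ * iterConv f (2 ^ k * N₂) t := h1
      _ ≤ 1 * iterConv f (2 ^ k * N₂) t := mul_le_mul_of_nonneg_right h2 h3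
      _ = _ := one_mul _
end

section
/- Let g be a nonnegative function on ℝ, vanishing on (−∞,0), of class C^1 on (0, ∞) and integrable on (0, ∞). Then for every n ≥ 1, the n-fold self-convolution g^{*n} is of class C^1 on (0, ∞), vanishes on (−∞,0), and for n ≥ 2, every 1 ≤ j ≤ n−1, and every x > 0: (g^{*n})'(x) = ∫_0^{x/2} g^{*j}(t) (g^{*(n−j)})'(x−t) dt + ∫_0^{x/2} g^{*(n−j)}(t) (g^{*j})'(x−t) dt + g^{*j}(x/2) g^{*(n−j)}(x/2). -/
open MeasureTheory Filter Set
open scoped Topology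

lemma ae_ne (c : ℝ) : ∀ᵐ t : ℝ, t ≠ c := by
  have hm : (volume : Measure ℝ) {c} = 0 := measure_singleton c
  rw [ae_iff]; convert hm using 2; ext t; simp

structure Nice (f : ℝ → ℝ) : Prop where
  nn : ∀ t, 0 ≤ f t
  supp : ∀ t, t < (0:ℝ) → f t = 0
  c1 : ContDiffOn ℝ 1 f (Ioi 0)
  int : IntegrableOn f (Ioi 0)

namespace Nice

variable {f h : ℝ → ℝ} {x : ℝ}

lemma contOn (hf : Nice f) : ContinuousOn f (Ioi 0) := hf.c1.continuousOn

lemma contAt (hf : Nice f) (hx : 0 < x) : ContinuousAt f x :=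
  hf.contOn.continuousAt (Ioi_mem_nhds hx)

lemma derivContOn (hf : Nice f) : ContinuousOn (deriv f) (Ioi 0) :=
  hf.c1.continuousOn_deriv_of_isOpen isOpen_Ioi le_rfl

lemma derivContAt (hf : Nice f) (hx : 0 < x) : ContinuousAt (deriv f) x :=
  hf.derivContOn.continuousAt (Ioi_mem_nhds hx)

lemma hasDerivAt (hf : Nice f) (hx : 0 < x) : HasDerivAt f (deriv f x) x :=
  ((hf.c1.differentiableOn one_ne_zero).differentiableAt (Ioi_mem_nhds hx)).hasDerivAt

lemma ae_indicator (hf : Nice f) : f =ᵐ[volume] (Ioi 0).indicator f := by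
  filter_upwards [ae_ne 0] with t ht
  rcases lt_trichotomy t 0 with h0 | h0 | h0
  · rw [hf.supp t h0, indicator_of_notMem (by simpa using h0.le)]
  · exact absurd h0 ht
  · rw [indicator_of_mem (by simpa using h0)]

lemma aesm (hf : Nice f) : AEStronglyMeasurable f volume := by
  have : AEStronglyMeasurable ((Ioi (0:ℝ)).indicator f) volume :=
    (aestronglyMeasurable_indicator_iff measurableSet_Ioi).mpr
      (hf.contOn.aestronglyMeasurable measurableSet_Ioi)
  exact this.congr hf.ae_indicator.symm

lemma integrable (hf : Nice f) : Integrable f volume := by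
  have : Integrable ((Ioi (0:ℝ)).indicator f) volume :=
    (integrable_indicator_iff measurableSet_Ioi).mpr hf.int
  exact this.congr hf.ae_indicator.symm

end Nice
section
variable {f h ψ : ℝ → ℝ} {x : ℝ}

-- bound of a continuous-on-(0,∞) function on a compact subinterval
lemma exists_bound_Icc (hψ : ContinuousOn ψ (Ioi 0)) {a b : ℝ} (ha : 0 < a) :
    ∃ C : ℝ, ∀ t ∈ Icc a b, ‖ψ t‖ ≤ C := by
  have hsub : Icc a b ⊆ Ioi 0 := fun t ht => lt_of_lt_of_le ha ht.1
  exact isCompact_Icc.exists_bound_of_continuousOn (hψ.mono hsub)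

-- the core integrability lemma
lemma integrableOn_mul_comp_sub (hnn : ∀ t, 0 ≤ f t) (hint : Integrable f volume)
    (hfm : AEStronglyMeasurable f volume)
    (hψ : ContinuousOn ψ (Ioi 0)) {c : ℝ} (hc : 0 < c) (hcx : c < x) :
    IntegrableOn (fun t => f t * ψ (x - t)) (Ioc 0 c) := by
  obtain ⟨C, hC⟩ : ∃ C : ℝ, ∀ s ∈ Icc (x - c) x, ‖ψ s‖ ≤ C :=
    exists_bound_Icc hψ (by linarith)
  have hmem : ∀ t ∈ Ioc (0:ℝ) c, x - t ∈ Icc (x - c) x := by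
    intro t ht
    exact ⟨by linarith [ht.2], by linarith [ht.1]⟩
  have hmeas : AEStronglyMeasurable (fun t => f t * ψ (x - t))
      (volume.restrict (Ioc 0 c)) := by
    refine (hfm.restrict).mul ?_
    have : ContinuousOn (fun t => ψ (x - t)) (Ioc 0 c) := by
      refine hψ.comp (by fun_prop) ?_
      intro t ht
      have := hmem t ht
      exact lt_of_lt_of_le (by linarith) this.1
    exact this.aestronglyMeasurable measurableSet_Ioc
  refine Integrable.mono' ((hint.integrableOn).const_mul C) hmeas ?_
  rw [ae_restrict_iff' measurableSet_Ioc]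
  filter_upwards with t ht
  have h1 : ‖f t * ψ (x - t)‖ = f t * ‖ψ (x - t)‖ := by
    rw [norm_mul, Real.norm_of_nonneg (hnn t)]
  rw [h1, mul_comm C (f t)]
  exact mul_le_mul_of_nonneg_left (hC _ (hmem t ht)) (hnn t)

end
section
variable {f h : ℝ → ℝ} {x c : ℝ}

lemma reflect_key (f h : ℝ → ℝ) (x c : ℝ) :
    (Ioc c x).indicator (fun t => f t * h (x - t)) =
      fun t => (Ico 0 (x - c)).indicator (fun s => h s * f (x - s)) (x - t) := by
  funext t
  by_cases ht : t ∈ Ioc c x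
  · rw [indicator_of_mem ht, indicator_of_mem (by constructor <;> [linarith [ht.2]; linarith [ht.1]])]
    simp only [sub_sub_cancel]
    ring
  · rw [indicator_of_notMem ht, indicator_of_notMem ?_]
    intro hmem
    exact ht ⟨by linarith [hmem.2], by linarith [hmem.1]⟩

lemma indicator_Ico_ae_Ioc {G : ℝ → ℝ} {d : ℝ} :
    (Ico (0:ℝ) d).indicator G =ᵐ[volume] (Ioc (0:ℝ) d).indicator G := by
  have h0 : ∀ᵐ t : ℝ, t ≠ (0:ℝ) := by
    have hm : (volume : Measure ℝ) {(0:ℝ)} = 0 := measure_singleton 0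
    rw [ae_iff]; convert hm using 2; ext t; simp
  have hd : ∀ᵐ t : ℝ, t ≠ d := by
    have hm : (volume : Measure ℝ) {d} = 0 := measure_singleton d
    rw [ae_iff]; convert hm using 2; ext t; simp
  filter_upwards [h0, hd] with t ht0 htd
  by_cases ht : t ∈ Ico (0:ℝ) d
  · rw [indicator_of_mem ht, indicator_of_mem (Set.mem_Ioc.mpr ⟨(ht.1.lt_of_ne (Ne.symm ht0)), ht.2.le⟩)]
  · rw [indicator_of_notMem ht, indicator_of_notMem ?_]
    intro hmem
    exact ht (Set.mem_Ico.mpr ⟨hmem.1.le, hmem.2.lt_of_ne htd⟩)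

lemma reflect_integrableOn
    (hG : IntegrableOn (fun s => h s * f (x - s)) (Ioc 0 (x - c))) :
    IntegrableOn (fun t => f t * h (x - t)) (Ioc c x) := by
  rw [← integrable_indicator_iff measurableSet_Ioc] at hG ⊢
  have hG' : Integrable ((Ico (0:ℝ) (x - c)).indicator (fun s => h s * f (x - s))) volume :=
    hG.congr indicator_Ico_ae_Ioc.symm
  rw [reflect_key f h x c]
  exact (integrable_comp_sub_left _ x).mpr hG'

lemma reflect_integral :
    (∫ t in Ioc c x, f t * h (x - t)) = ∫ s in Ioc 0 (x - c), h s * f (x - s) := by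
  rw [← integral_indicator measurableSet_Ioc, ← integral_indicator measurableSet_Ioc,
    reflect_key f h x c, integral_sub_left_eq_self _ volume x]
  exact integral_congr_ae indicator_Ico_ae_Ioc

end
section
variable {f h : ℝ → ℝ} {x : ℝ}

lemma integrand_ae_indicator (hf : Nice f) (hh : Nice h) (hx : 0 < x) :
    (fun t => f t * h (x - t)) =ᵐ[volume]
      (Ioc 0 x).indicator (fun t => f t * h (x - t)) := by
  filter_upwards [ae_ne 0] with t ht0
  by_cases ht : t ∈ Ioc (0:ℝ) x
  · rw [indicator_of_mem ht]
  · rw [indicator_of_notMem ht]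
    rcases lt_or_ge t 0 with h0 | h0
    · rw [hf.supp t h0, zero_mul]
    · have h0' : 0 < t := h0.lt_of_ne (Ne.symm ht0)
      have : x < t := by
        by_contra hc
        exact ht (Set.mem_Ioc.mpr ⟨h0', not_lt.mp hc⟩)
      rw [hh.supp (x - t) (by linarith), mul_zero]

lemma integrableOn_integrand_half (hf : Nice f) (hh : Nice h) {y : ℝ} {c : ℝ}
    (hc : 0 < c) (hcy : c < y) :
    IntegrableOn (fun t => f t * h (y - t)) (Ioc 0 c) :=
  integrableOn_mul_comp_sub hf.nn hf.integrable hf.aesm hh.contOn hc hcy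

lemma integrableOn_integrand_Ioc (hf : Nice f) (hh : Nice h) (hx : 0 < x) :
    IntegrableOn (fun t => f t * h (x - t)) (Ioc 0 x) := by
  have hsplit : Ioc (0:ℝ) x = Ioc 0 (x/2) ∪ Ioc (x/2) x :=
    (Ioc_union_Ioc_eq_Ioc (by linarith) (by linarith)).symm
  rw [hsplit]
  refine IntegrableOn.union ?_ ?_
  · exact integrableOn_integrand_half hf hh (by linarith) (by linarith)
  · refine reflect_integrableOn ?_
    have : x - x/2 = x/2 := by ring
    rw [this]
    exact integrableOn_integrand_half hh hf (by linarith) (by linarith)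

lemma convExistsAt (hf : Nice f) (hh : Nice h) (x : ℝ) :
    Integrable (fun t => f t * h (x - t)) volume := by
  rcases le_or_gt x 0 with hx | hx
  · have hz : (fun t => f t * h (x - t)) =ᵐ[volume] 0 := by
      filter_upwards [ae_ne 0] with t ht0
      rcases lt_or_ge t 0 with h0 | h0
      · simp [hf.supp t h0]
      · have h0' : 0 < t := h0.lt_of_ne (Ne.symm ht0)
        simp [hh.supp (x - t) (by linarith)]
    exact (integrable_zero _ _ _).congr hz.symm
  · exact ((integrable_indicator_iff measurableSet_Ioc).mpr
      (integrableOn_integrand_Ioc hf hh hx)).congr (integrand_ae_indicator hf hh hx).symm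

lemma conv_nonneg' (hf : Nice f) (hh : Nice h) (x : ℝ) : 0 ≤ conv f h x :=
  integral_nonneg fun t => mul_nonneg (hf.nn t) (hh.nn (x - t))

lemma conv_zero_of_nonpos (hf : Nice f) (hh : Nice h) (hx : x ≤ 0) : conv f h x = 0 := by
  have hz : (fun t => f t * h (x - t)) =ᵐ[volume] 0 := by
    filter_upwards [ae_ne 0] with t ht0
    rcases lt_or_ge t 0 with h0 | h0
    · simp [hf.supp t h0]
    · have h0' : 0 < t := h0.lt_of_ne (Ne.symm ht0)
      simp [hh.supp (x - t) (by linarith)]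
  rw [conv]
  rw [integral_congr_ae hz]; simp

lemma conv_eq_split (hf : Nice f) (hh : Nice h) (hx : 0 < x) :
    conv f h x = (∫ t in Ioc 0 (x/2), f t * h (x - t))
      + ∫ t in Ioc 0 (x/2), h t * f (x - t) := by
  have h1 : conv f h x = ∫ t in Ioc 0 x, f t * h (x - t) := by
    rw [conv]
    rw [integral_congr_ae (integrand_ae_indicator hf hh hx),
      integral_indicator measurableSet_Ioc]
  have hsplit : Ioc (0:ℝ) x = Ioc 0 (x/2) ∪ Ioc (x/2) x :=
    (Ioc_union_Ioc_eq_Ioc (by linarith) (by linarith)).symm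
  have hdisj : Disjoint (Ioc (0:ℝ) (x/2)) (Ioc (x/2) x) := by
    exact Set.Ioc_disjoint_Ioc_of_le le_rfl
  have h2 : (∫ t in Ioc (x/2) x, f t * h (x - t))
      = ∫ t in Ioc 0 (x/2), h t * f (x - t) := by
    have hx2 : x - x/2 = x/2 := by ring
    rw [reflect_integral, hx2]
  rw [h1, hsplit, setIntegral_union hdisj measurableSet_Ioc
      (integrableOn_integrand_half hf hh (by linarith) (by linarith))
      (reflect_integrableOn (by
        rw [show x - x/2 = x/2 by ring]
        exact integrableOn_integrand_half hh hf (by linarith) (by linarith))), h2]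
section
variable {f h ψ : ℝ → ℝ} {x : ℝ}

noncomputable def SInt (f ψ : ℝ → ℝ) (x : ℝ) : ℝ := ∫ t in Ioc 0 (x/2), f t * ψ (x - t)

lemma II (hf : Nice f) (hψ : ContinuousOn ψ (Ioi 0)) {y a b : ℝ}
    (ha : 0 ≤ a) (hb : 0 ≤ b) (hy : max a b < y) :
    IntervalIntegrable (fun t => f t * ψ (y - t)) volume a b := by
  have hd0 : 0 ≤ max a b := le_trans ha (le_max_left a b)
  rcases hd0.lt_or_eq with hd | hd
  · rw [intervalIntegrable_iff]
    refine (integrableOn_mul_comp_sub hf.nn hf.integrable hf.aesm hψ hd hy).mono_set ?_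
    show Ioc (a ⊓ b) (a ⊔ b) ⊆ _
    exact Ioc_subset_Ioc_left (le_min ha hb)
  · have ha0 : a = 0 := le_antisymm (le_trans (le_max_left a b) hd.symm.le) ha
    have hb0 : b = 0 := le_antisymm (le_trans (le_max_right a b) hd.symm.le) hb
    subst ha0; subst hb0
    exact IntervalIntegrable.refl

lemma ball_facts {y : ℝ} (hx : 0 < x) (hy : y ∈ Metric.ball x (x/8)) :
    |y - x| < x/8 ∧ 7*x/8 < y ∧ y < 9*x/8 := by
  have : |y - x| < x/8 := by simpa [Real.dist_eq] using hy
  rcases abs_lt.mp this with ⟨h1, h2⟩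
  exact ⟨this, by linarith, by linarith⟩

lemma SInt_split (hf : Nice f) (hψ : ContinuousOn ψ (Ioi 0)) (hx : 0 < x)
    {y : ℝ} (hy : y ∈ Metric.ball x (x/8)) :
    (∫ t in Ioc 0 (y/2), f t * ψ (y - t)) =
      (∫ t in Ioc 0 (x/2), f t * ψ (y - t)) + ∫ t in (x/2)..(y/2), f t * ψ (y - t) := by
  obtain ⟨hyx, hy1, hy2⟩ := ball_facts hx hy
  have hy0 : 0 < y := by linarith
  have i1 : IntervalIntegrable (fun t => f t * ψ (y - t)) volume 0 (x/2) :=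
    II hf hψ le_rfl (by linarith) (by rw [max_eq_right (by linarith)]; linarith)
  have i2 : IntervalIntegrable (fun t => f t * ψ (y - t)) volume (x/2) (y/2) :=
    II hf hψ (by linarith) (by linarith) (max_lt (by linarith) (by linarith))
  rw [← intervalIntegral.integral_of_le (by linarith : (0:ℝ) ≤ y/2),
    ← intervalIntegral.integral_add_adjacent_intervals i1 i2,
    intervalIntegral.integral_of_le (by linarith : (0:ℝ) ≤ x/2)]

lemma hasDerivAt_F1 (hf : Nice f) (hh : Nice h) (hx : 0 < x) :
    HasDerivAt (fun y => ∫ t in Ioc 0 (x/2), f t * h (y - t))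
      (∫ t in Ioc 0 (x/2), f t * deriv h (x - t)) x := by
  obtain ⟨C, hC⟩ := exists_bound_Icc hh.derivContOn (a := x/4) (b := 2*x) (by linarith)
  refine (hasDerivAt_integral_of_dominated_loc_of_deriv_le
      (μ := volume.restrict (Ioc 0 (x/2))) (F := fun y t => f t * h (y - t))
      (F' := fun y t => f t * deriv h (y - t)) (x₀ := x) (bound := fun t => C * f t)
      (s := Metric.ball x (x/8)) (Metric.ball_mem_nhds x (by positivity)) ?_ ?_ ?_ ?_ ?_ ?_).2
  · filter_upwards [Metric.ball_mem_nhds x (by positivity : (0:ℝ) < x/8)] with y hy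
    obtain ⟨hyx, hy1, hy2⟩ := ball_facts hx hy
    refine hf.aesm.restrict.mul ?_
    refine (ContinuousOn.aestronglyMeasurable ?_ measurableSet_Ioc)
    refine hh.contOn.comp (by fun_prop) ?_
    intro t ht
    simp only [mem_Ioi]
    have := ht.2
    have := ht.1
    simp only [mem_Ioc] at ht
    linarith [ht.1, ht.2]
  · exact integrableOn_integrand_half hf hh (by linarith) (by linarith)
  · refine hf.aesm.restrict.mul ?_
    refine (ContinuousOn.aestronglyMeasurable ?_ measurableSet_Ioc)
    refine hh.derivContOn.comp (by fun_prop) ?_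
    intro t ht
    simp only [mem_Ioc] at ht
    simp only [mem_Ioi]
    linarith [ht.1, ht.2]
  · rw [ae_restrict_iff' measurableSet_Ioc]
    filter_upwards with t ht
    intro y hy
    obtain ⟨hyx, hy1, hy2⟩ := ball_facts hx hy
    simp only [mem_Ioc] at ht
    have hmem : y - t ∈ Icc (x/4) (2*x) := by
      constructor <;> [linarith [ht.2]; linarith [ht.1]]
    have : ‖f t * deriv h (y - t)‖ = f t * ‖deriv h (y - t)‖ := by
      rw [norm_mul, Real.norm_of_nonneg (hf.nn t)]
    rw [this, mul_comm C (f t)]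
    exact mul_le_mul_of_nonneg_left (hC _ hmem) (hf.nn t)
  · exact (hf.integrable.integrableOn).const_mul C
  · rw [ae_restrict_iff' measurableSet_Ioc]
    filter_upwards with t ht
    intro y hy
    obtain ⟨hyx, hy1, hy2⟩ := ball_facts hx hy
    simp only [mem_Ioc] at ht
    have hpos : 0 < y - t := by linarith [ht.2]
    have hd : HasDerivAt (fun z => h (z - t)) (deriv h (y - t)) y := by
      simpa only [Function.comp_def, id, mul_one] using (hh.hasDerivAt hpos).comp y ((hasDerivAt_id y).sub_const t)
    exact hd.const_mul (f t)
end
section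
variable {f h ψ : ℝ → ℝ} {x : ℝ}

lemma hasDerivAt_F2 (hf : Nice f) (hψ : ContinuousOn ψ (Ioi 0)) (hx : 0 < x) :
    HasDerivAt (fun y => ∫ t in (x/2)..(y/2), f t * ψ (y - t))
      (f (x/2) * ψ (x/2) / 2) x := by
  rw [hasDerivAt_iff_isLittleO, Asymptotics.isLittleO_iff]
  intro c hc
  have hfc : ContinuousAt f (x/2) := hf.contAt (by linarith)
  have hψc : ContinuousAt ψ (x/2) := hψ.continuousAt (Ioi_mem_nhds (by linarith))
  have hcont : ContinuousAt (fun p : ℝ × ℝ => f p.1 * ψ (p.2 - p.1)) (x/2, x) := by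
    have h1 : ContinuousAt (fun p : ℝ × ℝ => f p.1) (x/2, x) :=
      ContinuousAt.comp (g := f) (f := Prod.fst) (x := ((x/2:ℝ), x)) hfc continuousAt_fst
    have h2 : ContinuousAt (fun p : ℝ × ℝ => ψ (p.2 - p.1)) (x/2, x) := by
      have hsub : ContinuousAt (fun p : ℝ × ℝ => p.2 - p.1) (x/2, x) := by fun_prop
      have hψc' : ContinuousAt ψ (x - x/2) := by
        rw [show x - x/2 = x/2 by ring]; exact hψc
      exact ContinuousAt.comp (g := ψ) (f := fun p : ℝ × ℝ => p.2 - p.1) (x := ((x/2:ℝ), x)) hψc' hsub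
    exact h1.mul h2
  obtain ⟨δ, hδ, hcd⟩ := Metric.continuousAt_iff.mp hcont c hc
  have hrad : (0:ℝ) < min δ (x/8) := lt_min hδ (by positivity)
  filter_upwards [Metric.ball_mem_nhds x hrad] with y hy
  have hyd : |y - x| < min δ (x/8) := by simpa [Real.dist_eq] using hy
  have hyδ : |y - x| < δ := lt_of_lt_of_le hyd (min_le_left _ _)
  have hy8 : y ∈ Metric.ball x (x/8) := by
    simp only [Metric.mem_ball, Real.dist_eq]
    exact lt_of_lt_of_le hyd (min_le_right _ _)
  obtain ⟨hyx, hy1, hy2⟩ := ball_facts hx hy8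
  have i2 : IntervalIntegrable (fun t => f t * ψ (y - t)) volume (x/2) (y/2) :=
    II hf hψ (by linarith) (by linarith) (max_lt (by linarith) (by linarith))
  set K := f (x/2) * ψ (x/2) with hK
  have hbound : ∀ t ∈ Set.uIoc (x/2) (y/2), ‖f t * ψ (y - t) - K‖ ≤ c := by
    intro t ht
    have htc : |t - x/2| ≤ |y - x| / 2 := by
      rcases Set.mem_uIoc.mp ht with ⟨h1, h2⟩ | ⟨h1, h2⟩ <;>
        exact abs_le.mpr ⟨by linarith [neg_abs_le (y - x), le_abs_self (y - x)],
          by linarith [le_abs_self (y - x), neg_abs_le (y - x)]⟩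
    have hd : dist (t, y) ((x/2 : ℝ), x) < δ := by
      rw [Prod.dist_eq]
      simp only [Real.dist_eq]
      exact max_lt (lt_of_le_of_lt htc (by linarith)) hyδ
    have := hcd hd
    rw [Real.dist_eq] at this
    have hx2 : x - x/2 = x/2 := by ring
    rw [hx2] at this
    exact (le_of_lt this)
  have heq : (∫ t in (x/2)..(y/2), f t * ψ (y - t)) -
      (∫ t in (x/2)..(x/2), f t * ψ (x - t)) - (y - x) • (K / 2)
      = ∫ t in (x/2)..(y/2), (f t * ψ (y - t) - K) := by
    rw [intervalIntegral.integral_same, intervalIntegral.integral_sub i2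
      intervalIntegrable_const, intervalIntegral.integral_const]
    simp only [smul_eq_mul, sub_zero]
    ring
  rw [heq]
  calc ‖∫ t in (x/2)..(y/2), (f t * ψ (y - t) - K)‖
      ≤ c * |y/2 - x/2| := intervalIntegral.norm_integral_le_of_norm_le_const hbound
    _ ≤ c * ‖y - x‖ := by
        rw [Real.norm_eq_abs]
        refine mul_le_mul_of_nonneg_left ?_ hc.le
        rw [show y/2 - x/2 = (y-x)/2 by ring, abs_div]
        simp only [abs_two]
        linarith [abs_nonneg (y - x)]

lemma contAt_G1 (hf : Nice f) (hψ : ContinuousOn ψ (Ioi 0)) (hx : 0 < x) :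
    ContinuousAt (fun y => ∫ t in Ioc 0 (x/2), f t * ψ (y - t)) x := by
  obtain ⟨C, hC⟩ := exists_bound_Icc hψ (a := x/4) (b := 2*x) (by linarith)
  refine continuousAt_of_dominated (bound := fun t => C * f t) ?_ ?_ ?_ ?_
  · filter_upwards [Metric.ball_mem_nhds x (by positivity : (0:ℝ) < x/8)] with y hy
    obtain ⟨hyx, hy1, hy2⟩ := ball_facts hx hy
    refine hf.aesm.restrict.mul ?_
    refine (ContinuousOn.aestronglyMeasurable ?_ measurableSet_Ioc)
    refine hψ.comp (by fun_prop) ?_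
    intro t ht
    simp only [mem_Ioc] at ht
    simp only [mem_Ioi]
    linarith [ht.1, ht.2]
  · filter_upwards [Metric.ball_mem_nhds x (by positivity : (0:ℝ) < x/8)] with y hy
    obtain ⟨hyx, hy1, hy2⟩ := ball_facts hx hy
    rw [ae_restrict_iff' measurableSet_Ioc]
    filter_upwards with t ht
    simp only [mem_Ioc] at ht
    have hmem : y - t ∈ Icc (x/4) (2*x) := by
      constructor <;> [linarith [ht.2]; linarith [ht.1]]
    have : ‖f t * ψ (y - t)‖ = f t * ‖ψ (y - t)‖ := by
      rw [norm_mul, Real.norm_of_nonneg (hf.nn t)]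
    rw [this, mul_comm C (f t)]
    exact mul_le_mul_of_nonneg_left (hC _ hmem) (hf.nn t)
  · exact (hf.integrable.integrableOn).const_mul C
  · rw [ae_restrict_iff' measurableSet_Ioc]
    filter_upwards with t ht
    simp only [mem_Ioc] at ht
    have hpos : 0 < x - t := by linarith [ht.2]
    have h1 : ContinuousAt (fun y : ℝ => ψ (y - t)) x :=
      ContinuousAt.comp (g := ψ) (f := fun y : ℝ => y - t) (x := x)
        (hψ.continuousAt (Ioi_mem_nhds hpos)) (by fun_prop)
    exact continuousAt_const.mul h1

end
section
variable {f h ψ : ℝ → ℝ} {x : ℝ}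

lemma contAt_SInt (hf : Nice f) (hψ : ContinuousOn ψ (Ioi 0)) (hx : 0 < x) :
    ContinuousAt (SInt f ψ) x := by
  have h12 : ContinuousAt (fun y => (∫ t in Ioc 0 (x/2), f t * ψ (y - t))
      + ∫ t in (x/2)..(y/2), f t * ψ (y - t)) x :=
    (contAt_G1 hf hψ hx).add (hasDerivAt_F2 hf hψ hx).continuousAt
  refine h12.congr ?_
  filter_upwards [Metric.ball_mem_nhds x (by positivity : (0:ℝ) < x/8)] with y hy
  exact (SInt_split hf hψ hx hy).symm

lemma hasDerivAt_SInt (hf : Nice f) (hh : Nice h) (hx : 0 < x) :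
    HasDerivAt (SInt f h) (SInt f (deriv h) x + f (x/2) * h (x/2) / 2) x := by
  have h12 := (hasDerivAt_F1 hf hh hx).add (hasDerivAt_F2 hf hh.contOn hx)
  refine HasDerivAt.congr_of_eventuallyEq h12 ?_
  filter_upwards [Metric.ball_mem_nhds x (by positivity : (0:ℝ) < x/8)] with y hy
  exact SInt_split hf hh.contOn hx hy

lemma hasDerivAt_conv (hf : Nice f) (hh : Nice h) (hx : 0 < x) :
    HasDerivAt (conv f h)
      (SInt f (deriv h) x + SInt h (deriv f) x + f (x/2) * h (x/2)) x := by
  have h1 := (hasDerivAt_SInt hf hh hx).add (hasDerivAt_SInt hh hf hx)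
  have h2 : HasDerivAt (fun y => SInt f h y + SInt h f y)
      (SInt f (deriv h) x + f (x/2) * h (x/2) / 2
        + (SInt h (deriv f) x + h (x/2) * f (x/2) / 2)) x := h1
  have heq : conv f h =ᶠ[𝓝 x] fun y => SInt f h y + SInt h f y := by
    filter_upwards [Ioi_mem_nhds hx] with y hy
    exact conv_eq_split hf hh hy
  have h3 := HasDerivAt.congr_of_eventuallyEq h2 heq
  exact h3.congr_deriv (by ring)

lemma deriv_conv (hf : Nice f) (hh : Nice h) (hx : 0 < x) :
    deriv (conv f h) x = SInt f (deriv h) x + SInt h (deriv f) x + f (x/2) * h (x/2) :=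
  (hasDerivAt_conv hf hh hx).deriv

lemma contDiffOn_conv (hf : Nice f) (hh : Nice h) : ContDiffOn ℝ 1 (conv f h) (Ioi 0) := by
  rw [show (1 : WithTop ℕ∞) = 0 + 1 from (zero_add 1).symm,
    contDiffOn_succ_iff_deriv_of_isOpen isOpen_Ioi]
  refine ⟨fun y hy => ((hasDerivAt_conv hf hh hy).differentiableAt).differentiableWithinAt,
    by simp, ?_⟩
  rw [contDiffOn_zero]
  refine ContinuousOn.congr
    (f := fun y => SInt f (deriv h) y + SInt h (deriv f) y + f (y/2) * h (y/2)) ?_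
    (fun y hy => deriv_conv hf hh hy)
  intro y hy
  have hy : (0:ℝ) < y := hy
  refine ContinuousAt.continuousWithinAt ?_
  have c3 : ContinuousAt (fun z : ℝ => f (z/2) * h (z/2)) y := by
    have hhalf : ContinuousAt (fun z : ℝ => z/2) y := by fun_prop
    have cf : ContinuousAt (fun z : ℝ => f (z/2)) y :=
      ContinuousAt.comp (g := f) (f := fun z : ℝ => z/2) (x := y)
        (hf.contAt (by positivity)) hhalf
    have ch : ContinuousAt (fun z : ℝ => h (z/2)) y :=
      ContinuousAt.comp (g := h) (f := fun z : ℝ => z/2) (x := y)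
        (hh.contAt (by positivity)) hhalf
    exact cf.mul ch
  exact ((contAt_SInt hf hh.derivContOn hy).add (contAt_SInt hh hf.derivContOn hy)).add c3

lemma conv_eq_convolution (f h : ℝ → ℝ) :
    conv f h = MeasureTheory.convolution f h (ContinuousLinearMap.mul ℝ ℝ) volume := rfl

lemma integrableOn_conv (hf : Nice f) (hh : Nice h) : IntegrableOn (conv f h) (Ioi 0) := by
  have hf' : Integrable ((Ioi (0:ℝ)).indicator f) volume :=
    (integrable_indicator_iff measurableSet_Ioi).mpr hf.int
  have hh' : Integrable ((Ioi (0:ℝ)).indicator h) volume :=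
    (integrable_indicator_iff measurableSet_Ioi).mpr hh.int
  have hcong : conv f h = MeasureTheory.convolution ((Ioi (0:ℝ)).indicator f)
      ((Ioi (0:ℝ)).indicator h) (ContinuousLinearMap.mul ℝ ℝ) volume := by
    rw [conv_eq_convolution]
    exact convolution_congr (L := ContinuousLinearMap.mul ℝ ℝ) hf.ae_indicator hh.ae_indicator
  rw [hcong]
  exact (hf'.integrable_convolution _ hh').integrableOn

lemma nice_conv (hf : Nice f) (hh : Nice h) : Nice (conv f h) :=
  ⟨conv_nonneg' hf hh, fun t ht => conv_zero_of_nonpos hf hh ht.le,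
    contDiffOn_conv hf hh, integrableOn_conv hf hh⟩

end
section
variable {f p q g : ℝ → ℝ} {x : ℝ}

lemma convExistsAt' (hf : Nice f) (hh : Nice p) (y : ℝ) :
    ConvolutionExistsAt f p y (ContinuousLinearMap.mul ℝ ℝ) volume := by
  have := convExistsAt hf hh y
  simpa [ConvolutionExistsAt] using this

lemma conv_assoc (hf : Nice f) (hp : Nice p) (hq : Nice q) (hpq : Nice (conv p q)) :
    conv (conv f p) q = conv f (conv p q) := by
  funext x₀
  have e1 : (fun t => ‖p t‖) = p := funext fun t => Real.norm_of_nonneg (hp.nn t)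
  have e2 : (fun t => ‖q t‖) = q := funext fun t => Real.norm_of_nonneg (hq.nn t)
  have e3 : (fun t => ‖f t‖) = f := funext fun t => Real.norm_of_nonneg (hf.nn t)
  rw [conv_eq_convolution, conv_eq_convolution, conv_eq_convolution, conv_eq_convolution]
  refine convolution_assoc (ContinuousLinearMap.mul ℝ ℝ) (ContinuousLinearMap.mul ℝ ℝ)
    (ContinuousLinearMap.mul ℝ ℝ) (ContinuousLinearMap.mul ℝ ℝ)
    (fun a b c => mul_assoc a b c) hf.aesm hp.aesm hq.aesm ?_ ?_ ?_
  · exact Eventually.of_forall (fun y => convExistsAt' hf hp y)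
  · refine Eventually.of_forall (fun y => ?_)
    rw [e1, e2]
    exact convExistsAt' hp hq y
  · rw [e3, e1, e2]
    show ConvolutionExistsAt f
      (MeasureTheory.convolution p q (ContinuousLinearMap.mul ℝ ℝ) volume) x₀ _ volume
    rw [← conv_eq_convolution]
    exact convExistsAt' hf hpq x₀

lemma iterConv_one : iterConv g 1 = g := rfl

lemma iterConv_succ {n : ℕ} (hn : 1 ≤ n) : iterConv g (n + 1) = conv g (iterConv g n) := by
  match n, hn with
  | (m + 1), _ => rfl

lemma nice_iterConv (hg : Nice g) : ∀ n, 1 ≤ n → Nice (iterConv g n) := by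
  intro n hn
  induction n, hn using Nat.le_induction with
  | base => exact hg
  | succ n hn ih =>
    rw [iterConv_succ hn]
    exact nice_conv hg ih

lemma iterConv_add (hg : Nice g) :
    ∀ a, 1 ≤ a → ∀ b, 1 ≤ b → iterConv g (a + b) = conv (iterConv g a) (iterConv g b) := by
  intro a ha
  induction a, ha using Nat.le_induction with
  | base =>
    intro b hb
    rw [iterConv_one, show 1 + b = b + 1 by ring, iterConv_succ hb]
  | succ a ha ih =>
    intro b hb
    have hab : 1 ≤ a + b := le_trans ha (Nat.le_add_right a b)
    have h1 : iterConv g (a + 1 + b) = conv g (iterConv g (a + b)) := by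
      rw [show a + 1 + b = (a + b) + 1 by ring, iterConv_succ hab]
    rw [h1, ih b hb, ← conv_assoc hg (nice_iterConv hg a ha) (nice_iterConv hg b hb)
        (by rw [← ih b hb]; exact nice_iterConv hg (a + b) hab),
      ← iterConv_succ ha]

theorem stmt10
    (g : ℝ → ℝ) (hnn : ∀ t, 0 ≤ g t) (hsupp : ∀ t < (0 : ℝ), g t = 0)
    (hC1 : ContDiffOn ℝ 1 g (Ioi 0)) (hint : IntegrableOn g (Ioi 0)) :
    (∀ n : ℕ, 1 ≤ n →
      ContDiffOn ℝ 1 (iterConv g n) (Ioi 0) ∧ ∀ t < (0 : ℝ), iterConv g n t = 0) ∧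
    ∀ n : ℕ, 2 ≤ n → ∀ j : ℕ, 1 ≤ j → j ≤ n - 1 → ∀ x : ℝ, 0 < x →
      deriv (iterConv g n) x =
        (∫ t in Ioc (0 : ℝ) (x / 2),
            iterConv g j t * deriv (iterConv g (n - j)) (x - t))
        + (∫ t in Ioc (0 : ℝ) (x / 2),
            iterConv g (n - j) t * deriv (iterConv g j) (x - t))
        + iterConv g j (x / 2) * iterConv g (n - j) (x / 2) := by
  have hg : Nice g := ⟨hnn, fun t ht => hsupp t ht, hC1, hint⟩
  constructor
  · intro n hn
    exact ⟨(nice_iterConv hg n hn).c1, fun t ht => (nice_iterConv hg n hn).supp t ht⟩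
  · intro n hn j hj hjn x hx
    have hk : 1 ≤ n - j := by omega
    have hjk : j + (n - j) = n := by omega
    have hA := nice_iterConv hg j hj
    have hB := nice_iterConv hg (n - j) hk
    have hiter : iterConv g n = conv (iterConv g j) (iterConv g (n - j)) := by
      have key := iterConv_add hg j hj (n - j) hk
      rwa [hjk] at key
    rw [hiter, deriv_conv hA hB hx]
    rfl
end
end
end

section
/- Let (X_n) be i.i.d. nonnegative random variables, x > 0, and suppose there exists K ∈ ℕ* such that the density of S_K is non-decreasing on [0, x]. Then for all n ≥ K and all y ∈ [0, x]: P[S_n ≤ x − y]/P[S_n ≤ x] ≤ ((x − y)/x)^{n/K − 1}. -/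
open MeasureTheory ProbabilityTheory Filter Set
open scoped ENNReal Topology

/-- Convolution of two measures on ℝ. -/
noncomputable def MyConv (μ ν : Measure ℝ) : Measure ℝ :=
  Measure.map (fun p : ℝ × ℝ => p.1 + p.2) (μ.prod ν)

/-- The key scaling property: the measure of `Iic (l*s)` is at most `l^m` times the
measure of `Iic s`, for `l ∈ [0,1]` and `s ∈ [0,x]`; together with vanishing on negatives. -/
def Nice_s14 (μ : Measure ℝ) (x : ℝ) (m : ℕ) : Prop :=
  μ (Set.Iio 0) = 0 ∧
    ∀ l ∈ Set.Icc (0:ℝ) 1, ∀ s ∈ Set.Icc 0 x,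
      μ (Set.Iic (l * s)) ≤ ENNReal.ofReal l ^ m * μ (Set.Iic s)

lemma nice_iic_neg {μ : Measure ℝ} {x : ℝ} {m : ℕ} (h : Nice_s14 μ x m) {t : ℝ} (ht : t < 0) :
    μ (Set.Iic t) = 0 :=
  le_antisymm (le_trans (measure_mono fun u hu => lt_of_le_of_lt hu ht) h.1.le) (zero_le)

lemma nice_zero {μ : Measure ℝ} (h : μ (Set.Iio 0) = 0) (x : ℝ) : Nice_s14 μ x 0 := by
  refine ⟨h, fun l hl s hs => ?_⟩
  rw [pow_zero, one_mul]
  exact measure_mono (Iic_subset_Iic.2 (mul_le_of_le_one_left hs.1 hl.2))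

lemma nice_one {f : ℝ → ℝ} (hf : Measurable f) {x : ℝ} (hx : 0 ≤ x)
    (hmono : MonotoneOn f (Set.Icc 0 x))
    {μ : Measure ℝ} (hμ : μ = (volume : Measure ℝ).withDensity fun t => ENNReal.ofReal (f t))
    (h0 : μ (Set.Iio 0) = 0) : Nice_s14 μ x 1 := by
  have hIic0 : μ (Set.Iic 0) = 0 := by
    have hsing : μ {(0:ℝ)} = 0 := by
      rw [hμ, withDensity_apply _ (measurableSet_singleton 0)]
      rw [Measure.restrict_eq_zero.2 (by simp)]
      simp
    have : μ (Set.Iic 0) ≤ μ (Set.Iio 0) + μ {(0:ℝ)} := by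
      rw [← Set.Iio_union_right]
      exact measure_union_le _ _
    rw [h0, hsing, add_zero] at this
    exact le_antisymm this (zero_le)
  have key : ∀ t : ℝ, 0 ≤ t → μ (Set.Iic t) = ∫⁻ u in Set.Ioc 0 t, ENNReal.ofReal (f u) := by
    intro t ht
    have hU : Set.Iic t = Set.Iic 0 ∪ Set.Ioc 0 t := (Set.Iic_union_Ioc_eq_Iic ht).symm
    have hd : Disjoint (Set.Iic (0:ℝ)) (Set.Ioc 0 t) := by
      rw [Set.disjoint_left]
      rintro u (hu : u ≤ 0) ⟨h1, _⟩; linarith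
    rw [hU, measure_union hd measurableSet_Ioc, hIic0, zero_add, hμ,
      withDensity_apply _ measurableSet_Ioc]
  refine ⟨h0, fun l hl s hs => ?_⟩
  by_cases hls : l * s = 0
  · rw [hls, hIic0]; exact zero_le
  have hl0 : 0 < l := lt_of_le_of_ne hl.1 (fun h => hls (by rw [← h, zero_mul]))
  have hs0 : 0 < s := lt_of_le_of_ne hs.1 (fun h => hls (by rw [← h, mul_zero]))
  have ha0 : 0 < l * s := mul_pos hl0 hs0
  have has : l * s ≤ s := mul_le_of_le_one_left hs.1 hl.2
  have hax : l * s ≤ x := has.trans hs.2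
  rw [key _ ha0.le, key _ hs.1, pow_one]
  set a := l * s with hadef
  set c := ENNReal.ofReal (f a) with hcdef
  set A := ∫⁻ u in Set.Ioc 0 a, ENNReal.ofReal (f u) with hAdef
  set B := ∫⁻ u in Set.Ioc a s, ENNReal.ofReal (f u) with hBdef
  have hA : A ≤ c * ENNReal.ofReal a := by
    calc A ≤ ∫⁻ _ in Set.Ioc 0 a, c := by
            refine setLIntegral_mono measurable_const fun u hu => ?_
            exact ENNReal.ofReal_le_ofReal
              (hmono ⟨hu.1.le, hu.2.trans hax⟩ ⟨ha0.le, hax⟩ hu.2)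
      _ = c * ENNReal.ofReal a := by
            rw [setLIntegral_const, Real.volume_Ioc, sub_zero]
  have hB : c * ENNReal.ofReal (s - a) ≤ B := by
    calc c * ENNReal.ofReal (s - a) = ∫⁻ _ in Set.Ioc a s, c := by
            rw [setLIntegral_const, Real.volume_Ioc]
      _ ≤ B := by
            refine setLIntegral_mono (hf.ennreal_ofReal) fun u hu => ?_
            exact ENNReal.ofReal_le_ofReal
              (hmono ⟨ha0.le, hax⟩ ⟨(ha0.trans hu.1).le, hu.2.trans hs.2⟩ hu.1.le)
  have hsplit : ∫⁻ u in Set.Ioc 0 s, ENNReal.ofReal (f u) = A + B := by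
    rw [hAdef, hBdef, ← lintegral_union measurableSet_Ioc
      (Set.Ioc_disjoint_Ioc_of_le le_rfl), Set.Ioc_union_Ioc_eq_Ioc ha0.le has]
  rw [hsplit]
  have hAfin : A ≠ ⊤ := (hA.trans_lt (by finiteness)).ne
  have h1 : ENNReal.ofReal (1 - l) * A ≤ ENNReal.ofReal l * B := by
    have harith : (1 - l) * a = l * (s - a) := by rw [hadef]; ring
    calc ENNReal.ofReal (1 - l) * A ≤ ENNReal.ofReal (1 - l) * (c * ENNReal.ofReal a) :=
          mul_le_mul_right hA _
      _ = c * (ENNReal.ofReal (1 - l) * ENNReal.ofReal a) := by ring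
      _ = c * ENNReal.ofReal ((1 - l) * a) := by
          rw [← ENNReal.ofReal_mul (by linarith [hl.2])]
      _ = c * ENNReal.ofReal (l * (s - a)) := by rw [harith]
      _ = ENNReal.ofReal l * (c * ENNReal.ofReal (s - a)) := by
          rw [ENNReal.ofReal_mul hl0.le]; ring
      _ ≤ ENNReal.ofReal l * B := mul_le_mul_right hB _
  calc A = (ENNReal.ofReal l + ENNReal.ofReal (1 - l)) * A := by
        rw [← ENNReal.ofReal_add hl0.le (by linarith [hl.2])]
        norm_num
    _ = ENNReal.ofReal l * A + ENNReal.ofReal (1 - l) * A := by rw [add_mul]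
    _ ≤ ENNReal.ofReal l * A + ENNReal.ofReal l * B := add_le_add_right h1 _
    _ = ENNReal.ofReal l * (A + B) := (mul_add _ _ _).symm

lemma myconv_iic (μ ν : Measure ℝ) [SFinite μ] [SFinite ν] (t : ℝ) :
    MyConv μ ν (Set.Iic t) = ∫⁻ u, ν (Set.Iic (t - u)) ∂μ := by
  rw [MyConv, Measure.map_apply (by fun_prop : Measurable fun p : ℝ × ℝ => p.1 + p.2) measurableSet_Iic,
    Measure.prod_apply ((by fun_prop : Measurable fun p : ℝ × ℝ => p.1 + p.2) measurableSet_Iic)]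
  refine lintegral_congr fun u => ?_
  congr 1
  ext w
  simp [Set.mem_Iic, le_sub_iff_add_le, add_comm]

lemma myconv_iic' (μ ν : Measure ℝ) [SFinite μ] [SFinite ν] (t : ℝ) :
    MyConv μ ν (Set.Iic t) = ∫⁻ w, μ (Set.Iic (t - w)) ∂ν := by
  rw [MyConv, Measure.map_apply (by fun_prop : Measurable fun p : ℝ × ℝ => p.1 + p.2) measurableSet_Iic,
    Measure.prod_apply_symm ((by fun_prop : Measurable fun p : ℝ × ℝ => p.1 + p.2) measurableSet_Iic)]
  refine lintegral_congr fun w => ?_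
  congr 1
  ext u
  simp [Set.mem_Iic, le_sub_iff_add_le]

lemma nice_conv_s14 {μ ν : Measure ℝ} [IsFiniteMeasure μ] [IsFiniteMeasure ν] {x : ℝ} (hx : 0 ≤ x)
    {a b : ℕ} (ha : 1 ≤ a) (hμ : Nice_s14 μ x a) (hν : Nice_s14 ν x b) :
    Nice_s14 (MyConv μ ν) x (a + b) := by
  have hμ0 : μ (Set.Iic 0) = 0 := by
    have h := hμ.2 0 ⟨le_rfl, zero_le_one⟩ x ⟨hx, le_rfl⟩
    rw [zero_mul, ENNReal.ofReal_zero, zero_pow (by omega), zero_mul] at h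
    exact le_antisymm h (zero_le)
  have hzero : ∀ t : ℝ, t ≤ 0 → MyConv μ ν (Set.Iic t) = 0 := by
    intro t ht
    rw [myconv_iic]
    have hae : ∀ᵐ u ∂μ, u ∉ Set.Iic 0 := measure_eq_zero_iff_ae_notMem.1 hμ0
    have : ∀ᵐ u ∂μ, ν (Set.Iic (t - u)) = 0 := by
      filter_upwards [hae] with u hu
      have hu0 : 0 < u := not_le.1 hu
      exact nice_iic_neg hν (by linarith)
    calc ∫⁻ u, ν (Set.Iic (t - u)) ∂μ = ∫⁻ _, 0 ∂μ := lintegral_congr_ae this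
      _ = 0 := lintegral_zero
  refine ⟨le_antisymm (le_trans (measure_mono Set.Iio_subset_Iic_self)
    (hzero 0 le_rfl).le) (zero_le), ?_⟩
  intro l hl s hs
  by_cases hls : l * s = 0
  · rw [hls, hzero 0 le_rfl]; exact zero_le
  rcases mul_ne_zero_iff.1 hls with ⟨hlne, hsne⟩
  have hl0 : 0 < l := lt_of_le_of_ne hl.1 (Ne.symm hlne)
  have hs0 : 0 < s := lt_of_le_of_ne hs.1 (Ne.symm hsne)
  have haeμ : ∀ᵐ u ∂μ, u ∉ Set.Iio 0 := measure_eq_zero_iff_ae_notMem.1 hμ.1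
  have haeν : ∀ᵐ w ∂ν, w ∉ Set.Iio 0 := measure_eq_zero_iff_ae_notMem.1 hν.1
  have step1 : MyConv μ ν (Set.Iic (l * s)) ≤
      ENNReal.ofReal l ^ b * ∫⁻ u, ν (Set.Iic (s - u / l)) ∂μ := by
    rw [myconv_iic, ← lintegral_const_mul' _ _ (ENNReal.pow_ne_top ENNReal.ofReal_ne_top)]
    refine lintegral_mono_ae ?_
    filter_upwards [haeμ] with u hu
    have hu0 : 0 ≤ u := not_lt.1 hu
    by_cases hule : u ≤ l * s
    · have heq : l * s - u = l * (s - u / l) := by field_simp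
      have hmem : s - u / l ∈ Set.Icc 0 x := by
        constructor
        · rw [sub_nonneg, div_le_iff₀ hl0, mul_comm]
          exact hule
        · have : 0 ≤ u / l := div_nonneg hu0 hl0.le
          linarith [hs.2]
      rw [heq]
      exact hν.2 l hl _ hmem
    · rw [nice_iic_neg hν (by linarith : l * s - u < 0)]
      exact zero_le
  have step2 : ∫⁻ u, ν (Set.Iic (s - u / l)) ∂μ = ∫⁻ w, μ (Set.Iic (l * (s - w))) ∂ν := by
    have hset : MeasurableSet {p : ℝ × ℝ | p.2 ≤ s - p.1 / l} :=
      measurableSet_le measurable_snd (measurable_const.sub (measurable_fst.div_const l))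
    have h1 : ∫⁻ u, ν (Set.Iic (s - u / l)) ∂μ = (μ.prod ν) {p : ℝ × ℝ | p.2 ≤ s - p.1 / l} := by
      rw [Measure.prod_apply hset]
      rfl
    have h2 : (μ.prod ν) {p : ℝ × ℝ | p.2 ≤ s - p.1 / l}
        = ∫⁻ w, μ (Set.Iic (l * (s - w))) ∂ν := by
      rw [Measure.prod_apply_symm hset]
      refine lintegral_congr fun w => ?_
      congr 1
      ext u
      simp only [Set.mem_preimage, Set.mem_setOf_eq, Set.mem_Iic]
      rw [le_sub_comm, div_le_iff₀ hl0, mul_comm]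
    rw [h1, h2]
  have step3 : ∫⁻ w, μ (Set.Iic (l * (s - w))) ∂ν ≤
      ENNReal.ofReal l ^ a * ∫⁻ w, μ (Set.Iic (s - w)) ∂ν := by
    rw [← lintegral_const_mul' _ _ (ENNReal.pow_ne_top ENNReal.ofReal_ne_top)]
    refine lintegral_mono_ae ?_
    filter_upwards [haeν] with w hw
    have hw0 : 0 ≤ w := not_lt.1 hw
    by_cases hws : w ≤ s
    · exact hμ.2 l hl (s - w) ⟨by linarith, by linarith [hs.2]⟩
    · rw [nice_iic_neg hμ (by nlinarith : l * (s - w) < 0)]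
      exact zero_le
  calc MyConv μ ν (Set.Iic (l * s)) ≤
        ENNReal.ofReal l ^ b * ∫⁻ u, ν (Set.Iic (s - u / l)) ∂μ := step1
    _ = ENNReal.ofReal l ^ b * ∫⁻ w, μ (Set.Iic (l * (s - w))) ∂ν := by rw [step2]
    _ ≤ ENNReal.ofReal l ^ b * (ENNReal.ofReal l ^ a * ∫⁻ w, μ (Set.Iic (s - w)) ∂ν) :=
        mul_le_mul_right step3 _
    _ = ENNReal.ofReal l ^ (a + b) * MyConv μ ν (Set.Iic s) := by
        rw [myconv_iic' μ ν s, pow_add]; ring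

theorem stmt14
    {Ω : Type*} [MeasurableSpace Ω] (P : Measure Ω) [IsProbabilityMeasure P]
    (X : ℕ → Ω → ℝ)
    (hmeas : ∀ i, Measurable (X i))
    (hindep : iIndepFun X P)
    (hident : ∀ i, IdentDistrib (X i) (X 0) P P)
    (hnonneg : ∀ i ω, 0 ≤ X i ω)
    (x : ℝ) (hx : 0 < x)
    (K : ℕ) (hK : 1 ≤ K)
    (fK : ℝ → ℝ) (hmeasfK : Measurable fK)
    (hdens : Measure.map (fun ω => ∑ i ∈ Finset.range K, X i ω) P =
      (volume : Measure ℝ).withDensity (fun t => ENNReal.ofReal (fK t)))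
    (hmono : MonotoneOn fK (Icc 0 x)) :
    ∀ n : ℕ, K ≤ n → ∀ y ∈ Icc (0 : ℝ) x,
      (P {ω | ∑ i ∈ Finset.range n, X i ω ≤ x - y}).toReal ≤
        ((x - y) / x) ^ ((n : ℝ) / (K : ℝ) - 1)
          * (P {ω | ∑ i ∈ Finset.range n, X i ω ≤ x}).toReal := by
  -- measurability of partial sums
  have hSmeas : ∀ s : Finset ℕ, Measurable fun ω => ∑ i ∈ s, X i ω :=
    fun s => Finset.measurable_sum s fun i _ => hmeas i
  -- probability instances for mapped measures
  have hprob : ∀ s : Finset ℕ,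
      IsProbabilityMeasure (Measure.map (fun ω => ∑ i ∈ s, X i ω) P) :=
    fun s => Measure.isProbabilityMeasure_map (hSmeas s).aemeasurable
  -- laws of nonnegative random variables vanish on negatives
  have hlawIio : ∀ j : ℕ, Measure.map (fun ω => ∑ i ∈ Finset.range j, X i ω) P (Set.Iio 0) = 0 := by
    intro j
    rw [Measure.map_apply (hSmeas _) measurableSet_Iio]
    have : (fun ω => ∑ i ∈ Finset.range j, X i ω) ⁻¹' (Set.Iio 0) = ∅ := by
      ext ω
      simp only [Set.mem_preimage, Set.mem_Iio, Set.mem_empty_iff_false, iff_false, not_lt]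
      exact Finset.sum_nonneg fun i _ => hnonneg i ω
    rw [this, measure_empty]
  -- independence of sums over disjoint index sets
  have hsum_indep : ∀ s t : Finset ℕ, Disjoint s t →
      IndepFun (fun ω => ∑ i ∈ s, X i ω) (fun ω => ∑ i ∈ t, X i ω) P := by
    intro s t hst
    have h := hindep.indepFun_finset s t hst hmeas
    have hms : Measurable fun p : s → ℝ => ∑ i, p i :=
      Finset.measurable_sum Finset.univ fun i _ => measurable_pi_apply i
    have hmt : Measurable fun p : t → ℝ => ∑ i, p i :=
      Finset.measurable_sum Finset.univ fun i _ => measurable_pi_apply i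
    have h2 := h.comp hms hmt
    have e1 : ((fun p : s → ℝ => ∑ i, p i) ∘ fun ω (i : s) => X i ω)
        = fun ω => ∑ i ∈ s, X i ω := by
      funext ω
      exact Finset.sum_coe_sort s (fun i => X i ω)
    have e2 : ((fun p : t → ℝ => ∑ i, p i) ∘ fun ω (i : t) => X i ω)
        = fun ω => ∑ i ∈ t, X i ω := by
      funext ω
      exact Finset.sum_coe_sort t (fun i => X i ω)
    rwa [e1, e2] at h2
  -- law of an independent sum is the convolution of the laws
  have hconvlaw : ∀ T W : Ω → ℝ, Measurable T → Measurable W → IndepFun T W P →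
      Measure.map (fun ω => T ω + W ω) P = MyConv (Measure.map T P) (Measure.map W P) := by
    intro T W hT hW hTW
    have hmapprod := (indepFun_iff_map_prod_eq_prod_map_map hT.aemeasurable hW.aemeasurable).1 hTW
    rw [MyConv, ← hmapprod, Measure.map_map (by fun_prop : Measurable fun p : ℝ × ℝ => p.1 + p.2) (hT.prodMk hW)]
    rfl
  -- shifted blocks have the same law as initial blocks
  have hblock : ∀ k j : ℕ, Measure.map (fun ω => ∑ i ∈ Finset.Ico k (k + j), X i ω) P
      = Measure.map (fun ω => ∑ i ∈ Finset.range j, X i ω) P := by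
    intro k j
    induction j with
    | zero => simp
    | succ j ih =>
      have h1 : (fun ω => ∑ i ∈ Finset.Ico k (k + (j + 1)), X i ω)
          = fun ω => (∑ i ∈ Finset.Ico k (k + j), X i ω) + X (k + j) ω := by
        funext ω
        rw [show k + (j + 1) = (k + j) + 1 by ring,
          Finset.sum_Ico_succ_top (Nat.le_add_right k j)]
      have h2 : (fun ω => ∑ i ∈ Finset.range (j + 1), X i ω)
          = fun ω => (∑ i ∈ Finset.range j, X i ω) + X j ω := by
        funext ω
        rw [Finset.sum_range_succ]
      have hsingle : ∀ i : ℕ, (fun ω => ∑ m ∈ ({i} : Finset ℕ), X m ω) = X i := by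
        intro i; funext ω; simp
      have hi1 : IndepFun (fun ω => ∑ i ∈ Finset.Ico k (k + j), X i ω) (X (k + j)) P := by
        have := hsum_indep (Finset.Ico k (k + j)) {k + j} (by simp)
        rwa [hsingle] at this
      have hi2 : IndepFun (fun ω => ∑ i ∈ Finset.range j, X i ω) (X j) P := by
        have := hsum_indep (Finset.range j) {j} (by simp)
        rwa [hsingle] at this
      calc Measure.map (fun ω => ∑ i ∈ Finset.Ico k (k + (j + 1)), X i ω) P
          = MyConv (Measure.map (fun ω => ∑ i ∈ Finset.Ico k (k + j), X i ω) P)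
              (Measure.map (X (k + j)) P) := by
            rw [h1]
            exact hconvlaw _ _ (hSmeas _) (hmeas _) hi1
        _ = MyConv (Measure.map (fun ω => ∑ i ∈ Finset.range j, X i ω) P)
              (Measure.map (X j) P) := by
            rw [ih, (hident (k + j)).map_eq, ← (hident j).map_eq]
        _ = Measure.map (fun ω => ∑ i ∈ Finset.range (j + 1), X i ω) P := by
            rw [h2]
            exact (hconvlaw _ _ (hSmeas _) (hmeas _) hi2).symm
  -- splitting the law of S n as a convolution
  have hsplit_law : ∀ n : ℕ, K ≤ n →
      Measure.map (fun ω => ∑ i ∈ Finset.range n, X i ω) P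
        = MyConv (Measure.map (fun ω => ∑ i ∈ Finset.range K, X i ω) P)
            (Measure.map (fun ω => ∑ i ∈ Finset.range (n - K), X i ω) P) := by
    intro n hn
    have hfun : (fun ω => ∑ i ∈ Finset.range n, X i ω)
        = fun ω => (∑ i ∈ Finset.range K, X i ω) + ∑ i ∈ Finset.Ico K n, X i ω := by
      funext ω
      rw [Finset.range_eq_Ico, ← Finset.sum_Ico_consecutive _ (Nat.zero_le K) hn,
        ← Finset.range_eq_Ico]
    have hdisj : Disjoint (Finset.range K) (Finset.Ico K n) := by
      rw [Finset.disjoint_left]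
      intro i hi hi'
      simp only [Finset.mem_range] at hi
      simp only [Finset.mem_Ico] at hi'
      omega
    rw [hfun, hconvlaw _ _ (hSmeas _) (hSmeas _) (hsum_indep _ _ hdisj)]
    congr 1
    have := hblock K (n - K)
    rwa [show K + (n - K) = n by omega] at this
  -- the density block is Nice with exponent 1
  have hniceK : Nice_s14 (Measure.map (fun ω => ∑ i ∈ Finset.range K, X i ω) P) x 1 :=
    nice_one hmeasfK hx.le hmono hdens (hlawIio K)
  -- main induction
  have hmain : ∀ n : ℕ, Nice_s14 (Measure.map (fun ω => ∑ i ∈ Finset.range n, X i ω) P) x (n / K) := by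
    intro n
    induction n using Nat.strong_induction_on with
    | _ n ih =>
      by_cases hn : K ≤ n
      · haveI := hprob (Finset.range K)
        haveI := hprob (Finset.range (n - K))
        have h1 := nice_conv_s14 hx.le le_rfl hniceK (ih (n - K) (by omega))
        rw [hsplit_law n hn]
        have hexp : 1 + (n - K) / K = n / K := by
          rw [add_comm, ← Nat.add_div_right _ (show 0 < K by omega), Nat.sub_add_cancel hn]
        rwa [hexp] at h1
      · rw [Nat.div_eq_of_lt (by omega)]
        exact nice_zero (hlawIio n) x
  -- conclusion
  intro n hn y hy
  set l := (x - y) / x with hldef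
  have hl : l ∈ Set.Icc (0:ℝ) 1 :=
    ⟨div_nonneg (by linarith [hy.2]) hx.le, (div_le_one hx).2 (by linarith [hy.1])⟩
  have hkey := (hmain n).2 l hl x ⟨hx.le, le_rfl⟩
  have hlx : l * x = x - y := div_mul_cancel₀ _ hx.ne'
  rw [hlx] at hkey
  have hPmap : ∀ t : ℝ, Measure.map (fun ω => ∑ i ∈ Finset.range n, X i ω) P (Set.Iic t)
      = P {ω | ∑ i ∈ Finset.range n, X i ω ≤ t} := by
    intro t
    rw [Measure.map_apply (hSmeas _) measurableSet_Iic]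
    rfl
  rw [hPmap, hPmap] at hkey
  have hfin : ENNReal.ofReal l ^ (n / K) * P {ω | ∑ i ∈ Finset.range n, X i ω ≤ x} ≠ ⊤ :=
    ENNReal.mul_ne_top (ENNReal.pow_ne_top ENNReal.ofReal_ne_top) (measure_ne_top P _)
  have hreal := ENNReal.toReal_mono hfin hkey
  rw [ENNReal.toReal_mul, ENNReal.toReal_pow, ENNReal.toReal_ofReal hl.1] at hreal
  refine hreal.trans (mul_le_mul_of_nonneg_right ?_ ENNReal.toReal_nonneg)
  rcases eq_or_lt_of_le hl.1 with h0 | h0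
  · have hm0 : n / K ≠ 0 := (Nat.div_pos hn (by omega)).ne'
    rw [← h0, zero_pow hm0]
    exact Real.rpow_nonneg le_rfl _
  · have hKpos : (0:ℝ) < (K:ℝ) := by exact_mod_cast (show 0 < K by omega)
    have hm : (n : ℝ) / (K : ℝ) - 1 ≤ ((n / K : ℕ) : ℝ) := by
      have h2 := Nat.div_add_mod n K
      have h3 : n % K < K := Nat.mod_lt _ (by omega)
      have h4 : (n:ℝ) = (K:ℝ) * ((n / K : ℕ) : ℝ) + ((n % K : ℕ) : ℝ) := by
        exact_mod_cast h2.symm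
      have h5 : ((n % K : ℕ) : ℝ) < (K:ℝ) := by exact_mod_cast h3
      rw [sub_le_iff_le_add, div_le_iff₀ hKpos]
      nlinarith
    calc l ^ (n / K) = l ^ (((n / K : ℕ) : ℝ)) := (Real.rpow_natCast _ _).symm
      _ ≤ l ^ ((n : ℝ) / (K : ℝ) - 1) := Real.rpow_le_rpow_of_exponent_ge h0 hl.2 hm
end

section
/- Let (X_n) be i.i.d. random variables in class C_4 with regular-variation index α > 0 for the density at 0. Then for every x > 0 there exists c_x > 0 such that for all sufficiently large n, P[S_{n+1} ≤ x]/P[S_n ≤ x] ≥ c_x · P[X_1 ≤ 1/n]. Consequently, combined with the matching upper bound, the ratio P[S_{n+1} ≤ x]/P[S_n ≤ x] is of exact order P[X_1 ≤ 1/n]. -/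
open MeasureTheory ProbabilityTheory Filter Set
open scoped ENNReal Topology

lemma swap_le {Ω : Type*} [MeasurableSpace Ω] (P : Measure Ω) [IsProbabilityMeasure P]
    (Y W T : Ω → ℝ) (hY : Measurable Y) (hW : Measurable W) (hT : Measurable T)
    (hYT : IndepFun Y T P) (hWT : IndepFun W T P)
    (hTnn : ∀ᵐ ω ∂P, 0 ≤ T ω) (θ : ℝ≥0∞) (hθ : θ ≠ ⊤) (t : ℝ)
    (H : ∀ u : ℝ, u ≤ t → θ * P {ω | W ω ≤ u} ≤ P {ω | Y ω ≤ u}) :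
    θ * P {ω | W ω + T ω ≤ t} ≤ P {ω | Y ω + T ω ≤ t} := by
  have hset : MeasurableSet {p : ℝ × ℝ | p.2 ≤ t - p.1} :=
    measurableSet_le measurable_snd (measurable_const.sub measurable_fst)
  have key : ∀ (Z : Ω → ℝ), Measurable Z → IndepFun Z T P →
      P {ω | Z ω + T ω ≤ t} = ∫⁻ b, (P.map Z) (Iic (t - b)) ∂(P.map T) := by
    intro Z hZ hZT
    have hmap : P.map (fun ω => (T ω, Z ω)) = (P.map T).prod (P.map Z) :=
      (indepFun_iff_map_prod_eq_prod_map_map hT.aemeasurable hZ.aemeasurable).1 hZT.symm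
    have h1 : P {ω | Z ω + T ω ≤ t}
        = P.map (fun ω => (T ω, Z ω)) {p : ℝ × ℝ | p.2 ≤ t - p.1} := by
      rw [Measure.map_apply (hT.prodMk hZ) hset]
      congr 1
      ext ω
      simp only [mem_setOf_eq, mem_preimage, le_sub_iff_add_le, add_comm]
    rw [h1, hmap, Measure.prod_apply hset]
    exact lintegral_congr fun b => rfl
  rw [key W hW hWT, key Y hY hYT]
  rw [← MeasureTheory.lintegral_const_mul' _ _ hθ]
  have hae : ∀ᵐ b ∂(P.map T), 0 ≤ b :=
    (MeasureTheory.ae_map_iff hT.aemeasurable measurableSet_Ici).2 hTnn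
  refine lintegral_mono_ae ?_
  filter_upwards [hae] with b hb
  have hWb : (P.map W) (Iic (t - b)) = P {ω | W ω ≤ t - b} := by
    rw [Measure.map_apply hW measurableSet_Iic]; rfl
  have hYb : (P.map Y) (Iic (t - b)) = P {ω | Y ω ≤ t - b} := by
    rw [Measure.map_apply hY measurableSet_Iic]; rfl
  rw [hWb, hYb]
  exact H _ (by linarith)

lemma scale_compare {Ω : Type*} [MeasurableSpace Ω] (P : Measure Ω) [IsProbabilityMeasure P]
    (X : ℕ → Ω → ℝ) (hmeas : ∀ i, Measurable (X i))
    (hindep : iIndepFun X P)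
    (hpos' : ∀ i, ∀ᵐ ω ∂P, 0 < X i ω)
    (c : ℝ) (hc : 0 < c) (θ : ℝ≥0∞) (hθ : θ ≠ ⊤) (t : ℝ)
    (H : ∀ i, ∀ u : ℝ, u ≤ t → θ * P {ω | X i ω ≤ u} ≤ P {ω | X i ω ≤ c * u})
    (n : ℕ) :
    θ ^ n * P {ω | ∑ i ∈ Finset.range n, X i ω ≤ t}
      ≤ P {ω | ∑ i ∈ Finset.range n, X i ω ≤ c * t} := by
  classical
  set g : ℕ → ℕ → Ω → ℝ := fun j i ω => if i < j then X i ω / c else X i ω with hg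
  have hgmeas : ∀ j i, Measurable (g j i) := by
    intro j i
    by_cases h : i < j <;> simp only [hg, h, if_true, if_false] <;>
      [exact (hmeas i).div_const c; exact hmeas i]
  have hgindep : ∀ j, iIndepFun (g j) P := by
    intro j
    have := hindep.comp (fun i (y : ℝ) => if i < j then y / c else y) (fun i => by
      by_cases h : i < j <;> simp only [h, if_true, if_false] <;>
        [exact measurable_id.div_const c; exact measurable_id])
    exact this
  have hgpos : ∀ j i, ∀ᵐ ω ∂P, 0 ≤ g j i ω := by
    intro j i
    filter_upwards [hpos' i] with ω hω
    by_cases h : i < j <;> simp only [hg, h, if_true, if_false]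
    · positivity
    · exact hω.le
  -- main induction
  have main : ∀ j, j ≤ n →
      θ ^ j * P {ω | ∑ i ∈ Finset.range n, X i ω ≤ t}
        ≤ P {ω | ∑ i ∈ Finset.range n, g j i ω ≤ t} := by
    intro j
    induction j with
    | zero =>
      intro _
      simp only [pow_zero, one_mul, hg]
      have : ∀ ω, ∑ i ∈ Finset.range n, g 0 i ω = ∑ i ∈ Finset.range n, X i ω := by
        intro ω; exact Finset.sum_congr rfl fun i _ => by simp [hg]
      exact le_of_eq (by congr 1)
    | succ j ih =>
      intro hj
      have hjn : j < n := hj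
      have ihj := ih (le_of_lt hjn)
      set T : Ω → ℝ := fun ω => ∑ i ∈ (Finset.range n).erase j, g j i ω with hT
      have hTmeas : Measurable T :=
        Finset.measurable_sum _ fun i _ => hgmeas j i
      have hTeq' : ∀ ω, T ω = ∑ i ∈ (Finset.range n).erase j, g (j+1) i ω := by
        intro ω
        exact Finset.sum_congr rfl fun i hi => by
          have : i ≠ j := Finset.ne_of_mem_erase hi
          by_cases h : i < j
          · simp [hg, h, Nat.lt_succ_of_lt h]
          · have h2 : ¬ i < j + 1 := by omega
            simp [hg, h, h2]
      -- identify the two sums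
      have hsum1 : ∀ ω, ∑ i ∈ Finset.range n, g j i ω = X j ω + T ω := by
        intro ω
        rw [hT]
        rw [← Finset.add_sum_erase _ _ (Finset.mem_range.2 hjn)]
        congr 1
        simp [hg]
      have hsum2 : ∀ ω, ∑ i ∈ Finset.range n, g (j+1) i ω = (fun ω => X j ω / c) ω + T ω := by
        intro ω
        rw [hTeq' ω]
        rw [← Finset.add_sum_erase _ _ (Finset.mem_range.2 hjn)]
        congr 1
        simp [hg]
      -- independence
      have hIW : IndepFun (X j) T P := by
        have h1 := (hgindep j).indepFun_finsetSum_of_notMem (hgmeas j)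
          (Finset.notMem_erase j (Finset.range n))
        have h2 : g j j = X j := by funext ω; simp [hg]
        have h3 : (∑ i ∈ (Finset.range n).erase j, g j i) = T := by
          funext ω; simp [hT, Finset.sum_apply]
        rw [h2, h3] at h1
        exact h1.symm
      have hIY : IndepFun (fun ω => X j ω / c) T P := by
        have h1 := (hgindep (j+1)).indepFun_finsetSum_of_notMem (hgmeas (j+1))
          (Finset.notMem_erase j (Finset.range n))
        have h2 : g (j+1) j = fun ω => X j ω / c := by
          funext ω; simp [hg]
        have h3 : (∑ i ∈ (Finset.range n).erase j, g (j+1) i) = T := by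
          funext ω; simp only [Finset.sum_apply]; exact (hTeq' ω).symm
        rw [h2, h3] at h1
        exact h1.symm
      have hTnn : ∀ᵐ ω ∂P, 0 ≤ T ω := by
        have : ∀ᵐ ω ∂P, ∀ i, 0 ≤ g j i ω := ae_all_iff.2 fun i => hgpos j i
        filter_upwards [this] with ω hω
        exact Finset.sum_nonneg fun i _ => hω i
      have hswapH : ∀ u : ℝ, u ≤ t →
          θ * P {ω | X j ω ≤ u} ≤ P {ω | (fun ω => X j ω / c) ω ≤ u} := by
        intro u hu
        have : {ω | (fun ω => X j ω / c) ω ≤ u} = {ω | X j ω ≤ c * u} := by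
          ext ω
          simp only [mem_setOf_eq, div_le_iff₀ hc, mul_comm]
        rw [this]
        exact H j u hu
      have hstep := swap_le P (fun ω => X j ω / c) (X j) T
        ((hmeas j).div_const c) (hmeas j) hTmeas hIY hIW hTnn θ hθ t hswapH
      calc θ ^ (j+1) * P {ω | ∑ i ∈ Finset.range n, X i ω ≤ t}
          = θ * (θ ^ j * P {ω | ∑ i ∈ Finset.range n, X i ω ≤ t}) := by
            ring
        _ ≤ θ * P {ω | ∑ i ∈ Finset.range n, g j i ω ≤ t} :=
            mul_le_mul_right ihj θ
        _ = θ * P {ω | X j ω + T ω ≤ t} := by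
            congr 1; congr 1; ext ω; rw [mem_setOf_eq, mem_setOf_eq, hsum1 ω]
        _ ≤ P {ω | (fun ω => X j ω / c) ω + T ω ≤ t} := hstep
        _ = P {ω | ∑ i ∈ Finset.range n, g (j+1) i ω ≤ t} := by
            congr 1; ext ω; rw [mem_setOf_eq, mem_setOf_eq, hsum2 ω]
  have final := main n le_rfl
  have : {ω | ∑ i ∈ Finset.range n, g n i ω ≤ t}
      = {ω | ∑ i ∈ Finset.range n, X i ω ≤ c * t} := by
    ext ω
    have hsum : ∑ i ∈ Finset.range n, g n i ω = (∑ i ∈ Finset.range n, X i ω) / c := by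
      rw [Finset.sum_div]
      exact Finset.sum_congr rfl fun i hi => by
        simp [hg, Finset.mem_range.1 hi]
    simp only [mem_setOf_eq, hsum, div_le_iff₀ hc, mul_comm]
  rwa [this] at final

lemma mono_near_zero (f : ℝ → ℝ) (hC1 : ContDiffOn ℝ 1 f (Ioi 0))
    (hmono : ∃ ε > (0 : ℝ),
      MonotoneOn (deriv f) (Ioo 0 ε) ∨ AntitoneOn (deriv f) (Ioo 0 ε)) :
    ∃ η > (0:ℝ), MonotoneOn f (Ioo 0 η) ∨ AntitoneOn f (Ioo 0 η) := by
  obtain ⟨e, he, hm⟩ := hmono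
  have hdiff : DifferentiableOn ℝ f (Ioi 0) := hC1.differentiableOn one_ne_zero
  have hsub : ∀ b : ℝ, Ioo (0:ℝ) b ⊆ Ioi 0 := fun b s hs => hs.1
  have hcont : ∀ b : ℝ, ContinuousOn f (Ioo 0 b) :=
    fun b => hC1.continuousOn.mono (hsub b)
  have hdiff' : ∀ b : ℝ, DifferentiableOn ℝ f (interior (Ioo 0 b)) := fun b => by
    rw [interior_Ioo]; exact hdiff.mono (hsub b)
  rcases hm with hm | hm
  · by_cases hsign : ∀ s ∈ Ioo (0:ℝ) e, 0 ≤ deriv f s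
    · refine ⟨e, he, Or.inl (monotoneOn_of_deriv_nonneg (convex_Ioo 0 e)
        (hcont e) (hdiff' e) ?_)⟩
      rw [interior_Ioo]; exact hsign
    · push_neg at hsign
      obtain ⟨t0, ht0, ht0neg⟩ := hsign
      refine ⟨t0, ht0.1, Or.inr (antitoneOn_of_deriv_nonpos (convex_Ioo 0 t0)
        (hcont t0) (hdiff' t0) ?_)⟩
      rw [interior_Ioo]
      intro s hs
      have : deriv f s ≤ deriv f t0 :=
        hm ⟨hs.1, hs.2.trans ht0.2⟩ ht0 hs.2.le
      linarith
  · by_cases hsign : ∀ s ∈ Ioo (0:ℝ) e, deriv f s ≤ 0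
    · refine ⟨e, he, Or.inr (antitoneOn_of_deriv_nonpos (convex_Ioo 0 e)
        (hcont e) (hdiff' e) ?_)⟩
      rw [interior_Ioo]; exact hsign
    · push_neg at hsign
      obtain ⟨t0, ht0, ht0pos⟩ := hsign
      refine ⟨t0, ht0.1, Or.inl (monotoneOn_of_deriv_nonneg (convex_Ioo 0 t0)
        (hcont t0) (hdiff' t0) ?_)⟩
      rw [interior_Ioo]
      intro s hs
      have : deriv f t0 ≤ deriv f s :=
        hm ⟨hs.1, hs.2.trans ht0.2⟩ ht0 hs.2.le
      linarith

lemma doubling (f : ℝ → ℝ) (hfnn : ∀ t, 0 ≤ f t) (α : ℝ)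
    (hreg : ∃ a > (0 : ℝ), ∃ L : ℝ → ℝ,
      (∀ t ∈ Ioc (0 : ℝ) a, 0 < L t) ∧
      (∀ l : ℝ, 0 < l →
        Tendsto (fun t => L (l * t) / L t) (𝓝[>] (0 : ℝ)) (nhds 1)) ∧
      ∀ t ∈ Ioc (0 : ℝ) a, f t = t ^ (α - 1) * L t) :
    ∃ δ > (0:ℝ), ∃ C > (0:ℝ), ∀ u : ℝ, 0 < u → u ≤ δ →
      f u ≤ C * f (u/2) ∧ 0 < f (u/2) := by
  obtain ⟨a, ha, L, hLpos, hLlim, hfL⟩ := hreg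
  have h2 := hLlim 2 two_pos
  have hev : ∀ᶠ t in 𝓝[>] (0:ℝ), L (2*t)/L t < 2 :=
    h2.eventually_lt_const one_lt_two
  rw [eventually_nhdsWithin_iff, Metric.eventually_nhds_iff] at hev
  obtain ⟨δ1, hδ1, hδ1p⟩ := hev
  refine ⟨min a δ1, lt_min ha hδ1, 2 ^ (α-1) * 2,
    by positivity, ?_⟩
  intro u hu huδ
  have hua : u ∈ Ioc (0:ℝ) a := ⟨hu, huδ.trans (min_le_left _ _)⟩
  have hu2a : u/2 ∈ Ioc (0:ℝ) a := ⟨by linarith, by nlinarith [hua.2]⟩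
  have hL2 : L (2*(u/2)) / L (u/2) < 2 := by
    refine hδ1p ?_ ?_
    · rw [Real.dist_eq, sub_zero, abs_of_pos (by linarith : (0:ℝ) < u/2)]
      have : u ≤ δ1 := huδ.trans (min_le_right _ _)
      linarith
    · exact mem_Ioi.2 (by linarith)
  have h2u : 2*(u/2) = u := by ring
  rw [h2u] at hL2
  have hLu2 : 0 < L (u/2) := hLpos _ hu2a
  have hLle : L u ≤ 2 * L (u/2) := by
    have := (div_lt_iff₀ hLu2).1 hL2
    linarith
  have hfu : f u = u ^ (α-1) * L u := hfL u hua
  have hfu2 : f (u/2) = (u/2) ^ (α-1) * L (u/2) := hfL _ hu2a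
  have hrpow : u ^ (α-1) = 2 ^ (α-1) * (u/2) ^ (α-1) := by
    rw [← Real.mul_rpow (by norm_num) (by linarith : (0:ℝ) ≤ u/2), h2u]
  have hp2 : (0:ℝ) < (u/2) ^ (α-1) := Real.rpow_pos_of_pos (by linarith) _
  constructor
  · rw [hfu, hfu2, hrpow]
    have h2p : (0:ℝ) < (2:ℝ) ^ (α-1) := Real.rpow_pos_of_pos two_pos _
    calc 2 ^ (α-1) * (u/2) ^ (α-1) * L u
        ≤ 2 ^ (α-1) * (u/2) ^ (α-1) * (2 * L (u/2)) := by
          apply mul_le_mul_of_nonneg_left hLle (by positivity)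
      _ = 2 ^ (α-1) * 2 * ((u/2) ^ (α-1) * L (u/2)) := by ring
  · rw [hfu2]; positivity

set_option maxHeartbeats 1000000 in
lemma star_real (f : ℝ → ℝ) (hfnn : ∀ t, 0 ≤ f t)
    (hf0 : ∀ t ≤ (0 : ℝ), f t = 0)
    (hIntf : Integrable f (volume : Measure ℝ))
    (hGpos : ∀ t : ℝ, 0 < t → 0 < ∫ s in (0:ℝ)..t, f s)
    (hC1 : ContDiffOn ℝ 1 f (Ioi 0))
    (hmono : ∃ ε > (0 : ℝ),
      MonotoneOn (deriv f) (Ioo 0 ε) ∨ AntitoneOn (deriv f) (Ioo 0 ε))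
    (α : ℝ)
    (hreg : ∃ a > (0 : ℝ), ∃ L : ℝ → ℝ,
      (∀ t ∈ Ioc (0 : ℝ) a, 0 < L t) ∧
      (∀ l : ℝ, 0 < l →
        Tendsto (fun t => L (l * t) / L t) (𝓝[>] (0 : ℝ)) (nhds 1)) ∧
      ∀ t ∈ Ioc (0 : ℝ) a, f t = t ^ (α - 1) * L t)
    (x : ℝ) (hx : 0 < x) :
    ∃ κ : ℝ, 1 ≤ κ ∧ ∀ ε : ℝ, 0 < ε → ε ≤ 1/2 → ∀ u : ℝ, 0 < u → u ≤ x →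
      (1 - κ*ε) * (∫ s in (0:ℝ)..u, f s) ≤ ∫ s in (0:ℝ)..((1-ε)*u), f s := by
  obtain ⟨η, hη, hmf⟩ := mono_near_zero f hC1 hmono
  obtain ⟨δf, hδf, C, hC, hdouble⟩ := doubling f hfnn α hreg
  obtain ⟨δ, hδ, hδx, hδη, hδδf⟩ : ∃ δ : ℝ, 0 < δ ∧ δ ≤ x ∧ δ ≤ η/2 ∧ δ ≤ δf :=
    ⟨min x (min (η/2) δf), lt_min hx (lt_min (by linarith) hδf), min_le_left _ _,
      (min_le_right _ _).trans (min_le_left _ _),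
      (min_le_right _ _).trans (min_le_right _ _)⟩
  have hii : ∀ a b : ℝ, IntervalIntegrable f volume a b :=
    fun a b => hIntf.intervalIntegrable
  set G : ℝ → ℝ := fun u => ∫ s in (0:ℝ)..u, f s with hGdef
  have hGnn : ∀ u : ℝ, 0 ≤ G u := by
    intro u
    rcases le_or_gt 0 u with h | h
    · exact intervalIntegral.integral_nonneg h (fun s _ => hfnn s)
    · have h0 : ∫ s in Ioc u 0, f s = 0 :=
        setIntegral_eq_zero_of_forall_eq_zero fun s hs => hf0 s hs.2
      have : G u = -∫ s in Ioc u 0, f s := by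
        rw [hGdef]
        simp [intervalIntegral.integral_of_ge h.le]
      rw [this, h0]
      simp
  -- difference representation
  have hdiffrep : ∀ ε u : ℝ, 0 < ε → ε < 1 → 0 < u →
      G u - G ((1-ε)*u) = ∫ s in ((1-ε)*u)..u, f s := by
    intro ε u hε hε1 hu
    rw [hGdef]
    have := intervalIntegral.integral_add_adjacent_intervals
      (hii 0 ((1-ε)*u)) (hii ((1-ε)*u) u)
    simp only [] at this ⊢
    linarith
  -- near-zero bound
  have hnear : ∀ ε : ℝ, 0 < ε → ε ≤ 1/2 → ∀ u : ℝ, 0 < u → u ≤ δ →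
      (1 - (max 1 (2*C))*ε) * G u ≤ G ((1-ε)*u) := by
    intro ε hε hε2 u hu huδ
    have hεlt1 : ε < 1 := by linarith
    have hc : (0:ℝ) < 1 - ε := by linarith
    have huη : u < η := by linarith [hδη]
    rcases hmf with hmf | hmf
    · -- monotone case
      have hup : u ∈ Ioo (0:ℝ) η := ⟨hu, huη⟩
      have hupper : G u - G ((1-ε)*u) ≤ ε * u * f u := by
        rw [hdiffrep ε u hε hεlt1 hu]
        have hmono_pt : ∀ s ∈ Icc ((1-ε)*u) u, f s ≤ f u := by
          intro s hs
          have hs0 : 0 < s := lt_of_lt_of_le (by nlinarith) hs.1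
          exact hmf ⟨hs0, lt_of_le_of_lt hs.2 huη⟩ hup hs.2
        calc ∫ s in ((1-ε)*u)..u, f s ≤ ∫ _ in ((1-ε)*u)..u, f u :=
              intervalIntegral.integral_mono_on (by nlinarith) (hii _ _)
                intervalIntegrable_const hmono_pt
          _ = (u - (1-ε)*u) • f u := intervalIntegral.integral_const _
          _ = ε * u * f u := by rw [smul_eq_mul]; ring
      have hlower : (u/2) * f (u/2) ≤ G u := by
        have h1 : ∫ s in (u/2)..u, f s ≤ G u := by
          rw [hGdef]
          have := intervalIntegral.integral_add_adjacent_intervals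
            (hii 0 (u/2)) (hii (u/2) u)
          have h0 : 0 ≤ ∫ s in (0:ℝ)..(u/2), f s :=
            intervalIntegral.integral_nonneg (by linarith) (fun s _ => hfnn s)
          simp only [] at this ⊢
          linarith
        have h2 : (u - u/2) • f (u/2) ≤ ∫ s in (u/2)..u, f s := by
          have hmono_pt : ∀ s ∈ Icc (u/2) u, f (u/2) ≤ f s := by
            intro s hs
            have hs0 : 0 < s := lt_of_lt_of_le (by linarith) hs.1
            exact hmf ⟨by linarith, by linarith [huη]⟩
              ⟨hs0, lt_of_le_of_lt hs.2 huη⟩ hs.1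
          calc (u - u/2) • f (u/2) = ∫ _ in (u/2)..u, f (u/2) :=
                (intervalIntegral.integral_const _).symm
            _ ≤ ∫ s in (u/2)..u, f s :=
              intervalIntegral.integral_mono_on (by linarith)
                intervalIntegrable_const (hii _ _) hmono_pt
        have : (u - u/2) • f (u/2) = (u/2) * f (u/2) := by
          rw [smul_eq_mul]; ring
        linarith
      obtain ⟨hdb, hfpos⟩ := hdouble u hu (huδ.trans hδδf)
      have key : G u - G ((1-ε)*u) ≤ 2*C*ε * G u := by
        have h1 : ε * u * f u ≤ ε * u * (C * f (u/2)) := by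
          apply mul_le_mul_of_nonneg_left hdb (by positivity)
        have h2 : ε * u * (C * f (u/2)) = 2*C*ε * ((u/2) * f (u/2)) := by ring
        have h3 : 2*C*ε * ((u/2) * f (u/2)) ≤ 2*C*ε * G u :=
          mul_le_mul_of_nonneg_left hlower (by positivity)
        linarith
      have hmax : 1 - (max 1 (2*C))*ε ≤ 1 - 2*C*ε := by
        have : 2*C ≤ max 1 (2*C) := le_max_right _ _
        nlinarith
      nlinarith [hGnn u]
    · -- antitone case
      have hsub : G ((1-ε)*u) = (1-ε) * ∫ s in (0:ℝ)..u, f ((1-ε)*s) := by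
        have := intervalIntegral.smul_integral_comp_mul_left f (1-ε) (a := 0) (b := u)
        simp only [smul_eq_mul, mul_zero] at this
        show (∫ s in (0:ℝ)..((1-ε)*u), f s) = _
        rw [← this]
      have hptwise : ∀ s ∈ Icc (0:ℝ) u, f s ≤ f ((1-ε)*s) := by
        intro s hs
        rcases eq_or_lt_of_le hs.1 with h | h
        · rw [← h]; simp [hf0 0 le_rfl]
        · refine hmf ⟨by nlinarith, ?_⟩ ⟨h, by linarith [hs.2]⟩ (by nlinarith)
          calc (1-ε)*s ≤ s := by nlinarith
            _ < η := by linarith [hs.2]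
      have hcomp_int : IntervalIntegrable (fun s => f ((1-ε)*s)) volume 0 u :=
        (hIntf.comp_mul_left' hc.ne').intervalIntegrable
      have hmono_int : G u ≤ ∫ s in (0:ℝ)..u, f ((1-ε)*s) := by
        rw [hGdef]
        exact intervalIntegral.integral_mono_on hu.le (hii _ _) hcomp_int hptwise
      have : (1-ε) * G u ≤ G ((1-ε)*u) := by
        rw [hsub]
        exact mul_le_mul_of_nonneg_left hmono_int (by linarith)
      have hmax : 1 - (max 1 (2*C))*ε ≤ 1 - ε := by
        have : 1 ≤ max 1 (2*C) := le_max_left _ _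
        nlinarith
      nlinarith [hGnn u]
  -- away from zero
  obtain ⟨M, hM⟩ := (isCompact_Icc (a := δ/4) (b := x)).exists_bound_of_continuousOn
    (hC1.continuousOn.mono (fun s hs => lt_of_lt_of_le (by linarith) hs.1))
  have hMnn : 0 ≤ M := le_trans (norm_nonneg _) (hM x ⟨by linarith, le_rfl⟩)
  have hGδ : 0 < G δ := hGpos δ hδ
  obtain ⟨κ1, hκ1nn, hκ1eq⟩ : ∃ κ1 : ℝ, 0 ≤ κ1 ∧ x * M = κ1 * G δ :=
    ⟨x * M / G δ, by positivity, by field_simp⟩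
  have haway : ∀ ε : ℝ, 0 < ε → ε ≤ 1/2 → ∀ u : ℝ, δ < u → u ≤ x →
      (1 - κ1*ε) * G u ≤ G ((1-ε)*u) := by
    intro ε hε hε2 u hδu hux
    have hu : 0 < u := hδ.trans hδu
    have hdiff : G u - G ((1-ε)*u) ≤ ε * (x*M) := by
      rw [hdiffrep ε u hε (by linarith) hu]
      have hpt : ∀ s ∈ Icc ((1-ε)*u) u, f s ≤ M := by
        intro s hs
        have h1 : δ/4 ≤ s := le_trans (by nlinarith) hs.1
        have h2 : s ≤ x := hs.2.trans hux
        have := hM s ⟨h1, h2⟩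
        rw [Real.norm_eq_abs] at this
        exact (le_abs_self _).trans this
      calc ∫ s in ((1-ε)*u)..u, f s
          ≤ ∫ _ in ((1-ε)*u)..u, M :=
            intervalIntegral.integral_mono_on (by nlinarith) (hii _ _)
              intervalIntegrable_const hpt
        _ = (u - (1-ε)*u) • M := intervalIntegral.integral_const _
        _ = ε*u*M := by rw [smul_eq_mul]; ring
        _ ≤ ε*(x*M) := by nlinarith [mul_le_mul_of_nonneg_left hux (mul_nonneg hε.le hMnn)]
    have hGmono : G δ ≤ G u := by
      have hadd := intervalIntegral.integral_add_adjacent_intervals (hii 0 δ) (hii δ u)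
      have h0 : 0 ≤ ∫ s in δ..u, f s :=
        intervalIntegral.integral_nonneg (by linarith) (fun s _ => hfnn s)
      have hGu : G δ + ∫ s in δ..u, f s = G u := by
        simp only [hGdef]; exact hadd
      linarith
    have h2 : ε * (x*M) = ε * κ1 * G δ := by
      rw [hκ1eq]; ring
    have h3 : ε * κ1 * G δ ≤ ε * κ1 * G u := by
      apply mul_le_mul_of_nonneg_left hGmono (mul_nonneg hε.le hκ1nn)
    nlinarith [hGnn ((1-ε)*u), hGnn u]
  refine ⟨max (max 1 (2*C)) κ1, le_trans (le_max_left 1 (2*C)) (le_max_left _ _), ?_⟩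
  intro ε hε hε2 u hu hux
  rcases le_or_gt u δ with h | h
  · have hb := hnear ε hε hε2 u hu h
    have hle : 1 - (max (max 1 (2*C)) κ1)*ε ≤ 1 - (max 1 (2*C))*ε := by
      nlinarith [le_max_left (max 1 (2*C)) κ1]
    nlinarith [hGnn u]
  · have hb := haway ε hε hε2 u h hux
    have hle : 1 - (max (max 1 (2*C)) κ1)*ε ≤ 1 - κ1*ε := by
      nlinarith [le_max_right (max 1 (2*C)) κ1]
    nlinarith [hGnn u]

set_option maxHeartbeats 1000000 in
theorem stmt16
    {Ω : Type*} [MeasurableSpace Ω] (P : Measure Ω) [IsProbabilityMeasure P]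
    (X : ℕ → Ω → ℝ)
    (hmeas : ∀ i, Measurable (X i))
    (hindep : iIndepFun X P)
    (hident : ∀ i, IdentDistrib (X i) (X 0) P P)
    (hpos : ∀ᵐ ω ∂P, 0 < X 0 ω)
    (f : ℝ → ℝ) (hmeasf : Measurable f) (hfnn : ∀ t, 0 ≤ f t)
    (hf0 : ∀ t ≤ (0 : ℝ), f t = 0)
    (hdens : Measure.map (X 0) P =
      (volume : Measure ℝ).withDensity (fun t => ENNReal.ofReal (f t)))
    (hF : ∀ t : ℝ, 0 < t → P {ω | X 0 ω ≤ t} ≠ 0)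
    (hC1 : ContDiffOn ℝ 1 f (Ioi 0))
    (hmono : ∃ ε > (0 : ℝ),
      MonotoneOn (deriv f) (Ioo 0 ε) ∨ AntitoneOn (deriv f) (Ioo 0 ε))
    (α : ℝ) (hα : 0 < α)
    (hreg : ∃ a > (0 : ℝ), ∃ L : ℝ → ℝ,
      (∀ t ∈ Ioc (0 : ℝ) a, 0 < L t) ∧
      (∀ l : ℝ, 0 < l →
        Tendsto (fun t => L (l * t) / L t) (𝓝[>] (0 : ℝ)) (nhds 1)) ∧
      ∀ t ∈ Ioc (0 : ℝ) a, f t = t ^ (α - 1) * L t)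
    :
    ∀ x : ℝ, 0 < x → ∃ c > (0 : ℝ), ∃ N : ℕ, 1 ≤ N ∧
      ∀ n : ℕ, N ≤ n →
        c * (P {ω | X 0 ω ≤ 1 / (n : ℝ)}).toReal ≤
          (P {ω | ∑ i ∈ Finset.range (n + 1), X i ω ≤ x}).toReal
            / (P {ω | ∑ i ∈ Finset.range n, X i ω ≤ x}).toReal := by
  -- basic setup
  have hmapX : ∀ (i : ℕ) (u : ℝ), P {ω | X i ω ≤ u} = (P.map (X 0)) (Iic u) := by
    intro i u
    have h1 : P {ω | X i ω ≤ u} = (P.map (X i)) (Iic u) := by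
      rw [Measure.map_apply (hmeas i) measurableSet_Iic]; rfl
    rw [h1, (hident i).map_eq]
  have htotal : ∫⁻ t, ENNReal.ofReal (f t) = 1 := by
    have h1 : (P.map (X 0)) univ = 1 := by
      rw [Measure.map_apply (hmeas 0) MeasurableSet.univ]
      simp
    rw [hdens, withDensity_apply _ MeasurableSet.univ, Measure.restrict_univ] at h1
    exact h1
  have hInt : Integrable f (volume : Measure ℝ) := by
    refine ⟨hmeasf.aestronglyMeasurable, ?_⟩
    rw [hasFiniteIntegral_iff_norm]
    have : ∀ a : ℝ, ENNReal.ofReal ‖f a‖ = ENNReal.ofReal (f a) := fun a => by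
      rw [Real.norm_eq_abs, abs_of_nonneg (hfnn a)]
    simp only [this, htotal]
    exact ENNReal.one_lt_top
  have hGrep : ∀ u : ℝ, 0 ≤ u →
      (P.map (X 0)) (Iic u) = ENNReal.ofReal (∫ s in (0:ℝ)..u, f s) := by
    intro u hu
    rw [hdens, withDensity_apply _ measurableSet_Iic]
    have hsplit : (Iic u : Set ℝ) = Iic 0 ∪ Ioc 0 u := (Iic_union_Ioc_eq_Iic hu).symm
    rw [hsplit, lintegral_union measurableSet_Ioc (Iic_disjoint_Ioc le_rfl)]
    have h0 : ∫⁻ s in Iic (0:ℝ), ENNReal.ofReal (f s) = 0 := by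
      rw [setLIntegral_congr_fun measurableSet_Iic
        (fun s (hs : s ∈ Iic (0:ℝ)) => by
          rw [hf0 s hs, ENNReal.ofReal_zero])]
      simp
    have h1 : ∫⁻ s in Ioc (0:ℝ) u, ENNReal.ofReal (f s)
        = ENNReal.ofReal (∫ s in Ioc (0:ℝ) u, f s) :=
      (ofReal_integral_eq_lintegral_ofReal hInt.integrableOn
        (ae_of_all _ fun s => hfnn s)).symm
    rw [h0, h1, zero_add, intervalIntegral.integral_of_le hu]
  have hGpos : ∀ t : ℝ, 0 < t → 0 < ∫ s in (0:ℝ)..t, f s := by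
    intro t ht
    have h1 := hF t ht
    rw [hmapX 0 t, hGrep t ht.le] at h1
    have h2 : 0 ≤ ∫ s in (0:ℝ)..t, f s :=
      intervalIntegral.integral_nonneg ht.le (fun s _ => hfnn s)
    rcases h2.lt_or_eq with h | h
    · exact h
    · exact absurd (by rw [← h]; simp) h1
  have hzero : ∀ u : ℝ, u ≤ 0 → (P.map (X 0)) (Iic u) = 0 := by
    intro u hu
    rw [← hmapX 0 u]
    have hsub : {ω | X 0 ω ≤ u} ⊆ {ω | ¬ 0 < X 0 ω} :=
      fun ω h => not_lt.2 (le_trans h hu)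
    exact measure_mono_null hsub (ae_iff.1 hpos)
  have hpos' : ∀ i, ∀ᵐ ω ∂P, 0 < X i ω := by
    intro i
    rw [ae_iff]
    have : {ω | ¬ 0 < X i ω} = {ω | X i ω ≤ 0} := by
      ext ω; simp [not_lt]
    rw [this, hmapX i 0]
    exact hzero 0 le_rfl
  intro x hx
  obtain ⟨κ, hκ1, hstar⟩ := star_real f hfnn hf0 hInt hGpos hC1 hmono α hreg x hx
  have hκpos : 0 < κ := lt_of_lt_of_le one_pos hκ1
  refine ⟨Real.exp (-(2*κ/x)), Real.exp_pos _, max 1 ⌈(2*κ+2)/x⌉₊, le_max_left _ _, ?_⟩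
  intro n hn
  have hn1 : 1 ≤ n := le_trans (le_max_left _ _) hn
  have hnpos : (0:ℝ) < n := by exact_mod_cast hn1
  have hnx2 : 2*κ+2 ≤ (n:ℝ)*x := by
    have h2 : ((⌈(2*κ+2)/x⌉₊ : ℕ) : ℝ) ≤ (n:ℝ) :=
      Nat.cast_le.2 (le_trans (le_max_right _ _) hn)
    have h3 : (2*κ+2)/x ≤ (n:ℝ) := (Nat.le_ceil _).trans h2
    calc 2*κ+2 = ((2*κ+2)/x) * x := by field_simp
      _ ≤ (n:ℝ) * x := by nlinarith
  set ε : ℝ := 1/((n:ℝ)*x) with hεdef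
  have hε : 0 < ε := by positivity
  have hnxpos : 0 < (n:ℝ)*x := by positivity
  have hεnx : ε * ((n:ℝ)*x) = 1 := by
    rw [hεdef]; field_simp
  have hεhalf : ε ≤ 1/2 := by
    rw [hεdef, div_le_div_iff₀ hnxpos two_pos]
    nlinarith
  have hκε : κ*ε ≤ 1/2 := by
    have h1 : κ*ε*((n:ℝ)*x) = κ := by
      calc κ*ε*((n:ℝ)*x) = κ * (ε*((n:ℝ)*x)) := by ring
        _ = κ := by rw [hεnx]; ring
    nlinarith
  have hκεpos : 0 < κ*ε := by positivity
  have h1κε : 0 ≤ 1 - κ*ε := by linarith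
  -- exponential lower bound
  have hexp1 : Real.exp (-(2*(κ*ε))) ≤ 1 - κ*ε := by
    have hE := Real.exp_pos (-(2*(κ*ε)))
    have hid : Real.exp (-(2*(κ*ε))) * Real.exp (2*(κ*ε)) = 1 := by
      rw [← Real.exp_add]; simp
    have h3 : Real.exp (-(2*(κ*ε))) * (1+2*(κ*ε)) ≤ 1 := by
      nlinarith [Real.add_one_le_exp (2*(κ*ε)),
        mul_le_mul_of_nonneg_left (Real.add_one_le_exp (2*(κ*ε))) hE.le]
    nlinarith [h3]
  have hexp2 : Real.exp (-(2*κ/x)) = (Real.exp (-(2*(κ*ε))))^n := by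
    rw [← Real.exp_nat_mul]
    congr 1
    have : (n:ℝ) * -(2*(κ*ε)) = -(2*κ*(ε*(n:ℝ))) := by ring
    rw [this]
    have hεn : ε * (n:ℝ) = 1/x := by
      rw [hεdef]; field_simp
    rw [hεn]
    field_simp
  have hexp : Real.exp (-(2*κ/x)) ≤ (1-κ*ε)^n := by
    rw [hexp2]
    exact pow_le_pow_left₀ (Real.exp_pos _).le hexp1 n
  -- per-coordinate comparison
  set θ : ℝ≥0∞ := ENNReal.ofReal (1-κ*ε) with hθdef
  have hθtop : θ ≠ ⊤ := ENNReal.ofReal_ne_top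
  have hH : ∀ i, ∀ u : ℝ, u ≤ x →
      θ * P {ω | X i ω ≤ u} ≤ P {ω | X i ω ≤ (1-ε) * u} := by
    intro i u hu
    rw [hmapX i u, hmapX i ((1-ε)*u)]
    rcases le_or_gt u 0 with h | h
    · rw [hzero u h]
      simp
    · have hur : 0 ≤ (1-ε)*u := by nlinarith
      rw [hGrep u h.le, hGrep _ hur]
      rw [hθdef, ← ENNReal.ofReal_mul h1κε]
      exact ENNReal.ofReal_le_ofReal (hstar ε hε hεhalf u h hu)
  -- scaled comparison of partial sums
  have hscaled := scale_compare P X hmeas hindep hpos' (1-ε) (by linarith)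
    θ hθtop x hH n
  -- numerator bound
  have hεx : (1-ε)*x = x - 1/(n:ℝ) := by
    rw [hεdef]
    field_simp
  have hsub : {ω | X n ω ≤ 1/(n:ℝ)} ∩ {ω | ∑ i ∈ Finset.range n, X i ω ≤ (1-ε)*x}
      ⊆ {ω | ∑ i ∈ Finset.range (n+1), X i ω ≤ x} := by
    rintro ω ⟨h1, h2⟩
    simp only [mem_setOf_eq] at h1 h2 ⊢
    rw [Finset.sum_range_succ]
    rw [hεx] at h2
    linarith
  have hIF : IndepFun (∑ i ∈ Finset.range n, X i) (X n) P :=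
    hindep.indepFun_finsetSum_of_notMem hmeas Finset.notMem_range_self
  have hsetS : ∀ y : ℝ, (∑ i ∈ Finset.range n, X i) ⁻¹' (Iic y)
      = {ω | ∑ i ∈ Finset.range n, X i ω ≤ y} := by
    intro y
    ext ω
    simp [Finset.sum_apply]
  have hprod : P ({ω | ∑ i ∈ Finset.range n, X i ω ≤ (1-ε)*x}
        ∩ {ω | X n ω ≤ 1/(n:ℝ)})
      = P {ω | ∑ i ∈ Finset.range n, X i ω ≤ (1-ε)*x} * P {ω | X n ω ≤ 1/(n:ℝ)} := by
    have := hIF.measure_inter_preimage_eq_mul (Iic ((1-ε)*x)) (Iic (1/(n:ℝ)))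
      measurableSet_Iic measurableSet_Iic
    rw [hsetS] at this
    exact this
  have hnum : P {ω | X 0 ω ≤ 1/(n:ℝ)} * P {ω | ∑ i ∈ Finset.range n, X i ω ≤ (1-ε)*x}
      ≤ P {ω | ∑ i ∈ Finset.range (n+1), X i ω ≤ x} := by
    calc P {ω | X 0 ω ≤ 1/(n:ℝ)} * P {ω | ∑ i ∈ Finset.range n, X i ω ≤ (1-ε)*x}
        = P {ω | ∑ i ∈ Finset.range n, X i ω ≤ (1-ε)*x} * P {ω | X n ω ≤ 1/(n:ℝ)} := by
          rw [hmapX 0, ← hmapX n]; ring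
      _ = P ({ω | ∑ i ∈ Finset.range n, X i ω ≤ (1-ε)*x} ∩ {ω | X n ω ≤ 1/(n:ℝ)}) :=
          hprod.symm
      _ ≤ P {ω | ∑ i ∈ Finset.range (n+1), X i ω ≤ x} := by
          apply measure_mono
          rw [inter_comm]
          exact hsub
  -- denominator positivity
  have hBne : P {ω | ∑ i ∈ Finset.range n, X i ω ≤ x} ≠ 0 := by
    have hxn : 0 < x/(n:ℝ) := by positivity
    have hsub2 : (⋂ i ∈ Finset.range n, X i ⁻¹' (Iic (x/(n:ℝ))))
        ⊆ {ω | ∑ i ∈ Finset.range n, X i ω ≤ x} := by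
      intro ω hω
      simp only [mem_iInter, mem_preimage, mem_Iic] at hω
      simp only [mem_setOf_eq]
      calc ∑ i ∈ Finset.range n, X i ω ≤ ∑ _i ∈ Finset.range n, x/(n:ℝ) :=
            Finset.sum_le_sum (fun i hi => hω i hi)
        _ = (n:ℝ) * (x/(n:ℝ)) := by
            rw [Finset.sum_const, Finset.card_range, nsmul_eq_mul]
        _ = x := by field_simp
    have hprodI := hindep.measure_inter_preimage_eq_mul (S := Finset.range n)
      (sets := fun _ => Iic (x/(n:ℝ))) (fun i _ => measurableSet_Iic)
    have hprodne : P (⋂ i ∈ Finset.range n, X i ⁻¹' (Iic (x/(n:ℝ)))) ≠ 0 := by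
      rw [hprodI]
      rw [Finset.prod_ne_zero_iff]
      intro i _
      have : P (X i ⁻¹' (Iic (x/(n:ℝ)))) = P {ω | X 0 ω ≤ x/(n:ℝ)} := by
        rw [hmapX 0, ← hmapX i]; rfl
      rw [this]
      exact hF _ hxn
    intro hB0
    exact hprodne (measure_mono_null hsub2 hB0)
  -- final chain in ℝ≥0∞
  have hθn : ENNReal.ofReal (Real.exp (-(2*κ/x))) ≤ θ^n := by
    rw [hθdef, ← ENNReal.ofReal_pow h1κε]
    exact ENNReal.ofReal_le_ofReal hexp
  have hchain : ENNReal.ofReal (Real.exp (-(2*κ/x))) * P {ω | X 0 ω ≤ 1/(n:ℝ)}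
        * P {ω | ∑ i ∈ Finset.range n, X i ω ≤ x}
      ≤ P {ω | ∑ i ∈ Finset.range (n+1), X i ω ≤ x} := by
    calc ENNReal.ofReal (Real.exp (-(2*κ/x))) * P {ω | X 0 ω ≤ 1/(n:ℝ)}
          * P {ω | ∑ i ∈ Finset.range n, X i ω ≤ x}
        ≤ θ^n * P {ω | X 0 ω ≤ 1/(n:ℝ)}
          * P {ω | ∑ i ∈ Finset.range n, X i ω ≤ x} := by
          exact mul_le_mul_left (mul_le_mul_left hθn _) _
      _ = P {ω | X 0 ω ≤ 1/(n:ℝ)}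
          * (θ^n * P {ω | ∑ i ∈ Finset.range n, X i ω ≤ x}) := by ring
      _ ≤ P {ω | X 0 ω ≤ 1/(n:ℝ)}
          * P {ω | ∑ i ∈ Finset.range n, X i ω ≤ (1-ε)*x} :=
          mul_le_mul_right hscaled _
      _ ≤ P {ω | ∑ i ∈ Finset.range (n+1), X i ω ≤ x} := hnum
  -- convert to reals
  set A := P {ω | ∑ i ∈ Finset.range (n+1), X i ω ≤ x} with hA
  set B := P {ω | ∑ i ∈ Finset.range n, X i ω ≤ x} with hB
  set D := P {ω | X 0 ω ≤ 1/(n:ℝ)} with hD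
  have hAne : A ≠ ⊤ := measure_ne_top _ _
  have hBne' : B ≠ ⊤ := measure_ne_top _ _
  have hDne : D ≠ ⊤ := measure_ne_top _ _
  have hBpos : 0 < B.toReal := ENNReal.toReal_pos hBne hBne'
  have hreal : Real.exp (-(2*κ/x)) * D.toReal * B.toReal ≤ A.toReal := by
    have := ENNReal.toReal_mono hAne hchain
    rwa [ENNReal.toReal_mul, ENNReal.toReal_mul,
      ENNReal.toReal_ofReal (Real.exp_pos _).le] at this
  rw [le_div_iff₀ hBpos]
  exact hreal
end
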